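/- arXiv:1103.1622 — 10 statements merged into one kernel-verified Lean document; each statement's English description precedes it below -/
import Mathlib

section
/- There exists a real constant c with 0 < c ≤ 1 such that for infinitely many positive integers n there is an NFA M with n states over a fixed finite alphabet for which the complement of L(M) is nonempty and every string not in L(M) has length at least 2^{cn}. -/
namespace NfaLB

/-! ### Generic run characterization for NFAs -/

theorem mem_evalFrom_iff {α σ : Type*} (M : NFA α σ) (w : List α) (S : Set σ) (t : σ) :
    t ∈ M.evalFrom S w ↔ ∃ s : ℕ → σ, s 0 ∈ S ∧
      (∀ i, (h : i < w.length) → s (i+1) ∈ M.step (s i) w[i]) ∧ s w.length = t := by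
  induction w generalizing S with
  | nil =>
    simp only [NFA.evalFrom_nil, List.length_nil]
    constructor
    · intro h; exact ⟨fun _ => t, h, fun i h => absurd h (Nat.not_lt_zero i), rfl⟩
    · rintro ⟨s, h0, _, rfl⟩; exact h0
  | cons a w ih =>
    have : M.evalFrom S (a :: w) = M.evalFrom (M.stepSet S a) w := rfl
    rw [this, ih]
    constructor
    · rintro ⟨s', h0, hstep, hend⟩
      rw [NFA.mem_stepSet] at h0
      obtain ⟨s0, hs0, hs0'⟩ := h0
      refine ⟨fun i => match i with | 0 => s0 | (i+1) => s' i, hs0, ?_, hend⟩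
      intro i h
      match i with
      | 0 => exact hs0'
      | (i+1) =>
        have : i < w.length := by simpa [List.length_cons] using h
        exact hstep i this
    · rintro ⟨s, h0, hstep, hend⟩
      refine ⟨fun i => s (i+1), ?_, ?_, hend⟩
      · rw [NFA.mem_stepSet]
        exact ⟨s 0, h0, hstep 0 (by simp)⟩
      · intro i h
        exact hstep (i+1) (by simpa using Nat.succ_lt_succ h)

theorem mem_accepts_iff {α σ : Type*} (M : NFA α σ) (w : List α) :
    w ∈ M.accepts ↔ ∃ s : ℕ → σ, s 0 ∈ M.start ∧
      (∀ i, (h : i < w.length) → s (i+1) ∈ M.step (s i) w[i]) ∧ s w.length ∈ M.accept := by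
  rw [NFA.mem_accepts]
  constructor
  · rintro ⟨t, ht, hev⟩
    obtain ⟨s, h0, hs, he⟩ := (mem_evalFrom_iff M w M.start t).mp hev
    exact ⟨s, h0, hs, he ▸ ht⟩
  · rintro ⟨s, h0, hs, he⟩
    exact ⟨s w.length, he, (mem_evalFrom_iff M w M.start _).mpr ⟨s, h0, hs, rfl⟩⟩

/-! ### Nat bit lemmas -/

theorem allBits_le {j r : ℕ} (h : ∀ t < j, Nat.testBit r t = true) : 2 ^ j - 1 ≤ r := by
  induction j generalizing r with
  | zero => simp
  | succ j ih =>
    have h0 : r % 2 = 1 := by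
      have := h 0 (Nat.succ_pos j); rwa [Nat.testBit_zero, decide_eq_true_iff] at this
    have ih' : 2 ^ j - 1 ≤ r / 2 := by
      refine ih fun t ht => ?_
      have := h (t+1) (Nat.succ_lt_succ ht)
      rwa [Nat.testBit_succ] at this
    have hr : r = 2 * (r / 2) + 1 := by omega
    have hp : 2 ^ (j+1) = 2 * 2 ^ j := by ring
    omega

theorem carry_iff_mod {q j : ℕ} :
    (∀ t < j, Nat.testBit q t = true) ↔ q % 2 ^ j = 2 ^ j - 1 := by
  constructor
  · intro h
    have hle : 2 ^ j - 1 ≤ q % 2 ^ j := by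
      refine allBits_le fun t ht => ?_
      rw [Nat.testBit_mod_two_pow]
      simp [ht, h t ht]
    have hlt : q % 2 ^ j < 2 ^ j := Nat.mod_lt _ (Nat.pow_pos (n := j) (by norm_num))
    omega
  · intro h t ht
    have : Nat.testBit (q % 2 ^ j) t = (decide (t < j) && Nat.testBit q t) :=
      Nat.testBit_mod_two_pow ..
    rw [h, Nat.testBit_two_pow_sub_one] at this
    simp [ht] at this
    exact this

theorem testBit_succ_xor (q j : ℕ) :
    Nat.testBit (q+1) j = ((Nat.testBit q j).xor (decide (∀ t < j, Nat.testBit q t = true))) := by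
  have hpos : 0 < 2 ^ j := Nat.pow_pos (n := j) (by norm_num)
  have hdm := Nat.div_add_mod q (2 ^ j)
  set a := q / 2 ^ j with ha
  set r := q % 2 ^ j with hr
  have hrlt : r < 2 ^ j := Nat.mod_lt _ hpos
  by_cases hc : r = 2 ^ j - 1
  · have hexp : 2 ^ j * (a + 1) = 2 ^ j * a + 2 ^ j := by ring
    have hq1 : q + 1 = 2 ^ j * (a + 1) := by omega
    have hdiv : (q+1) / 2 ^ j = a + 1 := by
      rw [hq1]; exact Nat.mul_div_cancel_left _ hpos
    have hcarry : (∀ t < j, Nat.testBit q t = true) := carry_iff_mod.mpr (by omega)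
    rw [Nat.testBit_eq_decide_div_mod_eq, Nat.testBit_eq_decide_div_mod_eq, hdiv, decide_eq_true hcarry]
    rcases Nat.even_or_odd a with he | ho
    · have h2 : a % 2 = 0 := Nat.even_iff.mp he
      have h3 : (a+1) % 2 = 1 := by omega
      simp [h2, h3, ← ha]
    · have h2 : a % 2 = 1 := Nat.odd_iff.mp ho
      have h3 : (a+1) % 2 = 0 := by omega
      simp [h2, h3, ← ha]
  · have hq1 : q + 1 = 2 ^ j * a + (r + 1) := by omega
    have hr1 : r + 1 < 2 ^ j := by omega
    have hdiv : (q+1) / 2 ^ j = a := by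
      rw [hq1, Nat.mul_add_div hpos, Nat.div_eq_of_lt hr1]
      omega
    have hncarry : ¬ (∀ t < j, Nat.testBit q t = true) := fun h => hc (carry_iff_mod.mp h)
    rw [Nat.testBit_eq_decide_div_mod_eq, Nat.testBit_eq_decide_div_mod_eq, hdiv, decide_eq_false hncarry]
    simp [← ha]

end NfaLB

namespace NfaLB

/-! ### The machine -/

inductive St (k : ℕ) : Type where
  | grid (c : Fin (k+1))
  | found
  | pre (j : Fin (k+1))
  | len (l : Fin (k+1))
  | wait
  | cnt (d : Fin (k+1))
  | ctr (c : Fin (k+1))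
  | scan (j : Fin (k+1)) (f : Bool)
  | cm (r : Fin (k+1)) (b : Bool)
  deriving DecidableEq

open St

def bv (a : Fin 3) : Bool := decide (a = 1)

def nstep (k : ℕ) : St k → Fin 3 → Set (St k)
  | grid c, a => {q' | q' = grid ⟨(c.val+1) % (k+1), Nat.mod_lt _ (Nat.succ_pos k)⟩ ∨
      (¬((a = 2) ↔ c.val = k) ∧ q' = found)}
  | found, _ => {q' | q' = found}
  | pre j, a => {q' | (j.val < k ∧ a ≠ 0 ∧ q' = found) ∨
      (∃ h : j.val + 1 < k, q' = pre ⟨j.val+1, Nat.lt_succ_of_lt h⟩)}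
  | len l, _ => {q' | ∃ h : l.val < k, q' = len ⟨l.val+1, Nat.succ_lt_succ h⟩}
  | wait, a => {q' | q' = wait ∨ (∃ d : Fin (k+1), 1 ≤ d.val ∧ a ≠ 1 ∧ q' = cnt d) ∨
      (a ≠ 2 ∧ q' = cnt ⟨0, Nat.succ_pos k⟩)}
  | cnt d, _ => {q' | ∃ _h : 1 ≤ d.val,
      q' = cnt ⟨d.val - 1, lt_of_le_of_lt (Nat.sub_le _ _) d.isLt⟩}
  | ctr c, a => {q' | q' = ctr ⟨(c.val+1) % (k+1), Nat.mod_lt _ (Nat.succ_pos k)⟩ ∨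
      (c.val = k ∧ q' = scan ⟨0, Nat.succ_pos k⟩ true)}
  | scan j f, a => {q' |
      (∃ h : j.val + 1 < k, q' = scan ⟨j.val+1, Nat.lt_succ_of_lt h⟩ (f && bv a)) ∨
      (j.val < k ∧ q' = cm ⟨k, Nat.lt_succ_self k⟩ ((bv a).xor f))}
  | cm r b, a => {q' | (∃ _h : 1 ≤ r.val,
      q' = cm ⟨r.val - 1, lt_of_le_of_lt (Nat.sub_le _ _) r.isLt⟩ b) ∨
      (r.val = 0 ∧ bv a ≠ b ∧ q' = found)}

def M (k : ℕ) : NFA (Fin 3) (St k) where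
  step := nstep k
  start := {q | q = grid ⟨0, Nat.succ_pos k⟩ ∨ q = pre ⟨0, Nat.succ_pos k⟩ ∨
      q = len ⟨0, Nat.succ_pos k⟩ ∨ q = wait ∨ q = ctr ⟨0, Nat.succ_pos k⟩ ∨
      q = scan ⟨0, Nat.succ_pos k⟩ true}
  accept := {q | q = found ∨ q = cnt ⟨0, Nat.succ_pos k⟩ ∨ ∃ l, q = len l}

/-! ### String predicates -/

def ch (w : List (Fin 3)) (p : ℕ) : Fin 3 := w.getD p 2

lemma ch_eq_getElem (w : List (Fin 3)) (p : ℕ) (h : p < w.length) : ch w p = w[p] :=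
  List.getD_eq_getElem w 2 h

def carry (w : List (Fin 3)) (p j : ℕ) : Bool := decide (∀ t < j, ch w (p+t) = 1)

lemma carry_succ (w : List (Fin 3)) (p j : ℕ) :
    carry w p (j+1) = (carry w p j && bv (ch w (p+j))) := by
  simp only [carry, bv]
  rw [← Bool.decide_and]
  exact decide_eq_decide.mpr Nat.forall_lt_succ_right

def Good1 (k : ℕ) (w : List (Fin 3)) : Prop := ∀ p < w.length, (ch w p = 2 ↔ p % (k+1) = k)
def Good2 (k : ℕ) (w : List (Fin 3)) : Prop := ∀ p, p < w.length → p < k → ch w p = 0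
def Good3 (k : ℕ) (w : List (Fin 3)) : Prop :=
  k < w.length ∧ ∀ d ≤ k, ch w (w.length - 1 - d) = (if d = 0 then 2 else 1)
def Good4 (k : ℕ) (w : List (Fin 3)) : Prop := ∀ p j, p % (k+1) = 0 → j < k →
  p + k + 1 + j < w.length → bv (ch w (p+k+1+j)) = ((bv (ch w (p+j))).xor (carry w p j))

/-! ### mod helpers -/

lemma mod_succ_step {k i : ℕ} (hk : 0 < k) : (i % (k+1) + 1) % (k+1) = (i+1) % (k+1) := by
  conv_rhs => rw [Nat.add_mod]
  rw [Nat.mod_eq_of_lt (show 1 < k+1 by omega)]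

lemma mod_k_succ {k i : ℕ} (h : i % (k+1) = k) : (i+1) % (k+1) = 0 := by
  have hd := Nat.div_add_mod i (k+1)
  have hexp : (k+1) * (i/(k+1)+1) = (k+1)*(i/(k+1)) + (k+1) := by ring
  have h2 : i + 1 = (k+1) * (i/(k+1)+1) := by omega
  rw [h2, Nat.mul_mod_right]

lemma pred_mod {k p : ℕ} (h : p % (k+1) = 0) (hp : 0 < p) : (p-1) % (k+1) = k := by
  have hdvd : (k+1) ∣ p := Nat.dvd_of_mod_eq_zero h
  have hle : k+1 ≤ p := Nat.le_of_dvd hp hdvd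
  have hq : 0 < p / (k+1) := Nat.div_pos hle (Nat.succ_pos k)
  have hd := Nat.div_add_mod p (k+1)
  have hexp : (k+1) * (p/(k+1) - 1 + 1) = (k+1)*(p/(k+1) - 1) + (k+1) := by ring
  have hq1 : p/(k+1) - 1 + 1 = p/(k+1) := by omega
  have h2 : p - 1 = (k+1) * (p/(k+1) - 1) + k := by rw [hq1] at hexp; omega
  rw [h2, Nat.mul_add_mod]
  exact Nat.mod_eq_of_lt (Nat.lt_succ_self k)

end NfaLB

namespace NfaLB
open St

def Inv (k : ℕ) (w : List (Fin 3)) (i : ℕ) : St k → Prop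
  | grid c => c.val = i % (k+1)
  | found => ¬Good1 k w ∨ ¬Good2 k w ∨ ¬Good4 k w
  | pre j => j.val = i
  | len l => l.val = i
  | wait => True
  | cnt d => ∃ q0 dd, q0 < i ∧ dd ≤ k ∧ q0 + 1 + dd = i + d.val ∧
      ch w q0 ≠ (if dd = 0 then 2 else 1)
  | ctr c => c.val = i % (k+1)
  | scan j f => j.val ≤ i ∧ (i - j.val) % (k+1) = 0 ∧ f = carry w (i - j.val) j.val
  | cm r b => ∃ p j, p % (k+1) = 0 ∧ j < k ∧ p + k + 1 + j = i + r.val ∧ p + j < i ∧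
      b = ((bv (ch w (p+j))).xor (carry w p j))

lemma step_inv {k : ℕ} (hk : 0 < k) (w : List (Fin 3)) (i : ℕ) (hi : i < w.length)
    (q q' : St k) (hq : Inv k w i q) (hstep : q' ∈ nstep k q w[i]) : Inv k w (i+1) q' := by
  have hchi : ch w i = w[i] := ch_eq_getElem w i hi
  cases q with
  | grid c =>
    simp only [nstep, Set.mem_setOf_eq] at hstep
    rcases hstep with rfl | ⟨hflaw, rfl⟩
    · simp only [Inv] at hq ⊢
      rw [hq]; exact mod_succ_step hk
    · simp only [Inv] at hq ⊢
      refine Or.inl fun hg => hflaw ?_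
      have := hg i hi
      rw [hchi] at this
      rw [hq]; exact this
  | found =>
    simp only [nstep, Set.mem_setOf_eq] at hstep
    subst hstep; exact hq
  | pre j =>
    simp only [nstep, Set.mem_setOf_eq] at hstep
    rcases hstep with ⟨hjk, ha, rfl⟩ | ⟨h, rfl⟩
    · simp only [Inv] at hq ⊢
      refine Or.inr (Or.inl fun hg => ha ?_)
      have := hg i hi (by omega)
      rwa [hchi] at this
    · simp only [Inv] at hq ⊢
      show j.val + 1 = i + 1
      omega
  | len l =>
    simp only [nstep, Set.mem_setOf_eq] at hstep
    obtain ⟨h, rfl⟩ := hstep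
    simp only [Inv] at hq ⊢
    show l.val + 1 = i + 1
    omega
  | wait =>
    simp only [nstep, Set.mem_setOf_eq] at hstep
    rcases hstep with rfl | ⟨d, hd, ha, rfl⟩ | ⟨ha, rfl⟩
    · exact trivial
    · refine ⟨i, d.val, by omega, by omega, by omega, ?_⟩
      rw [if_neg (by omega), hchi]; exact ha
    · refine ⟨i, 0, by omega, by omega, ?_, ?_⟩
      · show i + 1 + 0 = i + 1 + 0
        rfl
      · rw [if_pos rfl, hchi]; exact ha
  | cnt d =>
    simp only [nstep, Set.mem_setOf_eq] at hstep
    obtain ⟨h1, rfl⟩ := hstep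
    obtain ⟨q0, dd, hq0, hdd, heq, hne⟩ := hq
    refine ⟨q0, dd, by omega, hdd, ?_, hne⟩
    show q0 + 1 + dd = i + 1 + (d.val - 1)
    omega
  | ctr c =>
    simp only [nstep, Set.mem_setOf_eq] at hstep
    rcases hstep with rfl | ⟨hck, rfl⟩
    · simp only [Inv] at hq ⊢
      rw [hq]; exact mod_succ_step hk
    · simp only [Inv] at hq ⊢
      have hik : i % (k+1) = k := by omega
      refine ⟨Nat.zero_le _, ?_, ?_⟩
      · show (i + 1 - 0) % (k+1) = 0
        simpa using mod_k_succ hik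
      · show true = carry w (i + 1 - 0) 0
        simp [carry]
  | scan j f =>
    simp only [nstep, Set.mem_setOf_eq] at hstep
    obtain ⟨hji, hmod, hf⟩ := hq
    rcases hstep with ⟨h, rfl⟩ | ⟨hjk, rfl⟩
    · refine ⟨by show j.val + 1 ≤ i + 1; omega, ?_, ?_⟩
      · show (i + 1 - (j.val + 1)) % (k+1) = 0
        rw [show i + 1 - (j.val + 1) = i - j.val by omega]; exact hmod
      · show (f && bv w[i]) = carry w (i + 1 - (j.val + 1)) (j.val + 1)
        rw [show i + 1 - (j.val + 1) = i - j.val by omega, carry_succ,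
          show i - j.val + j.val = i by omega, hchi, hf]
    · refine ⟨i - j.val, j.val, hmod, hjk, ?_, by omega, ?_⟩
      · show i - j.val + k + 1 + j.val = i + 1 + k
        omega
      · rw [show i - j.val + j.val = i by omega, hchi, hf]
  | cm r b =>
    simp only [nstep, Set.mem_setOf_eq] at hstep
    obtain ⟨p, j, hp, hj, heq, hlt, hb⟩ := hq
    rcases hstep with ⟨h1, rfl⟩ | ⟨hr0, hne, rfl⟩
    · refine ⟨p, j, hp, hj, ?_, by omega, hb⟩
      show p + k + 1 + j = i + 1 + (r.val - 1)
      omega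
    · refine Or.inr (Or.inr fun hg => hne ?_)
      have htgt : p + k + 1 + j = i := by omega
      have := hg p j hp hj (by omega)
      rw [htgt, hchi] at this
      rw [this, hb]

lemma run_inv {k : ℕ} (hk : 0 < k) (w : List (Fin 3)) (s : ℕ → St k)
    (hs0 : s 0 ∈ (M k).start)
    (hstep : ∀ i, (h : i < w.length) → s (i+1) ∈ (M k).step (s i) w[i]) :
    ∀ i, i ≤ w.length → Inv k w i (s i) := by
  intro i
  induction i with
  | zero =>
    intro _
    simp only [M, Set.mem_setOf_eq] at hs0
    rcases hs0 with h | h | h | h | h | h <;> rw [h] <;> simp [Inv, carry]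
  | succ i ih =>
    intro h
    exact step_inv hk w i (by omega) _ _ (ih (by omega)) (hstep i (by omega))

theorem soundness {k : ℕ} (hk : 0 < k) (w : List (Fin 3)) (hw : w ∈ (M k).accepts) :
    ¬(Good1 k w ∧ Good2 k w ∧ Good3 k w ∧ Good4 k w) := by
  rintro ⟨h1, h2, h3, h4⟩
  obtain ⟨s, hs0, hstep, hacc⟩ := (mem_accepts_iff _ w).mp hw
  have hinv := run_inv hk w s hs0 hstep w.length le_rfl
  simp only [M, Set.mem_setOf_eq] at hacc
  rcases hacc with hF | hC | ⟨l, hL⟩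
  · rw [hF] at hinv
    rcases hinv with h | h | h
    exacts [h h1, h h2, h h4]
  · rw [hC] at hinv
    obtain ⟨q0, dd, hq0, hdd, heq, hne⟩ := hinv
    have hdv : (⟨0, Nat.succ_pos k⟩ : Fin (k+1)).val = 0 := rfl
    rw [hdv] at heq
    have := h3.2 dd hdd
    rw [show w.length - 1 - dd = q0 by omega] at this
    exact hne this
  · rw [hL] at hinv
    have hlk : l.val < k + 1 := l.isLt
    have := h3.1
    simp only [Inv] at hinv
    omega

end NfaLB

namespace NfaLB
open St

lemma acc1 {k : ℕ} (hk : 0 < k) (w : List (Fin 3)) (h : ¬Good1 k w) : w ∈ (M k).accepts := by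
  simp only [Good1] at h
  push_neg at h
  obtain ⟨p, hp, hiff⟩ := h
  refine (mem_accepts_iff _ w).mpr
    ⟨fun i => if i ≤ p then grid ⟨i % (k+1), Nat.mod_lt _ (Nat.succ_pos k)⟩ else found,
      ?_, ?_, ?_⟩
  · beta_reduce
    rw [if_pos (Nat.zero_le p)]
    exact Or.inl (congrArg grid (Fin.ext (Nat.zero_mod _)))
  · intro i hi
    beta_reduce
    by_cases h1 : i + 1 ≤ p
    · rw [if_pos (show i ≤ p by omega), if_pos h1]
      exact Or.inl (congrArg grid (Fin.ext (mod_succ_step hk).symm))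
    · by_cases h2 : i ≤ p
      · have hip : i = p := by omega
        rw [if_pos h2, if_neg h1]
        refine Or.inr ⟨?_, rfl⟩
        subst hip
        rw [← ch_eq_getElem w i hi]
        show ¬(ch w i = 2 ↔ i % (k+1) = k)
        rcases hiff with ⟨h3, h4⟩ | ⟨h3, h4⟩
        · exact fun hif => h4 (hif.mp h3)
        · exact fun hif => h3 (hif.mpr h4)
      · rw [if_neg h2, if_neg h1]
        exact rfl
  · beta_reduce
    rw [if_neg (show ¬ w.length ≤ p by omega)]
    exact Or.inl rfl

lemma acc2 {k : ℕ} (w : List (Fin 3)) (h : ¬Good2 k w) : w ∈ (M k).accepts := by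
  simp only [Good2] at h
  push_neg at h
  obtain ⟨p, hp, hpk, hne⟩ := h
  refine (mem_accepts_iff _ w).mpr
    ⟨fun i => if h : i ≤ p then pre ⟨i, by omega⟩ else found, ?_, ?_, ?_⟩
  · beta_reduce
    rw [dif_pos (Nat.zero_le p)]
    exact Or.inr (Or.inl rfl)
  · intro i hi
    beta_reduce
    by_cases h1 : i + 1 ≤ p
    · rw [dif_pos (show i ≤ p by omega), dif_pos h1]
      exact Or.inr ⟨show i + 1 < k by omega, rfl⟩
    · by_cases h2 : i ≤ p
      · have hip : i = p := by omega
        rw [dif_pos h2, dif_neg h1]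
        refine Or.inl ⟨show i < k by omega, ?_, rfl⟩
        subst hip
        rw [← ch_eq_getElem w i hi]
        exact hne
      · rw [dif_neg h2, dif_neg h1]
        exact rfl
  · beta_reduce
    rw [dif_neg (show ¬ w.length ≤ p by omega)]
    exact Or.inl rfl

lemma cnt_congr {k : ℕ} {a c : Fin (k+1)} (h1 : (a : ℕ) = c) : (cnt a : St k) = cnt c := by
  rw [Fin.ext h1]

lemma scan_congr {k : ℕ} {a c : Fin (k+1)} {b d : Bool} (h1 : (a : ℕ) = c) (h2 : b = d) :
    (scan a b : St k) = scan c d := by rw [Fin.ext h1, h2]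

lemma cm_congr {k : ℕ} {a c : Fin (k+1)} {b d : Bool} (h1 : (a : ℕ) = c) (h2 : b = d) :
    (cm a b : St k) = cm c d := by rw [Fin.ext h1, h2]

lemma acc3 {k : ℕ} (w : List (Fin 3)) (h : ¬Good3 k w) : w ∈ (M k).accepts := by
  rcases le_or_gt w.length k with hlen | hlen
  · refine (mem_accepts_iff _ w).mpr
      ⟨fun i => if h : i ≤ k then len ⟨i, Nat.lt_succ_of_le h⟩ else found, ?_, ?_, ?_⟩
    · beta_reduce
      rw [dif_pos (Nat.zero_le k)]
      exact Or.inr (Or.inr (Or.inl rfl))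
    · intro i hi
      beta_reduce
      rw [dif_pos (show i ≤ k by omega), dif_pos (show i + 1 ≤ k by omega)]
      exact ⟨show i < k by omega, rfl⟩
    · beta_reduce
      rw [dif_pos hlen]
      exact Or.inr (Or.inr ⟨⟨w.length, Nat.lt_succ_of_le hlen⟩, rfl⟩)
  · simp only [Good3] at h
    push_neg at h
    obtain ⟨d, hd, hne⟩ := h hlen
    refine (mem_accepts_iff _ w).mpr
      ⟨fun i => if _h1 : i ≤ w.length - 1 - d then wait
        else if _h2 : i ≤ w.length then cnt ⟨w.length - i, by omega⟩ else found, ?_, ?_, ?_⟩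
    · beta_reduce
      rw [dif_pos (Nat.zero_le _)]
      exact Or.inr (Or.inr (Or.inr (Or.inl rfl)))
    · intro i hi
      beta_reduce
      by_cases h1 : i + 1 ≤ w.length - 1 - d
      · rw [dif_pos (show i ≤ w.length - 1 - d by omega), dif_pos h1]
        exact Or.inl rfl
      · by_cases h2 : i ≤ w.length - 1 - d
        · have hiq : i = w.length - 1 - d := by omega
          rw [dif_pos h2, dif_neg h1, dif_pos (show i + 1 ≤ w.length by omega)]
          have hchq : ch w i = w[i] := ch_eq_getElem w i hi
          rcases Nat.eq_zero_or_pos d with hd0 | hd1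
          · subst hd0
            refine Or.inr (Or.inr ⟨?_, cnt_congr (show w.length - (i+1) = 0 by omega)⟩)
            rw [← hchq, hiq]
            rw [if_pos rfl] at hne
            exact hne
          · refine Or.inr (Or.inl ⟨⟨w.length - (i+1), by omega⟩,
              show 1 ≤ w.length - (i+1) by omega, ?_, rfl⟩)
            rw [← hchq, hiq]
            rw [if_neg (by omega)] at hne
            exact hne
        · rw [dif_neg h2, dif_neg (show ¬ i + 1 ≤ w.length - 1 - d by omega),
            dif_pos (show i ≤ w.length by omega), dif_pos (show i + 1 ≤ w.length by omega)]
          exact ⟨show 1 ≤ w.length - i by omega,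
            cnt_congr (show w.length - (i+1) = w.length - i - 1 by omega)⟩
    · beta_reduce
      rw [dif_neg (show ¬ w.length ≤ w.length - 1 - d by omega), dif_pos le_rfl]
      exact Or.inr (Or.inl (cnt_congr (show w.length - w.length = 0 by omega)))

lemma acc4 {k : ℕ} (hk : 0 < k) (w : List (Fin 3)) (h : ¬Good4 k w) : w ∈ (M k).accepts := by
  simp only [Good4] at h
  push_neg at h
  obtain ⟨p, j, hp, hj, hT, hne⟩ := h
  refine (mem_accepts_iff _ w).mpr
    ⟨fun i => if _hc1 : i < p then ctr ⟨i % (k+1), Nat.mod_lt _ (Nat.succ_pos k)⟩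
      else if _hc2 : i ≤ p + j then scan ⟨i - p, by omega⟩ (carry w p (i - p))
      else if _hc3 : i ≤ p + k + 1 + j then
        cm ⟨p + k + 1 + j - i, by omega⟩ ((bv (ch w (p+j))).xor (carry w p j))
      else found, ?_, ?_, ?_⟩
  · beta_reduce
    rcases Nat.eq_zero_or_pos p with hp0 | hp1
    · rw [dif_neg (show ¬ (0:ℕ) < p by omega), dif_pos (show (0:ℕ) ≤ p + j by omega)]
      subst hp0
      exact Or.inr (Or.inr (Or.inr (Or.inr (Or.inr
        (scan_congr (show (0:ℕ) - 0 = 0 by omega) (by show carry w 0 (0 - 0) = true; simp [carry]))))))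
    · rw [dif_pos hp1]
      exact Or.inr (Or.inr (Or.inr (Or.inr (Or.inl
        (congrArg ctr (Fin.ext (Nat.zero_mod _)))))))
  · intro i hi
    beta_reduce
    by_cases hA : i + 1 < p
    · rw [dif_pos hA, dif_pos (show i < p by omega)]
      exact Or.inl (congrArg ctr (Fin.ext (mod_succ_step hk).symm))
    · by_cases hB : i < p
      · have hip : i + 1 = p := by omega
        rw [dif_neg (show ¬ i + 1 < p by omega), dif_pos (show i + 1 ≤ p + j by omega), dif_pos hB]
        refine Or.inr ⟨show i % (k+1) = k from ?_, ?_⟩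
        · have : (i + 1 - 1) % (k+1) = k := pred_mod (by rw [hip]; exact hp) (by omega)
          simpa using this
        · exact scan_congr (show i + 1 - p = 0 by omega)
            (by rw [show i + 1 - p = 0 by omega]; show carry w p 0 = true; simp [carry])
      · by_cases hC : i < p + j
        · rw [dif_neg (show ¬ i + 1 < p by omega), dif_pos (show i + 1 ≤ p + j by omega),
            dif_neg hB, dif_pos (show i ≤ p + j by omega)]
          refine Or.inl ⟨show i - p + 1 < k by omega, ?_⟩
          refine scan_congr (show i + 1 - p = i - p + 1 by omega) ?_
          rw [show i + 1 - p = (i - p) + 1 by omega, carry_succ,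
            show p + (i - p) = i by omega, ch_eq_getElem w i hi]
        · by_cases hD : i ≤ p + j
          · have hipj : i = p + j := by omega
            rw [dif_neg (show ¬ i + 1 < p by omega), dif_neg (show ¬ i + 1 ≤ p + j by omega),
              dif_pos (show i + 1 ≤ p + k + 1 + j by omega), dif_neg hB, dif_pos hD]
            refine Or.inr ⟨show i - p < k by omega, ?_⟩
            refine cm_congr (show p + k + 1 + j - (i+1) = k by omega) ?_
            rw [show p + j = i by omega, ch_eq_getElem w i hi, show i - p = j by omega]
          · by_cases hE : i + 1 ≤ p + k + 1 + j
            · rw [dif_neg (show ¬ i + 1 < p by omega), dif_neg (show ¬ i + 1 ≤ p + j by omega),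
                dif_pos hE, dif_neg hB, dif_neg hD, dif_pos (show i ≤ p + k + 1 + j by omega)]
              refine Or.inl ⟨show 1 ≤ p + k + 1 + j - i by omega, ?_⟩
              exact cm_congr (show p + k + 1 + j - (i+1) = p + k + 1 + j - i - 1 by omega) rfl
            · by_cases hF : i ≤ p + k + 1 + j
              · have hiT : i = p + k + 1 + j := by omega
                rw [dif_neg (show ¬ i + 1 < p by omega), dif_neg (show ¬ i + 1 ≤ p + j by omega),
                  dif_neg hE, dif_neg hB, dif_neg hD, dif_pos hF]
                refine Or.inr ⟨show p + k + 1 + j - i = 0 by omega, ?_, rfl⟩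
                rw [← hiT] at hne
                rw [ch_eq_getElem w i hi] at hne
                exact hne
              · rw [dif_neg (show ¬ i + 1 < p by omega), dif_neg (show ¬ i + 1 ≤ p + j by omega),
                  dif_neg (show ¬ i + 1 ≤ p + k + 1 + j by omega), dif_neg hB, dif_neg hD,
                  dif_neg hF]
                exact rfl
  · beta_reduce
    rw [dif_neg (show ¬ w.length < p by omega), dif_neg (show ¬ w.length ≤ p + j by omega),
      dif_neg (show ¬ w.length ≤ p + k + 1 + j by omega)]
    exact Or.inl rfl

/-! ### The counter string -/

def symAt (k p : ℕ) : Fin 3 :=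
  if p % (k+1) = k then 2 else (if Nat.testBit (p / (k+1)) (p % (k+1)) then 1 else 0)

def Wstr (k : ℕ) : List (Fin 3) := List.ofFn (fun p : Fin ((k+1)*2^k) => symAt k p.val)

lemma Wlen (k : ℕ) : (Wstr k).length = (k+1)*2^k := by simp [Wstr]

lemma Wch (k p : ℕ) (h : p < (k+1)*2^k) : ch (Wstr k) p = symAt k p := by
  rw [ch, List.getD_eq_getElem _ _ (by simpa [Wlen] using h)]
  simp [Wstr]

lemma symAt_block (k q r : ℕ) (hr : r < k+1) :
    symAt k ((k+1)*q + r) = (if r = k then 2 else if Nat.testBit q r then 1 else 0) := by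
  unfold symAt
  rw [Nat.mul_add_mod, Nat.mod_eq_of_lt hr, Nat.mul_add_div (Nat.succ_pos k),
    Nat.div_eq_of_lt hr, Nat.add_zero]

lemma bv_ite (b : Bool) : bv (if b then 1 else 0) = b := by cases b <;> rfl

lemma WG1 (k : ℕ) : Good1 k (Wstr k) := by
  intro p hp
  rw [Wlen] at hp
  rw [Wch k p hp]
  unfold symAt
  by_cases h : p % (k+1) = k
  · rw [if_pos h]; exact iff_of_true rfl h
  · rw [if_neg h]
    refine iff_of_false ?_ h
    split <;> decide

lemma WG2 (k : ℕ) : Good2 k (Wstr k) := by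
  intro p hp hpk
  rw [Wlen] at hp
  rw [Wch k p hp]
  unfold symAt
  have e1 : p % (k+1) = p := Nat.mod_eq_of_lt (by omega)
  have e2 : p / (k+1) = 0 := Nat.div_eq_of_lt (by omega)
  rw [e1, e2, if_neg (show ¬ p = k by omega), Nat.zero_testBit, if_neg (by simp)]

lemma WG3 (k : ℕ) : Good3 k (Wstr k) := by
  have hE : 1 ≤ 2^k := Nat.one_le_two_pow
  have hmul : (k+1) * 1 ≤ (k+1)*2^k := Nat.mul_le_mul_left _ hE
  constructor
  · rw [Wlen]; omega
  · intro d hd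
    rw [Wlen]
    have hsub : (k+1) * (2^k - 1) + (k+1) = (k+1) * 2^k := by
      have e : 2^k - 1 + 1 = 2^k := by omega
      calc (k+1) * (2^k - 1) + (k+1) = (k+1) * ((2^k - 1) + 1) := by ring
        _ = (k+1) * 2^k := by rw [e]
    have hpos : (k+1)*2^k - 1 - d = (k+1)*(2^k - 1) + (k - d) := by omega
    rw [hpos, Wch k _ (by omega), symAt_block k _ _ (by omega)]
    by_cases hd0 : d = 0
    · subst hd0
      rw [if_pos (show k - 0 = k by omega), if_pos rfl]
    · rw [if_neg (show ¬ (k - d = k) by omega), if_neg hd0,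
        Nat.testBit_two_pow_sub_one, if_pos (decide_eq_true (show k - d < k by omega))]

lemma WG4 (k : ℕ) : Good4 k (Wstr k) := by
  intro p j hp hj hlt
  rw [Wlen] at hlt
  have hdm := Nat.div_add_mod p (k+1)
  obtain ⟨q, rfl⟩ : ∃ q, p = (k+1)*q := ⟨p/(k+1), by omega⟩
  have e1 : (k+1)*q + k + 1 + j = (k+1)*(q+1) + j := by ring
  have hb : (k+1)*(q+1) + j < (k+1)*2^k := by rw [← e1]; exact hlt
  have hexp : (k+1)*(q+1) = (k+1)*q + (k+1) := by ring
  have hbj : ∀ t, t ≤ j → (k+1)*q + t < (k+1)*2^k := by intro t ht; omega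
  rw [e1, Wch k _ hb, symAt_block k (q+1) j (by omega), if_neg (show ¬ j = k by omega),
    Wch k _ (hbj j le_rfl), symAt_block k q j (by omega), if_neg (show ¬ j = k by omega),
    bv_ite, bv_ite]
  have hcar : carry (Wstr k) ((k+1)*q) j = decide (∀ t < j, Nat.testBit q t = true) := by
    unfold carry
    refine decide_eq_decide.mpr ?_
    apply forall_congr'; intro t
    apply imp_congr_right; intro ht
    rw [Wch k _ (hbj t (by omega)), symAt_block k q t (by omega),
      if_neg (show ¬ t = k by omega)]
    cases htb : Nat.testBit q t <;> simp [htb]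
  rw [hcar]
  exact testBit_succ_xor q j

/-! ### Core counting lemma -/

lemma core {k : ℕ} (w : List (Fin 3))
    (h1 : Good1 k w) (h2 : Good2 k w) (h3 : Good3 k w) (h4 : Good4 k w) :
    (k+1) * 2^k ≤ w.length := by
  obtain ⟨hkl, hsuf⟩ := h3
  have hlast : ch w (w.length - 1) = 2 := by
    have := hsuf 0 (Nat.zero_le k); simpa using this
  have hmod : (w.length - 1) % (k+1) = k := (h1 _ (by omega)).mp hlast
  have hdm := Nat.div_add_mod (w.length - 1) (k+1)
  set m := (w.length - 1) / (k+1) + 1 with hm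
  have hexp : (k+1) * ((w.length - 1)/(k+1) + 1) = (k+1)*((w.length - 1)/(k+1)) + (k+1) := by
    ring
  have hlen : w.length = (k+1) * m := by rw [hm, hexp]; omega
  have hm1 : 1 ≤ m := by rw [hm]; exact Nat.succ_le_succ (Nat.zero_le _)
  have claim : ∀ i, i < m → ∀ j, j < k →
      (ch w ((k+1)*i + j) = 1 ↔ Nat.testBit i j = true) := by
    intro i
    induction i with
    | zero =>
      intro _ j hj
      have hmm : (k+1)*1 ≤ (k+1)*m := Nat.mul_le_mul_left _ hm1
      have hpos : (k+1)*0 + j < w.length := by rw [hlen]; simp only [Nat.mul_zero]; omega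
      have hz := h2 ((k+1)*0 + j) hpos (by simp only [Nat.mul_zero, Nat.zero_add]; omega)
      rw [hz, Nat.zero_testBit]
      constructor
      · intro hcon; exact absurd hcon (by decide)
      · intro hcon; exact absurd hcon (by decide)
    | succ i ih =>
      intro him j hj
      have hfit : (k+1)*i + k + 1 + j < w.length := by
        rw [hlen]
        have hstep2 : (k+1)*(i+2) ≤ (k+1)*m := Nat.mul_le_mul_left _ (by omega)
        have he1 : (k+1)*(i+2) = (k+1)*i + 2*k + 2 := by ring
        omega
      have h4' := h4 ((k+1)*i) j (Nat.mul_mod_right _ _) hj hfit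
      have e1 : (k+1)*i + k + 1 + j = (k+1)*(i+1) + j := by ring
      rw [e1] at h4'
      have hbit : bv (ch w ((k+1)*i + j)) = Nat.testBit i j := by
        refine Bool.eq_iff_iff.mpr ?_
        rw [show (bv (ch w ((k+1)*i + j)) = true) = (ch w ((k+1)*i + j) = 1) from by
          simp [bv]]
        exact ih (by omega) j hj
      have hcar : carry w ((k+1)*i) j = decide (∀ t < j, Nat.testBit i t = true) := by
        unfold carry
        refine decide_eq_decide.mpr ?_
        apply forall_congr'; intro t
        apply imp_congr_right; intro ht
        exact ih (by omega) t (by omega)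
      rw [hbit, hcar, ← testBit_succ_xor] at h4'
      rw [← h4']
      simp [bv]
  have hones : ∀ j, j < k → Nat.testBit (m-1) j = true := by
    intro j hj
    have := hsuf (k - j) (Nat.sub_le _ _)
    have he2 : (k+1)*m = (k+1)*(m-1) + (k+1) := by
      have e : m - 1 + 1 = m := by omega
      calc (k+1)*m = (k+1)*((m-1)+1) := by rw [e]
        _ = (k+1)*(m-1) + (k+1) := by ring
    have epos : w.length - 1 - (k - j) = (k+1)*(m-1) + j := by omega
    rw [epos, if_neg (show ¬ (k - j = 0) by omega)] at this
    exact (claim (m-1) (by omega) j hj).mp this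
  have hge : 2^k - 1 ≤ m - 1 := allBits_le hones
  have hfin : 2^k ≤ m := by
    have hE : 1 ≤ 2^k := Nat.one_le_two_pow
    omega
  rw [hlen]
  exact Nat.mul_le_mul_left _ hfin

/-! ### Transport to `Fin (9k+11)` -/

def encode (k : ℕ) : St k → Fin (9*k+11)
  | grid c => ⟨c.val, by have := c.isLt; omega⟩
  | found => ⟨k+1, by omega⟩
  | pre j => ⟨k+2+j.val, by have := j.isLt; omega⟩
  | len l => ⟨2*k+3+l.val, by have := l.isLt; omega⟩
  | wait => ⟨3*k+4, by omega⟩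
  | cnt d => ⟨3*k+5+d.val, by have := d.isLt; omega⟩
  | ctr c => ⟨4*k+6+c.val, by have := c.isLt; omega⟩
  | scan j false => ⟨5*k+7+j.val, by have := j.isLt; omega⟩
  | scan j true => ⟨6*k+8+j.val, by have := j.isLt; omega⟩
  | cm r false => ⟨7*k+9+r.val, by have := r.isLt; omega⟩
  | cm r true => ⟨8*k+10+r.val, by have := r.isLt; omega⟩

def decode (k : ℕ) (m : Fin (9*k+11)) : St k :=
  if h1 : m.val ≤ k then grid ⟨m.val, by omega⟩
  else if h2 : m.val = k+1 then found
  else if h3 : m.val ≤ 2*k+2 then pre ⟨m.val - (k+2), by omega⟩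
  else if h4 : m.val ≤ 3*k+3 then len ⟨m.val - (2*k+3), by omega⟩
  else if h5 : m.val = 3*k+4 then wait
  else if h6 : m.val ≤ 4*k+5 then cnt ⟨m.val - (3*k+5), by omega⟩
  else if h7 : m.val ≤ 5*k+6 then ctr ⟨m.val - (4*k+6), by omega⟩
  else if h8 : m.val ≤ 6*k+7 then scan ⟨m.val - (5*k+7), by omega⟩ false
  else if h9 : m.val ≤ 7*k+8 then scan ⟨m.val - (6*k+8), by omega⟩ true
  else if h10 : m.val ≤ 8*k+9 then cm ⟨m.val - (7*k+9), by omega⟩ false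
  else cm ⟨m.val - (8*k+10), by have := m.isLt; omega⟩ true

lemma decode_encode (k : ℕ) (q : St k) : decode k (encode k q) = q := by
  cases q with
  | grid c =>
    have hc := c.isLt
    rw [decode, encode]
    rw [dif_pos (show c.val ≤ k by omega)]
  | found =>
    rw [decode, encode]
    rw [dif_neg (show ¬ k+1 ≤ k by omega)]
    simp
  | pre j =>
    have hj := j.isLt
    rw [decode, encode]
    rw [dif_neg (show ¬ k+2+j.val ≤ k by omega), dif_neg (show ¬ k+2+j.val = k+1 by omega),
      dif_pos (show k+2+j.val ≤ 2*k+2 by omega)]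
    exact congrArg pre (Fin.ext (show k+2+j.val - (k+2) = j.val by omega))
  | len l =>
    have hl := l.isLt
    rw [decode, encode]
    rw [dif_neg (show ¬ 2*k+3+l.val ≤ k by omega), dif_neg (show ¬ 2*k+3+l.val = k+1 by omega),
      dif_neg (show ¬ 2*k+3+l.val ≤ 2*k+2 by omega), dif_pos (show 2*k+3+l.val ≤ 3*k+3 by omega)]
    exact congrArg len (Fin.ext (show 2*k+3+l.val - (2*k+3) = l.val by omega))
  | wait =>
    rw [decode, encode]
    rw [dif_neg (show ¬ 3*k+4 ≤ k by omega), dif_neg (show ¬ 3*k+4 = k+1 by omega),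
      dif_neg (show ¬ 3*k+4 ≤ 2*k+2 by omega), dif_neg (show ¬ 3*k+4 ≤ 3*k+3 by omega)]
    simp
  | cnt d =>
    have hd := d.isLt
    rw [decode, encode]
    rw [dif_neg (show ¬ 3*k+5+d.val ≤ k by omega), dif_neg (show ¬ 3*k+5+d.val = k+1 by omega),
      dif_neg (show ¬ 3*k+5+d.val ≤ 2*k+2 by omega),
      dif_neg (show ¬ 3*k+5+d.val ≤ 3*k+3 by omega),
      dif_neg (show ¬ 3*k+5+d.val = 3*k+4 by omega),
      dif_pos (show 3*k+5+d.val ≤ 4*k+5 by omega)]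
    exact congrArg cnt (Fin.ext (show 3*k+5+d.val - (3*k+5) = d.val by omega))
  | ctr c =>
    have hc := c.isLt
    rw [decode, encode]
    rw [dif_neg (show ¬ 4*k+6+c.val ≤ k by omega), dif_neg (show ¬ 4*k+6+c.val = k+1 by omega),
      dif_neg (show ¬ 4*k+6+c.val ≤ 2*k+2 by omega),
      dif_neg (show ¬ 4*k+6+c.val ≤ 3*k+3 by omega),
      dif_neg (show ¬ 4*k+6+c.val = 3*k+4 by omega),
      dif_neg (show ¬ 4*k+6+c.val ≤ 4*k+5 by omega),
      dif_pos (show 4*k+6+c.val ≤ 5*k+6 by omega)]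
    exact congrArg ctr (Fin.ext (show 4*k+6+c.val - (4*k+6) = c.val by omega))
  | scan j f =>
    have hj := j.isLt
    cases f
    · rw [decode, encode]
      rw [dif_neg (show ¬ 5*k+7+j.val ≤ k by omega), dif_neg (show ¬ 5*k+7+j.val = k+1 by omega),
        dif_neg (show ¬ 5*k+7+j.val ≤ 2*k+2 by omega),
        dif_neg (show ¬ 5*k+7+j.val ≤ 3*k+3 by omega),
        dif_neg (show ¬ 5*k+7+j.val = 3*k+4 by omega),
        dif_neg (show ¬ 5*k+7+j.val ≤ 4*k+5 by omega),
        dif_neg (show ¬ 5*k+7+j.val ≤ 5*k+6 by omega),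
        dif_pos (show 5*k+7+j.val ≤ 6*k+7 by omega)]
      exact congrArg (scan · false) (Fin.ext (show 5*k+7+j.val - (5*k+7) = j.val by omega))
    · rw [decode, encode]
      rw [dif_neg (show ¬ 6*k+8+j.val ≤ k by omega), dif_neg (show ¬ 6*k+8+j.val = k+1 by omega),
        dif_neg (show ¬ 6*k+8+j.val ≤ 2*k+2 by omega),
        dif_neg (show ¬ 6*k+8+j.val ≤ 3*k+3 by omega),
        dif_neg (show ¬ 6*k+8+j.val = 3*k+4 by omega),
        dif_neg (show ¬ 6*k+8+j.val ≤ 4*k+5 by omega),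
        dif_neg (show ¬ 6*k+8+j.val ≤ 5*k+6 by omega),
        dif_neg (show ¬ 6*k+8+j.val ≤ 6*k+7 by omega),
        dif_pos (show 6*k+8+j.val ≤ 7*k+8 by omega)]
      exact congrArg (scan · true) (Fin.ext (show 6*k+8+j.val - (6*k+8) = j.val by omega))
  | cm r b =>
    have hr := r.isLt
    cases b
    · rw [decode, encode]
      rw [dif_neg (show ¬ 7*k+9+r.val ≤ k by omega), dif_neg (show ¬ 7*k+9+r.val = k+1 by omega),
        dif_neg (show ¬ 7*k+9+r.val ≤ 2*k+2 by omega),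
        dif_neg (show ¬ 7*k+9+r.val ≤ 3*k+3 by omega),
        dif_neg (show ¬ 7*k+9+r.val = 3*k+4 by omega),
        dif_neg (show ¬ 7*k+9+r.val ≤ 4*k+5 by omega),
        dif_neg (show ¬ 7*k+9+r.val ≤ 5*k+6 by omega),
        dif_neg (show ¬ 7*k+9+r.val ≤ 6*k+7 by omega),
        dif_neg (show ¬ 7*k+9+r.val ≤ 7*k+8 by omega),
        dif_pos (show 7*k+9+r.val ≤ 8*k+9 by omega)]
      exact congrArg (cm · false) (Fin.ext (show 7*k+9+r.val - (7*k+9) = r.val by omega))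
    · rw [decode, encode]
      rw [dif_neg (show ¬ 8*k+10+r.val ≤ k by omega),
        dif_neg (show ¬ 8*k+10+r.val = k+1 by omega),
        dif_neg (show ¬ 8*k+10+r.val ≤ 2*k+2 by omega),
        dif_neg (show ¬ 8*k+10+r.val ≤ 3*k+3 by omega),
        dif_neg (show ¬ 8*k+10+r.val = 3*k+4 by omega),
        dif_neg (show ¬ 8*k+10+r.val ≤ 4*k+5 by omega),
        dif_neg (show ¬ 8*k+10+r.val ≤ 5*k+6 by omega),
        dif_neg (show ¬ 8*k+10+r.val ≤ 6*k+7 by omega),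
        dif_neg (show ¬ 8*k+10+r.val ≤ 7*k+8 by omega),
        dif_neg (show ¬ 8*k+10+r.val ≤ 8*k+9 by omega)]
      exact congrArg (cm · true) (Fin.ext (show 8*k+10+r.val - (8*k+10) = r.val by omega))

def M2 (k : ℕ) : NFA (Fin 3) (Fin (9*k+11)) where
  step x a := encode k '' (nstep k (decode k x) a)
  start := encode k '' (M k).start
  accept := {x | decode k x ∈ (M k).accept}

lemma M2_accepts (k : ℕ) (w : List (Fin 3)) : w ∈ (M2 k).accepts ↔ w ∈ (M k).accepts := by
  rw [mem_accepts_iff, mem_accepts_iff]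
  constructor
  · rintro ⟨s, h0, hstep, hacc⟩
    refine ⟨fun i => decode k (s i), ?_, ?_, hacc⟩
    · obtain ⟨z, hz, he⟩ := h0
      beta_reduce
      rw [← he, decode_encode]; exact hz
    · intro i h
      obtain ⟨z, hz, he⟩ := hstep i h
      beta_reduce
      rw [← he, decode_encode]
      exact hz
  · rintro ⟨s, h0, hstep, hacc⟩
    refine ⟨fun i => encode k (s i), ⟨s 0, h0, rfl⟩, ?_, ?_⟩
    · intro i h
      exact ⟨s (i+1), by rw [decode_encode]; exact hstep i h, rfl⟩
    · show decode k (encode k (s w.length)) ∈ (M k).accept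
      rw [decode_encode]; exact hacc

end NfaLB

/-- There is a constant `c` with `0 < c ≤ 1` such that for infinitely many `n`
there is an `n`-state NFA (over a fixed finite alphabet) whose complement is
nonempty but every string not accepted has length at least `2^(c·n)`. -/
theorem nfa_complement_shortest_string_lower_bound :
    ∃ c : ℝ, 0 < c ∧ c ≤ 1 ∧
      ∃ (α : Type) (_ : Fintype α),
        {n : ℕ | 0 < n ∧
          ∃ M : NFA α (Fin n),
            (∃ x : List α, x ∉ M.accepts) ∧
            ∀ x : List α, x ∉ M.accepts →
              (2 : ℝ) ^ (c * n) ≤ x.length}.Infinite := by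
  refine ⟨1/16, by norm_num, by norm_num, Fin 3, inferInstance, ?_⟩
  refine Set.infinite_of_injective_forall_mem (f := fun t : ℕ => 9*(t+2)+11) ?_ ?_
  · intro a b h
    have h' : 9*(a+2)+11 = 9*(b+2)+11 := h
    omega
  · intro t
    simp only [Set.mem_setOf_eq]
    have hk : 0 < t + 2 := by omega
    refine ⟨by omega, NfaLB.M2 (t+2), ⟨NfaLB.Wstr (t+2), ?_⟩, ?_⟩
    · intro hacc
      rw [NfaLB.M2_accepts] at hacc
      exact NfaLB.soundness hk _ hacc
        ⟨NfaLB.WG1 (t+2), NfaLB.WG2 (t+2), NfaLB.WG3 (t+2), NfaLB.WG4 (t+2)⟩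
    · intro x hx
      have hxM : x ∉ (NfaLB.M (t+2)).accepts := fun hc => hx ((NfaLB.M2_accepts _ x).mpr hc)
      have hg1 : NfaLB.Good1 (t+2) x :=
        Classical.byContradiction fun h => hxM (NfaLB.acc1 hk x h)
      have hg2 : NfaLB.Good2 (t+2) x :=
        Classical.byContradiction fun h => hxM (NfaLB.acc2 x h)
      have hg3 : NfaLB.Good3 (t+2) x :=
        Classical.byContradiction fun h => hxM (NfaLB.acc3 x h)
      have hg4 : NfaLB.Good4 (t+2) x :=
        Classical.byContradiction fun h => hxM (NfaLB.acc4 hk x h)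
      have hlen : (t+2+1) * 2^(t+2) ≤ x.length := NfaLB.core x hg1 hg2 hg3 hg4
      have hk2 : (2:ℕ)^(t+2) ≤ x.length :=
        le_trans (Nat.le_mul_of_pos_left _ (by omega)) hlen
      have hexp : (1/16 : ℝ) * ((9*(t+2)+11 : ℕ) : ℝ) ≤ ((t+2 : ℕ) : ℝ) := by
        have ht : (0:ℝ) ≤ (t : ℕ) := Nat.cast_nonneg t
        push_cast
        linarith
      calc (2:ℝ) ^ ((1/16 : ℝ) * ((9*(t+2)+11 : ℕ) : ℝ))
          ≤ (2:ℝ) ^ (((t+2 : ℕ) : ℝ)) := Real.rpow_le_rpow_of_exponent_le one_le_two hexp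
        _ = (((2:ℕ)^(t+2) : ℕ) : ℝ) := by rw [Real.rpow_natCast]; push_cast; ring
        _ ≤ (x.length : ℝ) := Nat.cast_le.mpr hk2
end

section
/- For all integers m, n ≥ 1 there exist DFAs M₁ and M₂ over the two-letter alphabet {0,1}, where M₁ has exactly m states and M₂ has exactly n states, such that L(M₁) ∩ L(M₂) is nonempty, some string of length m·n − 1 belongs to L(M₁) ∩ L(M₂), and every string in L(M₁) ∩ L(M₂) has length at least m·n − 1 (i.e., the shortest string in the intersection has length exactly m·n − 1). -/
namespace DfaTight

def M1 (m : ℕ) (hm : 0 < m) : DFA (Fin 2) (Fin m) where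
  step := fun i a => if a = 1 then ⟨((i : ℕ) + 1) % m, Nat.mod_lt _ hm⟩ else i
  start := ⟨0, hm⟩
  accept := {⟨0, hm⟩}

def M2 (m n : ℕ) (hm : 0 < m) (hmn : m ≤ n) : DFA (Fin 2) (Fin n) where
  step := fun j a =>
    if h : (j : ℕ) + 1 < m then
      (if a = 1 then ⟨(j : ℕ) + 1, lt_of_lt_of_le h hmn⟩ else j)
    else
      (if a = 1 then ⟨0, hm.trans_le hmn⟩
       else ⟨((j : ℕ) + 1) % n, Nat.mod_lt _ (hm.trans_le hmn)⟩)
  start := ⟨0, hm.trans_le hmn⟩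
  accept := {⟨n - 1, by omega⟩}

/-- the BFS-distance potential -/
def D (m n i j : ℕ) : ℕ := j + n * ((min j (m - 1) + m - i) % m)

lemma mod2 {x m : ℕ} (h1 : m ≤ x) (h2 : x < 2 * m) : x % m = x - m := by
  rw [Nat.mod_eq_sub_mod h1, Nat.mod_eq_of_lt (by omega)]

lemma key (m n : ℕ) (hm : 0 < m) (hmn : m ≤ n) (i : Fin m) (j : Fin n) (a : Fin 2) :
    D m n (((M1 m hm).step i a) : ℕ) (((M2 m n hm hmn).step j a) : ℕ) ≤ D m n i j + 1 := by
  obtain ⟨i, hi⟩ := i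
  obtain ⟨j, hj⟩ := j
  fin_cases a
  · -- letter 0
    simp only [M1, M2, D, Fin.mk_zero, Fin.mk_one,
      eq_false (by decide : ¬ ((0:Fin 2) = 1)), if_false]
    by_cases hjm : j + 1 < m
    · rw [dif_pos hjm]
      simp only [Fin.val_mk]
      omega
    · rw [dif_neg hjm]
      simp only [Fin.val_mk]
      have hcj : min j (m - 1) = m - 1 := by omega
      by_cases hjn : j + 1 < n
      · have h1 : (j + 1) % n = j + 1 := Nat.mod_eq_of_lt hjn
        have hcj' : min ((j+1) % n) (m - 1) = m - 1 := by rw [h1]; omega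
        rw [hcj, hcj', h1]
        omega
      · have hj1 : j + 1 = n := by omega
        have h1 : (j + 1) % n = 0 := by rw [hj1, Nat.mod_self]
        rw [hcj, h1]
        simp only [Nat.min_eq_left (Nat.zero_le _), Nat.zero_add]
        rcases Nat.eq_zero_or_pos i with hi0 | hi0
        · subst hi0
          rw [Nat.sub_zero, Nat.mod_self]
          have : (m - 1 + m - 0) % m = m - 1 := by
            rw [Nat.sub_zero, mod2 (by omega) (by omega)]; omega
          rw [this]; omega
        · have e1 : (m - i) % m = m - i := Nat.mod_eq_of_lt (by omega)
          have e2 : (m - 1 + m - i) % m = m - 1 - i := by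
            rw [mod2 (by omega) (by omega)]; omega
          rw [e1, e2]
          have : m - i = (m - 1 - i) + 1 := by omega
          rw [this, Nat.mul_add, Nat.mul_one]
          omega
  · -- letter 1
    simp only [M1, M2, D, Fin.mk_zero, Fin.mk_one, eq_self_iff_true, if_true]
    by_cases hjm : j + 1 < m
    · rw [dif_pos hjm]
      simp only [Fin.val_mk]
      have hcj : min j (m - 1) = j := by omega
      have hcj' : min (j + 1) (m - 1) = j + 1 := by omega
      rw [hcj, hcj']
      have : (j + 1 + m - (i + 1) % m) % m = (j + m - i) % m := by
        by_cases him : i + 1 < m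
        · rw [Nat.mod_eq_of_lt him]
          congr 1
          omega
        · have : (i + 1) % m = 0 := by
            have : i + 1 = m := by omega
            rw [this, Nat.mod_self]
          rw [this, Nat.sub_zero, Nat.add_comm (j+1) m, Nat.add_mod_left,
            Nat.mod_eq_of_lt (by omega), Nat.mod_eq_of_lt (by omega)]
          omega
      rw [this]
      omega
    · rw [dif_neg hjm]
      simp only [Fin.val_mk]
      have hcj : min j (m - 1) = m - 1 := by omega
      have hc0 : min 0 (m - 1) = 0 := by omega
      rw [hcj, hc0, Nat.zero_add]
      have key1 : (0 + m - (i + 1) % m) % m = (m - 1 + m - i) % m := by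
        rw [Nat.zero_add]
        by_cases him : i + 1 < m
        · rw [Nat.mod_eq_of_lt (by omega : i + 1 < m),
            Nat.mod_eq_of_lt (by omega : m - (i+1) < m),
            mod2 (by omega) (by omega)]
          omega
        · have hi1 : i + 1 = m := by omega
          have : (i + 1) % m = 0 := by rw [hi1, Nat.mod_self]
          rw [this, Nat.sub_zero, Nat.mod_self]
          have : m - 1 + m - i = m := by omega
          rw [this, Nat.mod_self]
      rw [key1]
      omega


lemma evalD (m n : ℕ) (hm : 0 < m) (hmn : m ≤ n) (x : List (Fin 2)) :
    D m n (((M1 m hm).eval x) : ℕ) (((M2 m n hm hmn).eval x) : ℕ) ≤ x.length := by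
  induction x using List.reverseRecOn with
  | nil =>
      show D m n ((⟨0, hm⟩ : Fin m) : ℕ) ((⟨0, _⟩ : Fin n) : ℕ) ≤ 0
      simp only [D, Fin.val_mk, Nat.zero_min, Nat.zero_add, Nat.sub_zero, Nat.mod_self,
        Nat.mul_zero, Nat.add_zero, Nat.le_refl]
  | append_singleton xs a ih =>
      rw [DFA.eval_append_singleton, DFA.eval_append_singleton, List.length_append,
        List.length_singleton]
      exact (key m n hm hmn _ _ a).trans (by omega)

lemma lower (m n : ℕ) (hm : 0 < m) (hmn : m ≤ n) (x : List (Fin 2))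
    (h1 : x ∈ (M1 m hm).accepts) (h2 : x ∈ (M2 m n hm hmn).accepts) :
    m * n - 1 ≤ x.length := by
  rw [DFA.mem_accepts] at h1 h2
  have h1' : (M1 m hm).eval x = ⟨0, hm⟩ := h1
  have h2' : (M2 m n hm hmn).eval x = ⟨n - 1, by omega⟩ := h2
  have e := evalD m n hm hmn x
  rw [h1', h2'] at e
  simp only [D, Fin.val_mk] at e
  have hmin : min (n - 1) (m - 1) = m - 1 := by omega
  have hmod : (m - 1 + m - 0) % m = m - 1 := by
    rw [Nat.sub_zero, mod2 (by omega) (by omega)]; omega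
  rw [hmin, hmod] at e
  have hnm : n * (m - 1) + n = n * m := by
    have h' : m - 1 + 1 = m := by omega
    calc n * (m - 1) + n = n * (m - 1 + 1) := by rw [Nat.mul_add, Nat.mul_one]
    _ = n * m := by rw [h']
  have hc : m * n = n * m := Nat.mul_comm m n
  omega

def blk (m n : ℕ) : List (Fin 2) :=
  List.replicate (m - 1) 1 ++ (List.replicate (n - m) 0 ++ [0])

def blks (m n : ℕ) : ℕ → List (Fin 2)
  | 0 => []
  | k + 1 => blk m n ++ blks m n k

def wit (m n : ℕ) : List (Fin 2) :=
  blks m n (m - 1) ++ (List.replicate (m - 1) 1 ++ List.replicate (n - m) 0)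

lemma M1_step1 (m : ℕ) (hm : 0 < m) (i : ℕ) (hi : i < m) :
    (M1 m hm).step ⟨i, hi⟩ 1 = ⟨(i + 1) % m, Nat.mod_lt _ hm⟩ := by
  simp only [M1]
  simp only [if_true]

lemma M1_step0 (m : ℕ) (hm : 0 < m) (i : Fin m) :
    (M1 m hm).step i 0 = i := by
  simp only [M1]
  rw [if_neg (by decide : ¬ ((0 : Fin 2) = 1))]

lemma M1_rep1 (m : ℕ) (hm : 0 < m) (k : ℕ) : ∀ (i : ℕ) (hi : i < m),
    (M1 m hm).evalFrom ⟨i, hi⟩ (List.replicate k 1) = ⟨(i + k) % m, Nat.mod_lt _ hm⟩ := by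
  induction k with
  | zero =>
      intro i hi
      simp only [List.replicate, DFA.evalFrom_nil]
      exact Fin.ext (by simp [Nat.mod_eq_of_lt hi])
  | succ k ih =>
      intro i hi
      rw [List.replicate_succ]
      show (M1 m hm).evalFrom ((M1 m hm).step ⟨i, hi⟩ 1) (List.replicate k 1) = _
      rw [M1_step1, ih]
      apply Fin.ext
      simp only [Fin.val_mk]
      rw [Nat.mod_add_mod]
      congr 1
      omega

lemma M1_rep0 (m : ℕ) (hm : 0 < m) (k : ℕ) (i : Fin m) :
    (M1 m hm).evalFrom i (List.replicate k 0) = i := by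
  induction k with
  | zero => simp [DFA.evalFrom_nil]
  | succ k ih =>
      rw [List.replicate_succ]
      show (M1 m hm).evalFrom ((M1 m hm).step i 0) (List.replicate k 0) = i
      rw [M1_step0, ih]

lemma M2_rep1 (m n : ℕ) (hm : 0 < m) (hmn : m ≤ n) (k : ℕ) :
    ∀ (j : ℕ) (hj : j < n) (h : j + k ≤ m - 1),
    (M2 m n hm hmn).evalFrom ⟨j, hj⟩ (List.replicate k 1) = ⟨j + k, by omega⟩ := by
  induction k with
  | zero =>
      intro j hj h
      simp only [List.replicate, DFA.evalFrom_nil]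
      exact Fin.ext (by simp)
  | succ k ih =>
      intro j hj h
      rw [List.replicate_succ]
      show (M2 m n hm hmn).evalFrom ((M2 m n hm hmn).step ⟨j, hj⟩ 1) (List.replicate k 1) = _
      have hstep : (M2 m n hm hmn).step ⟨j, hj⟩ 1 = ⟨j + 1, by omega⟩ := by
        simp only [M2, Fin.val_mk]
        rw [dif_pos (show j + 1 < m by omega)]
        simp only [if_true]
      rw [hstep, ih (j + 1) (by omega) (by omega)]
      apply Fin.ext
      simp only [Fin.val_mk]
      omega

lemma M2_rep0 (m n : ℕ) (hm : 0 < m) (hmn : m ≤ n) (k : ℕ) :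
    ∀ (j : ℕ) (hj : j < n) (h1 : m - 1 ≤ j) (h2 : j + k ≤ n - 1),
    (M2 m n hm hmn).evalFrom ⟨j, hj⟩ (List.replicate k 0) = ⟨j + k, by omega⟩ := by
  induction k with
  | zero =>
      intro j hj h1 h2
      simp only [List.replicate, DFA.evalFrom_nil]
      exact Fin.ext (by simp)
  | succ k ih =>
      intro j hj h1 h2
      rw [List.replicate_succ]
      show (M2 m n hm hmn).evalFrom ((M2 m n hm hmn).step ⟨j, hj⟩ 0) (List.replicate k 0) = _
      have hstep : (M2 m n hm hmn).step ⟨j, hj⟩ 0 = ⟨j + 1, by omega⟩ := by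
        simp only [M2, Fin.val_mk]
        rw [dif_neg (show ¬ (j + 1 < m) by omega)]
        rw [if_neg (by decide : ¬ ((0 : Fin 2) = 1))]
        exact Fin.ext (by simp only [Fin.val_mk]; rw [Nat.mod_eq_of_lt (by omega)])
      rw [hstep, ih (j + 1) (by omega) (by omega) (by omega)]
      apply Fin.ext
      simp only [Fin.val_mk]
      omega

lemma M2_last (m n : ℕ) (hm : 0 < m) (hmn : m ≤ n) :
    (M2 m n hm hmn).step ⟨n - 1, by omega⟩ 0 = ⟨0, by omega⟩ := by
  simp only [M2, Fin.val_mk]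
  rw [dif_neg (show ¬ (n - 1 + 1 < m) by omega)]
  rw [if_neg (by decide : ¬ ((0 : Fin 2) = 1))]
  exact Fin.ext (by simp only [Fin.val_mk]; rw [show n - 1 + 1 = n by omega, Nat.mod_self])

lemma M2_blk (m n : ℕ) (hm : 0 < m) (hmn : m ≤ n) :
    (M2 m n hm hmn).evalFrom ⟨0, by omega⟩ (blk m n) = ⟨0, by omega⟩ := by
  unfold blk
  rw [DFA.evalFrom_of_append, DFA.evalFrom_of_append]
  rw [M2_rep1 m n hm hmn (m - 1) 0 (by omega) (by omega)]
  have e1 : (⟨0 + (m - 1), by omega⟩ : Fin n) = ⟨m - 1, by omega⟩ :=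
    Fin.ext (by simp only [Fin.val_mk]; omega)
  rw [e1, M2_rep0 m n hm hmn (n - m) (m - 1) (by omega) (by omega) (by omega)]
  have e2 : (⟨m - 1 + (n - m), by omega⟩ : Fin n) = ⟨n - 1, by omega⟩ :=
    Fin.ext (by simp only [Fin.val_mk]; omega)
  rw [e2, DFA.evalFrom_singleton, M2_last]

lemma M1_blk (m n : ℕ) (hm : 0 < m) (i : ℕ) (hi : i < m) :
    (M1 m hm).evalFrom ⟨i, hi⟩ (blk m n) = ⟨(i + (m - 1)) % m, Nat.mod_lt _ hm⟩ := by
  unfold blk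
  rw [DFA.evalFrom_of_append, DFA.evalFrom_of_append, M1_rep1, M1_rep0,
    DFA.evalFrom_singleton, M1_step0]

lemma M2_blks (m n : ℕ) (hm : 0 < m) (hmn : m ≤ n) (k : ℕ) :
    (M2 m n hm hmn).evalFrom ⟨0, by omega⟩ (blks m n k) = ⟨0, by omega⟩ := by
  induction k with
  | zero => simp [blks, DFA.evalFrom_nil]
  | succ k ih => rw [blks, DFA.evalFrom_of_append, M2_blk, ih]

lemma M1_blks (m n : ℕ) (hm : 0 < m) (k : ℕ) : ∀ (i : ℕ) (hi : i < m),
    (M1 m hm).evalFrom ⟨i, hi⟩ (blks m n k) = ⟨(i + k * (m - 1)) % m, Nat.mod_lt _ hm⟩ := by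
  induction k with
  | zero =>
      intro i hi
      simp only [blks, DFA.evalFrom_nil]
      exact Fin.ext (by simp [Nat.mod_eq_of_lt hi])
  | succ k ih =>
      intro i hi
      rw [blks, DFA.evalFrom_of_append, M1_blk, ih]
      apply Fin.ext
      simp only [Fin.val_mk]
      rw [Nat.mod_add_mod]
      congr 1
      generalize m - 1 = p
      ring

lemma blk_len (m n : ℕ) (hm : 0 < m) (hmn : m ≤ n) : (blk m n).length = n := by
  simp [blk]
  omega

lemma blks_len (m n : ℕ) (hm : 0 < m) (hmn : m ≤ n) (k : ℕ) :
    (blks m n k).length = k * n := by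
  induction k with
  | zero => simp [blks]
  | succ k ih =>
      rw [blks, List.length_append, blk_len m n hm hmn, ih]
      ring

lemma wit_len (m n : ℕ) (hm : 0 < m) (hmn : m ≤ n) :
    (wit m n).length = m * n - 1 := by
  rw [wit, List.length_append, List.length_append, blks_len m n hm hmn,
    List.length_replicate, List.length_replicate]
  have h1 : (m - 1) * n + n = m * n := by
    have h' : m - 1 + 1 = m := by omega
    calc (m - 1) * n + n = (m - 1 + 1) * n := by rw [Nat.add_mul, Nat.one_mul]
    _ = m * n := by rw [h']
  omega

lemma wit_mem1 (m n : ℕ) (hm : 0 < m) (hmn : m ≤ n) :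
    wit m n ∈ (M1 m hm).accepts := by
  rw [DFA.mem_accepts]
  show (M1 m hm).evalFrom ⟨0, hm⟩ (wit m n) ∈ ({⟨0, hm⟩} : Set (Fin m))
  rw [wit, DFA.evalFrom_of_append, M1_blks m n hm (m - 1) 0 hm,
    DFA.evalFrom_of_append, M1_rep1, M1_rep0]
  have : (⟨((0 + (m - 1) * (m - 1)) % m + (m - 1)) % m, Nat.mod_lt _ hm⟩ : Fin m)
      = ⟨0, hm⟩ := by
    apply Fin.ext
    simp only [Fin.val_mk]
    rw [Nat.mod_add_mod, Nat.zero_add]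
    have h' : (m - 1) * (m - 1) + (m - 1) = (m - 1) * m := by
      have : (m - 1) * ((m - 1) + 1) = (m - 1) * (m - 1) + (m - 1) := Nat.mul_succ _ _
      rw [← this, show m - 1 + 1 = m by omega]
    rw [h', Nat.mul_mod_left]
  rw [this]
  exact rfl

lemma wit_mem2 (m n : ℕ) (hm : 0 < m) (hmn : m ≤ n) :
    wit m n ∈ (M2 m n hm hmn).accepts := by
  rw [DFA.mem_accepts]
  show (M2 m n hm hmn).evalFrom ⟨0, by omega⟩ (wit m n) ∈ ({⟨n - 1, by omega⟩} : Set (Fin n))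
  rw [wit, DFA.evalFrom_of_append, M2_blks m n hm hmn,
    DFA.evalFrom_of_append, M2_rep1 m n hm hmn (m - 1) 0 (by omega) (by omega)]
  have e1 : (⟨0 + (m - 1), by omega⟩ : Fin n) = ⟨m - 1, by omega⟩ :=
    Fin.ext (by simp only [Fin.val_mk]; omega)
  rw [e1, M2_rep0 m n hm hmn (n - m) (m - 1) (by omega) (by omega) (by omega)]
  have e2 : (⟨m - 1 + (n - m), by omega⟩ : Fin n) = ⟨n - 1, by omega⟩ :=
    Fin.ext (by simp only [Fin.val_mk]; omega)
  rw [e2]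
  exact rfl

lemma aux (m n : ℕ) (hm : 0 < m) (hmn : m ≤ n) :
    ∃ (M₁ : DFA (Fin 2) (Fin m)) (M₂ : DFA (Fin 2) (Fin n)),
      (∃ x, x ∈ M₁.accepts ∧ x ∈ M₂.accepts ∧ x.length = m * n - 1) ∧
      (∀ x, x ∈ M₁.accepts → x ∈ M₂.accepts → m * n - 1 ≤ x.length) :=
  ⟨M1 m hm, M2 m n hm hmn,
    ⟨wit m n, wit_mem1 m n hm hmn, wit_mem2 m n hm hmn, wit_len m n hm hmn⟩,
    fun x h1 h2 => lower m n hm hmn x h1 h2⟩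

end DfaTight

/-- For all `m, n ≥ 1` there exist DFAs over the two-letter alphabet with `m`
and `n` states respectively whose intersection is nonempty and whose shortest
common string has length exactly `m·n − 1`. -/
theorem dfa_intersection_shortest_string_tight (m n : ℕ) (hm : 1 ≤ m) (hn : 1 ≤ n) :
    ∃ (M₁ : DFA (Fin 2) (Fin m)) (M₂ : DFA (Fin 2) (Fin n)),
      (∃ x, x ∈ M₁.accepts ∧ x ∈ M₂.accepts ∧ x.length = m * n - 1) ∧
      (∀ x, x ∈ M₁.accepts → x ∈ M₂.accepts → m * n - 1 ≤ x.length) := by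
  rcases le_total m n with h | h
  · exact DfaTight.aux m n hm h
  · obtain ⟨M₁, M₂, ⟨x, hx1, hx2, hlen⟩, hb⟩ := DfaTight.aux n m hn h
    refine ⟨M₂, M₁, ⟨x, hx2, hx1, ?_⟩, fun y hy1 hy2 => ?_⟩
    · rw [Nat.mul_comm]; exact hlen
    · rw [Nat.mul_comm]; exact hb y hy2 hy1
end

section
/- Define F(m,n) = max over 1 ≤ i ≤ m and 1 ≤ j ≤ n of ( max(m−i, n−j) + lcm(i,j) ). If M₁ and M₂ are DFAs over a one-letter alphabet with m and n states respectively, accepting L₁ and L₂, and L₁ ∩ L₂ is nonempty, then the shortest string in L₁ ∩ L₂ has length at most F(m,n) − 1. -/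
/-- `F(m,n) = max_{1 ≤ i ≤ m, 1 ≤ j ≤ n} ( max(m−i, n−j) + lcm(i,j) )`. -/
def pighizziniShallitF (m n : ℕ) : ℕ :=
  (Finset.Icc 1 m ×ˢ Finset.Icc 1 n).sup
    fun p => max (m - p.1) (n - p.2) + Nat.lcm p.1 p.2

private lemma psf_cycle {σ : Type*} [Fintype σ] (f : σ → σ) (s : σ) :
    ∃ a i, 1 ≤ i ∧ a + i ≤ Fintype.card σ ∧ ∀ t, f^[a + t + i] s = f^[a + t] s := by
  obtain ⟨x, y, hxy, heq⟩ := Fintype.exists_ne_map_eq_of_card_lt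
    (fun k : Fin (Fintype.card σ + 1) => f^[(k : ℕ)] s) (by simp)
  have key : ∀ x y : Fin (Fintype.card σ + 1), (x : ℕ) < (y : ℕ) →
      f^[(x : ℕ)] s = f^[(y : ℕ)] s →
      ∃ a i, 1 ≤ i ∧ a + i ≤ Fintype.card σ ∧ ∀ t, f^[a + t + i] s = f^[a + t] s := by
    intro x y hlt heq
    refine ⟨x, y - x, by omega, by omega, ?_⟩
    intro t
    have base : f^[(x : ℕ) + ((y : ℕ) - (x : ℕ))] s = f^[(x : ℕ)] s := by
      rw [Nat.add_sub_cancel' hlt.le]; exact heq.symm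
    calc f^[(x : ℕ) + t + ((y : ℕ) - (x : ℕ))] s
        = f^[t + ((x : ℕ) + ((y : ℕ) - (x : ℕ)))] s := by ring_nf
      _ = f^[t] (f^[(x : ℕ) + ((y : ℕ) - (x : ℕ))] s) := Function.iterate_add_apply f t _ s
      _ = f^[t] (f^[(x : ℕ)] s) := by rw [base]
      _ = f^[t + (x : ℕ)] s := (Function.iterate_add_apply f t _ s).symm
      _ = f^[(x : ℕ) + t] s := by ring_nf
  rcases Nat.lt_or_ge (x : ℕ) (y : ℕ) with hlt | hge
  · exact key x y hlt heq
  · have hlt : (y : ℕ) < (x : ℕ) := by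
      rcases Nat.lt_or_ge (y : ℕ) (x : ℕ) with h' | h'
      · exact h'
      · exact absurd (Fin.ext (by omega)) hxy
    exact key y x hlt heq.symm

private lemma psf_cycle_mul {σ : Type*} (f : σ → σ) (s : σ) {a i : ℕ}
    (hper : ∀ t, f^[a + t + i] s = f^[a + t] s) :
    ∀ k t, f^[a + t + k * i] s = f^[a + t] s := by
  intro k
  induction k with
  | zero => simp
  | succ k ih =>
    intro t
    have h1 : a + t + (k + 1) * i = a + (t + k * i) + i := by ring
    rw [h1, hper (t + k * i), ← Nat.add_assoc]
    exact ih t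

private lemma psf_eval {σ : Type*} (M : DFA (Fin 1) σ) (ℓ : ℕ) (s : σ) :
    M.evalFrom s (List.replicate ℓ (0 : Fin 1)) = (fun q => M.step q 0)^[ℓ] s := by
  induction ℓ generalizing s with
  | zero => simp [DFA.evalFrom]
  | succ ℓ ih =>
    rw [List.replicate_succ, Function.iterate_succ_apply]
    exact ih (M.step s 0)

/-- For unary DFAs with `m` and `n` states whose languages intersect
nontrivially, the shortest string in the intersection has length at most
`F(m,n) − 1`. -/
theorem unary_dfa_intersection_shortest_string {σ₁ σ₂ : Type*}
    [Fintype σ₁] [Fintype σ₂] (M₁ : DFA (Fin 1) σ₁) (M₂ : DFA (Fin 1) σ₂)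
    (h : ∃ x, x ∈ M₁.accepts ∧ x ∈ M₂.accepts) :
    ∃ x, x ∈ M₁.accepts ∧ x ∈ M₂.accepts ∧
      x.length ≤ pighizziniShallitF (Fintype.card σ₁) (Fintype.card σ₂) - 1 := by
  classical
  set m := Fintype.card σ₁ with hm
  set n := Fintype.card σ₂ with hn
  set f₁ : σ₁ → σ₁ := fun q => M₁.step q 0 with hf₁
  set f₂ : σ₂ → σ₂ := fun q => M₂.step q 0 with hf₂
  set S : Set ℕ := {ℓ | f₁^[ℓ] M₁.start ∈ M₁.accept ∧ f₂^[ℓ] M₂.start ∈ M₂.accept} with hS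
  -- every unary word is a replicate
  have hrep : ∀ x : List (Fin 1), x = List.replicate x.length (0 : Fin 1) := by
    intro x
    apply List.eq_replicate_length.mpr
    intro b _
    exact Subsingleton.elim _ _
  have hmem : ∀ ℓ : ℕ, ℓ ∈ S ↔
      (List.replicate ℓ (0 : Fin 1) ∈ M₁.accepts ∧ List.replicate ℓ (0 : Fin 1) ∈ M₂.accepts) := by
    intro ℓ
    rw [DFA.mem_accepts, DFA.mem_accepts]
    unfold S
    simp only [Set.mem_setOf_eq, DFA.eval, psf_eval]
    exact Iff.rfl
  have hSne : S.Nonempty := by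
    obtain ⟨x, hx1, hx2⟩ := h
    refine ⟨x.length, (hmem x.length).mpr ?_⟩
    constructor
    · rw [← hrep x]; exact hx1
    · rw [← hrep x]; exact hx2
  set ℓ := sInf S with hℓ
  have hℓS : ℓ ∈ S := Nat.sInf_mem hSne
  -- cycles
  obtain ⟨a₁, i, hi1, hai, hper₁⟩ := psf_cycle f₁ M₁.start
  obtain ⟨a₂, j, hj1, haj, hper₂⟩ := psf_cycle f₂ M₂.start
  set L := Nat.lcm i j with hL
  have hLpos : 0 < L := Nat.lcm_pos (by omega) (by omega)
  have hiL : i ∣ L := Nat.dvd_lcm_left i j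
  have hjL : j ∣ L := Nat.dvd_lcm_right i j
  have hFle : max (m - i) (n - j) + L ≤ pighizziniShallitF m n := by
    apply Finset.le_sup (f := fun p : ℕ × ℕ => max (m - p.1) (n - p.2) + Nat.lcm p.1 p.2)
      (b := (i, j))
    rw [Finset.mem_product, Finset.mem_Icc, Finset.mem_Icc]
    exact ⟨⟨hi1, by omega⟩, ⟨hj1, by omega⟩⟩
  -- main claim: ℓ < F m n
  have hmain : ℓ < pighizziniShallitF m n := by
    by_contra hge
    push_neg at hge
    have hℓbig : max (m - i) (n - j) + L ≤ ℓ := le_trans hFle hge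
    have h1 : a₁ + L ≤ ℓ := by
      have : m - i ≤ max (m - i) (n - j) := le_max_left _ _
      omega
    have h2 : a₂ + L ≤ ℓ := by
      have : n - j ≤ max (m - i) (n - j) := le_max_right _ _
      omega
    have hsub : ℓ - L ∈ S := by
      have e₁ : f₁^[ℓ - L] M₁.start = f₁^[ℓ] M₁.start := by
        have key := psf_cycle_mul f₁ M₁.start hper₁ (L / i) (ℓ - L - a₁)
        have h1' : a₁ + (ℓ - L - a₁) + L / i * i = ℓ := by
          have := Nat.div_mul_cancel hiL
          omega
        have h2' : a₁ + (ℓ - L - a₁) = ℓ - L := by omega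
        rw [h1', h2'] at key
        exact key.symm
      have e₂ : f₂^[ℓ - L] M₂.start = f₂^[ℓ] M₂.start := by
        have key := psf_cycle_mul f₂ M₂.start hper₂ (L / j) (ℓ - L - a₂)
        have h1' : a₂ + (ℓ - L - a₂) + L / j * j = ℓ := by
          have := Nat.div_mul_cancel hjL
          omega
        have h2' : a₂ + (ℓ - L - a₂) = ℓ - L := by omega
        rw [h1', h2'] at key
        exact key.symm
      exact ⟨e₁ ▸ hℓS.1, e₂ ▸ hℓS.2⟩
    have := Nat.sInf_le hsub
    omega
  obtain ⟨hacc1, hacc2⟩ := (hmem ℓ).mp hℓS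
  exact ⟨List.replicate ℓ (0 : Fin 1), hacc1, hacc2, by
    rw [List.length_replicate]; omega⟩
end

section
/- Define F(m,n) = max over 1 ≤ i ≤ m and 1 ≤ j ≤ n of ( max(m−i, n−j) + lcm(i,j) ). For all m, n ≥ 1 there exist DFAs M₁ and M₂ over a one-letter alphabet, with exactly m and n states respectively, such that L(M₁) ∩ L(M₂) is nonempty and the shortest string in L(M₁) ∩ L(M₂) has length exactly F(m,n) − 1. -/
/-- Eventually-periodic projection: identity on `[0, m-i)`, then cycles with period `i`. -/
def gfun (m i L : ℕ) : ℕ := if L < m - i then L else (m - i) + (L - (m - i)) % i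

lemma gfun_lt {m i : ℕ} (h1 : 1 ≤ i) (h2 : i ≤ m) (L : ℕ) : gfun m i L < m := by
  unfold gfun
  split
  · omega
  · have := Nat.mod_lt (L - (m - i)) h1
    omega

lemma gfun_zero (m i : ℕ) : gfun m i 0 = 0 := by
  unfold gfun
  split
  · rfl
  · have h0 : m - i = 0 := by omega
    simp [h0]

lemma gfun_step (m i L : ℕ) (h1 : 1 ≤ i) :
    gfun m i (L + 1) = gfun m i (gfun m i L + 1) := by
  by_cases h : L < m - i
  · rw [show gfun m i L = L from if_pos h]
  · have hr : (L - (m - i)) % i < i := Nat.mod_lt _ h1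
    rw [show gfun m i L = (m - i) + (L - (m - i)) % i from if_neg h]
    unfold gfun
    rw [if_neg (by omega), if_neg (by omega)]
    congr 1
    rw [show L + 1 - (m - i) = (L - (m - i)) + 1 by omega,
        show m - i + (L - (m-i)) % i + 1 - (m - i) = (L - (m-i)) % i + 1 by omega]
    conv_lhs => rw [Nat.add_mod]
    conv_rhs => rw [Nat.add_mod]
    rw [Nat.mod_mod_of_dvd _ dvd_rfl]

lemma gfun_eq_iff {m i L N : ℕ} (h1 : 1 ≤ i) (hN : m - i ≤ N) :
    gfun m i L = gfun m i N ↔ (m - i ≤ L ∧ (L - (m - i)) % i = (N - (m - i)) % i) := by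
  have hr : (N - (m - i)) % i < i := Nat.mod_lt _ h1
  rw [show gfun m i N = (m - i) + (N - (m - i)) % i from if_neg (by omega)]
  by_cases h : L < m - i
  · rw [show gfun m i L = L from if_pos h]
    constructor
    · intro he; omega
    · intro ⟨h', _⟩; omega
  · rw [show gfun m i L = (m - i) + (L - (m - i)) % i from if_neg h]
    constructor
    · intro he; exact ⟨by omega, by omega⟩
    · intro ⟨_, h'⟩; omega

/-- Unary DFA with `m` states: a tail of length `m - i` followed by a cycle of
length `i`, accepting exactly the strings of length `L` with `L ≥ m - i` and
`L ≡ t [MOD i]` (for `t ≥ m - i`). -/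
def uDFA (m i t : ℕ) (h1 : 1 ≤ i) (h2 : i ≤ m) : DFA (Fin 1) (Fin m) where
  step s _ := ⟨gfun m i (s.val + 1), gfun_lt h1 h2 _⟩
  start := ⟨0, by omega⟩
  accept := {⟨gfun m i t, gfun_lt h1 h2 _⟩}

lemma uDFA_evalFrom (m i t : ℕ) (h1 : 1 ≤ i) (h2 : i ≤ m) (x : List (Fin 1)) :
    ∀ (L : ℕ), (uDFA m i t h1 h2).evalFrom ⟨gfun m i L, gfun_lt h1 h2 L⟩ x
      = ⟨gfun m i (L + x.length), gfun_lt h1 h2 _⟩ := by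
  induction x with
  | nil => intro L; simp [DFA.evalFrom]
  | cons a x ih =>
      intro L
      have hstep : (uDFA m i t h1 h2).step ⟨gfun m i L, gfun_lt h1 h2 L⟩ a
          = ⟨gfun m i (L + 1), gfun_lt h1 h2 _⟩ := by
        apply Fin.ext
        exact (gfun_step m i L h1).symm
      rw [DFA.evalFrom, List.foldl_cons, hstep, ← DFA.evalFrom, ih (L + 1)]
      apply Fin.ext
      simp only []
      congr 1
      simp
      omega

lemma uDFA_accepts (m i t : ℕ) (h1 : 1 ≤ i) (h2 : i ≤ m) (x : List (Fin 1)) :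
    x ∈ (uDFA m i t h1 h2).accepts ↔ gfun m i x.length = gfun m i t := by
  rw [DFA.mem_accepts]
  have hstart : (uDFA m i t h1 h2).start = ⟨gfun m i 0, gfun_lt h1 h2 0⟩ := by
    apply Fin.ext; simp [uDFA, gfun_zero]
  rw [DFA.eval, hstart, uDFA_evalFrom]
  constructor
  · intro h
    have := congrArg Fin.val h
    simpa using this
  · intro h
    apply Fin.ext
    simpa using h

/-- For all `m, n ≥ 1` there exist unary DFAs with `m` and `n` states whose
languages intersect nontrivially and whose shortest common string has length
exactly `F(m,n) − 1`. -/
theorem unary_dfa_intersection_shortest_string_tight (m n : ℕ)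
    (hm : 1 ≤ m) (hn : 1 ≤ n) :
    ∃ (M₁ : DFA (Fin 1) (Fin m)) (M₂ : DFA (Fin 1) (Fin n)),
      (∃ x, x ∈ M₁.accepts ∧ x ∈ M₂.accepts ∧
        x.length = pighizziniShallitF m n - 1) ∧
      (∀ x, x ∈ M₁.accepts → x ∈ M₂.accepts →
        pighizziniShallitF m n - 1 ≤ x.length) := by
  have hne : ((Finset.Icc 1 m) ×ˢ (Finset.Icc 1 n)).Nonempty :=
    ⟨(1, 1), by simp [Finset.mem_product, Finset.mem_Icc, hm, hn]⟩
  obtain ⟨p, hpmem, hF⟩ := Finset.exists_mem_eq_sup _ hne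
    (fun p => max (m - p.1) (n - p.2) + Nat.lcm p.1 p.2)
  obtain ⟨i, j⟩ := p
  rw [Finset.mem_product, Finset.mem_Icc, Finset.mem_Icc] at hpmem
  obtain ⟨⟨hi1, him⟩, hj1, hjn⟩ := hpmem
  simp only at hF
  set K := Nat.lcm i j with hK
  have hKpos : 0 < K := Nat.lcm_pos hi1 hj1
  have hiK : i ≤ K := Nat.le_of_dvd hKpos (Nat.dvd_lcm_left i j)
  have hjK : j ≤ K := Nat.le_of_dvd hKpos (Nat.dvd_lcm_right i j)
  set t := max (m - i) (n - j) with ht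
  set N := t + K - 1 with hNdef
  have hNm : m - i ≤ N := by omega
  have hNn : n - j ≤ N := by omega
  have hFN : pighizziniShallitF m n - 1 = N := by
    rw [pighizziniShallitF, hF]
  refine ⟨uDFA m i N hi1 him, uDFA n j N hj1 hjn, ⟨List.replicate N 0, ?_, ?_, ?_⟩, ?_⟩
  · rw [uDFA_accepts]; simp
  · rw [uDFA_accepts]; simp
  · simp [hFN]
  · intro x hx1 hx2
    rw [uDFA_accepts, gfun_eq_iff hi1 hNm] at hx1
    rw [uDFA_accepts, gfun_eq_iff hj1 hNn] at hx2
    obtain ⟨hL1, hmod1⟩ := hx1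
    obtain ⟨hL2, hmod2⟩ := hx2
    rw [hFN]
    by_contra hlt
    push_neg at hlt
    set L := x.length with hL
    have hLN : L < N := hlt
    have hdvd1 : i ∣ N - L := by
      have h := (Nat.modEq_iff_dvd' (show L - (m - i) ≤ N - (m - i) by omega)).mp hmod1
      rwa [show N - (m - i) - (L - (m - i)) = N - L by omega] at h
    have hdvd2 : j ∣ N - L := by
      have h := (Nat.modEq_iff_dvd' (show L - (n - j) ≤ N - (n - j) by omega)).mp hmod2
      rwa [show N - (n - j) - (L - (n - j)) = N - L by omega] at h
    have hKdvd : K ∣ N - L := Nat.lcm_dvd hdvd1 hdvd2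
    have hKle : K ≤ N - L := Nat.le_of_dvd (by omega) hKdvd
    omega
end

section
/- Let L₁ be accepted by an NFA with m states and L₂ be accepted by an NFA with n states, over the same alphabet. If L₁⁺ ∩ L₂⁺ is nonempty, then L₁⁺ ∩ L₂⁺ contains a string of length at most m·n − 1. -/
/-- The positive closure `L⁺ = ⋃_{k ≥ 1} L^k` of a language. -/
def posClosure {α : Type*} (L : Language α) : Language α :=
  {x | ∃ k : ℕ, 1 ≤ k ∧ x ∈ L ^ k}

namespace NfaPosAux

variable {α : Type*} {σ σ₁ σ₂ : Type*}

/-- A run of an NFA from a single state to a single state reading a word. -/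
inductive Run (M : NFA α σ) : σ → List α → σ → Prop
  | nil (s : σ) : Run M s [] s
  | cons {s u t : σ} {a : α} {x : List α} :
      u ∈ M.step s a → Run M u x t → Run M s (a :: x) t

theorem run_append {M : NFA α σ} {s t r : σ} {x y : List α}
    (h1 : Run M s x t) (h2 : Run M t y r) : Run M s (x ++ y) r := by
  induction h1 with
  | nil => simpa
  | cons hstep _ ih => exact Run.cons hstep (ih h2)

theorem mem_evalFrom_iff_run {M : NFA α σ} {x : List α} {S : Set σ} {t : σ} :
    t ∈ M.evalFrom S x ↔ ∃ s ∈ S, Run M s x t := by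
  induction x generalizing S with
  | nil =>
    constructor
    · exact fun h => ⟨t, h, Run.nil t⟩
    · rintro ⟨s, hs, h⟩; cases h; exact hs
  | cons a x ih =>
    rw [show M.evalFrom S (a :: x) = M.evalFrom (M.stepSet S a) x from rfl, ih]
    constructor
    · rintro ⟨u, hu, hrun⟩
      rw [NFA.mem_stepSet] at hu
      obtain ⟨s, hs, hstep⟩ := hu
      exact ⟨s, hs, Run.cons hstep hrun⟩
    · rintro ⟨s, hs, hrun⟩
      cases hrun with
      | cons hstep htail =>
        exact ⟨_, NFA.mem_stepSet.2 ⟨s, hs, hstep⟩, htail⟩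

theorem mem_accepts_iff_run {M : NFA α σ} {x : List α} :
    x ∈ M.accepts ↔ ∃ s ∈ M.start, ∃ t ∈ M.accept, Run M s x t := by
  rw [NFA.mem_accepts]
  constructor
  · rintro ⟨t, ht, hev⟩
    obtain ⟨s, hs, hrun⟩ := mem_evalFrom_iff_run.1 hev
    exact ⟨s, hs, t, ht, hrun⟩
  · rintro ⟨s, hs, t, ht, hrun⟩
    exact ⟨t, ht, mem_evalFrom_iff_run.2 ⟨s, hs, hrun⟩⟩

theorem run_of_fn (M : NFA α σ) :
    ∀ (x : List α) (f : ℕ → σ),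
      (∀ i (hi : i < x.length), f (i + 1) ∈ M.step (f i) (x[i]'hi)) →
      Run M (f 0) x (f x.length) := by
  intro x
  induction x with
  | nil => intro f _; exact Run.nil _
  | cons a x ih =>
    intro f hf
    have h0 : f 1 ∈ M.step (f 0) a := hf 0 (by simp)
    have htail := ih (fun i => f (i + 1)) (fun i hi => by
      exact hf (i + 1) (by simpa using Nat.succ_lt_succ hi))
    exact Run.cons h0 htail

theorem run_fn {M : NFA α σ} {s t : σ} {x : List α} (h : Run M s x t) :
    ∃ f : ℕ → σ, f 0 = s ∧ f x.length = t ∧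
      ∀ i (hi : i < x.length), f (i + 1) ∈ M.step (f i) (x[i]'hi) := by
  induction h with
  | nil s => exact ⟨fun _ => s, rfl, rfl, fun i hi => by simp at hi⟩
  | @cons s u t a x hstep _ ih =>
    obtain ⟨f, hf0, hfl, hf⟩ := ih
    refine ⟨fun i => if i = 0 then s else f (i - 1), by simp, by simp [hfl], ?_⟩
    intro i hi
    match i with
    | 0 => simpa [hf0] using hstep
    | (j + 1) =>
      simp only [List.length_cons] at hi
      have := hf j (by omega)
      simpa using this

theorem run_shorten [Fintype σ] {M : NFA α σ} {s t : σ} :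
    ∀ (n : ℕ) (x : List α), x.length ≤ n → Run M s x t →
      ∃ y : List α, Run M s y t ∧ y.length < Fintype.card σ := by
  intro n
  induction n with
  | zero =>
    intro x hx h
    have hcard : 0 < Fintype.card σ := Fintype.card_pos_iff.2 ⟨s⟩
    exact ⟨x, h, by omega⟩
  | succ n ih =>
    intro x hx h
    by_cases hlt : x.length < Fintype.card σ
    · exact ⟨x, h, hlt⟩
    push_neg at hlt
    obtain ⟨f, hf0, hfl, hf⟩ := run_fn h
    have hcard : Fintype.card σ < Fintype.card (Fin (x.length + 1)) := by
      simp; omega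
    obtain ⟨i, j, hij, hfij⟩ :=
      Fintype.exists_ne_map_eq_of_card_lt (fun k : Fin (x.length + 1) => f k.val) hcard
    have key : ∀ p q : ℕ, p < q → q ≤ x.length → f p = f q →
        ∃ y : List α, Run M s y t ∧ y.length < Fintype.card σ := by
      intro p q hpq hq_le hfeq
      have hp_le : p ≤ x.length := by omega
      have htake : (x.take p).length = p := by simp [List.length_take]; omega
      have hdrop : (x.drop q).length = x.length - q := by simp
      have run1 : Run M s (x.take p) (f p) := by
        have := run_of_fn M (x.take p) f (fun k hk => by
          have hk' : k < x.length := by rw [htake] at hk; omega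
          have := hf k hk'
          simpa [List.getElem_take] using this)
        rwa [hf0, htake] at this
      have run2 : Run M (f q) (x.drop q) t := by
        have := run_of_fn M (x.drop q) (fun k => f (q + k)) (fun k hk => by
          have hk' : q + k < x.length := by rw [hdrop] at hk; omega
          have := hf (q + k) hk'
          simpa [List.getElem_drop, Nat.add_assoc] using this)
        simp only [Nat.add_zero] at this
        rw [hdrop, Nat.add_sub_cancel' hq_le, hfl] at this
        exact this
      have runy : Run M s (x.take p ++ x.drop q) t := by
        rw [← hfeq] at run2
        exact run_append run1 run2
      have hlen : (x.take p ++ x.drop q).length ≤ n := by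
        simp only [List.length_append, htake, hdrop]; omega
      exact ih _ hlen runy
    have hij' : (i : ℕ) ≠ (j : ℕ) := fun hc => hij (Fin.ext hc)
    rcases hij'.lt_or_gt with hlt2 | hlt2
    · exact key i j hlt2 (by omega) hfij
    · exact key j i hlt2 (by omega) hfij.symm

/-- NFA for the positive closure of `M.accepts`, on the same state space. -/
def posNFA (M : NFA α σ) : NFA α σ where
  step s a := M.step s a ∪ {u | s ∈ M.accept ∧ ∃ q ∈ M.start, u ∈ M.step q a}
  start := M.start
  accept := M.accept

theorem run_mono {M : NFA α σ} {s t : σ} {x : List α} (h : Run M s x t) :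
    Run (posNFA M) s x t := by
  induction h with
  | nil => exact Run.nil _
  | cons hstep _ ih => exact Run.cons (Or.inl hstep) ih

theorem accepts_mono {M : NFA α σ} {x : List α} (hx : x ∈ M.accepts) :
    x ∈ (posNFA M).accepts := by
  obtain ⟨s, hs, t, ht, hrun⟩ := mem_accepts_iff_run.1 hx
  exact mem_accepts_iff_run.2 ⟨s, hs, t, ht, run_mono hrun⟩

theorem concat_accepts {M : NFA α σ} {y z : List α}
    (hy : y ∈ M.accepts) (hz : z ∈ (posNFA M).accepts) :
    y ++ z ∈ (posNFA M).accepts := by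
  obtain ⟨s, hs, t, ht, hrun⟩ := mem_accepts_iff_run.1 hy
  obtain ⟨q, hq, r, hr, hrunz⟩ := mem_accepts_iff_run.1 hz
  cases hrunz with
  | nil => simpa using accepts_mono hy
  | @cons _ u _ a z' hstep htail =>
    have hu : ∃ p ∈ M.start, u ∈ M.step p a := by
      rcases hstep with h1 | ⟨_, p, hp, h2⟩
      · exact ⟨q, hq, h1⟩
      · exact ⟨p, hp, h2⟩
    have hstep' : u ∈ (posNFA M).step t a := Or.inr ⟨ht, hu⟩
    exact mem_accepts_iff_run.2
      ⟨s, hs, r, hr, run_append (run_mono hrun) (Run.cons hstep' htail)⟩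

theorem posClosure_subset_accepts {M : NFA α σ} {x : List α}
    (hx : x ∈ posClosure M.accepts) : x ∈ (posNFA M).accepts := by
  have key : ∀ k (x : List α), x ∈ M.accepts ^ (k + 1) → x ∈ (posNFA M).accepts := by
    intro k
    induction k with
    | zero => intro x hx; rw [pow_one] at hx; exact accepts_mono hx
    | succ k ih =>
      intro x hx
      rw [pow_succ'] at hx
      obtain ⟨y, hy, z, hz, hx⟩ := hx
      rw [← hx]
      exact concat_accepts hy (ih z hz)
  obtain ⟨k, hk, hxk⟩ := hx
  obtain ⟨k, rfl⟩ := Nat.exists_eq_add_of_le hk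
  exact key k x (by rwa [Nat.add_comm] at hxk)

theorem accepts_subset_posClosure {M : NFA α σ} {x : List α}
    (hx : x ∈ (posNFA M).accepts) : x ∈ posClosure M.accepts := by
  have key : ∀ {x : List α} {s t : σ}, Run (posNFA M) s x t → t ∈ M.accept →
      ∃ y z, x = y ++ z ∧ (∃ t' ∈ M.accept, Run M s y t') ∧
        ∃ k, z ∈ M.accepts ^ k := by
    intro x s t h
    induction h with
    | nil s => exact fun hacc => ⟨[], [], rfl, ⟨s, hacc, Run.nil s⟩, 0, by
        rw [pow_zero]; exact (Language.mem_one _).2 rfl⟩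
    | @cons s u t a x hstep _ ih =>
      intro hacc
      obtain ⟨y, z, hx, ⟨t', ht', hyrun⟩, k, hz⟩ := ih hacc
      rcases hstep with h1 | ⟨hs, q, hq, h2⟩
      · exact ⟨a :: y, z, by simp [hx], ⟨t', ht', Run.cons h1 hyrun⟩, k, hz⟩
      · refine ⟨[], a :: x, rfl, ⟨s, hs, Run.nil s⟩, k + 1, ?_⟩
        rw [pow_succ']
        refine ⟨a :: y, ?_, z, hz, by simp [hx]⟩
        exact mem_accepts_iff_run.2 ⟨q, hq, t', ht', Run.cons h2 hyrun⟩
  obtain ⟨s, hs, t, ht, hrun⟩ := mem_accepts_iff_run.1 hx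
  obtain ⟨y, z, hxyz, ⟨t', ht', hyrun⟩, k, hz⟩ := key hrun ht
  refine ⟨k + 1, by omega, ?_⟩
  rw [hxyz, pow_succ']
  exact ⟨y, mem_accepts_iff_run.2 ⟨s, hs, t', ht', hyrun⟩, z, hz, rfl⟩

/-- Product NFA for intersection. -/
def prodNFA (M₁ : NFA α σ₁) (M₂ : NFA α σ₂) : NFA α (σ₁ × σ₂) where
  step p a := M₁.step p.1 a ×ˢ M₂.step p.2 a
  start := M₁.start ×ˢ M₂.start
  accept := M₁.accept ×ˢ M₂.accept

theorem run_prod_iff {M₁ : NFA α σ₁} {M₂ : NFA α σ₂} {x : List α}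
    {s₁ t₁ : σ₁} {s₂ t₂ : σ₂} :
    Run (prodNFA M₁ M₂) (s₁, s₂) x (t₁, t₂) ↔ Run M₁ s₁ x t₁ ∧ Run M₂ s₂ x t₂ := by
  constructor
  · intro h
    have key : ∀ (p q : σ₁ × σ₂) (y : List α), Run (prodNFA M₁ M₂) p y q →
        Run M₁ p.1 y q.1 ∧ Run M₂ p.2 y q.2 := by
      intro p q y hy
      induction hy with
      | nil => exact ⟨Run.nil _, Run.nil _⟩
      | cons hstep _ ih => exact ⟨Run.cons hstep.1 ih.1, Run.cons hstep.2 ih.2⟩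
    exact key _ _ _ h
  · rintro ⟨h1, h2⟩
    induction x generalizing s₁ s₂ with
    | nil => cases h1; cases h2; exact Run.nil _
    | cons a x ih =>
      cases h1 with
      | cons hstep1 htail1 =>
        cases h2 with
        | cons hstep2 htail2 =>
          exact Run.cons (Set.mk_mem_prod hstep1 hstep2) (ih htail1 htail2)

end NfaPosAux

/-- If `L₁` is accepted by an NFA with `m` states and `L₂` by an NFA with `n`
states, and `L₁⁺ ∩ L₂⁺` is nonempty, then `L₁⁺ ∩ L₂⁺` contains a string of
length at most `m·n − 1`. -/
theorem nfa_posClosure_intersection_shortest_string {α σ₁ σ₂ : Type*}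
    [Fintype σ₁] [Fintype σ₂] (M₁ : NFA α σ₁) (M₂ : NFA α σ₂)
    (h : ∃ x, x ∈ posClosure M₁.accepts ∧ x ∈ posClosure M₂.accepts) :
    ∃ x, x ∈ posClosure M₁.accepts ∧ x ∈ posClosure M₂.accepts ∧
      x.length ≤ Fintype.card σ₁ * Fintype.card σ₂ - 1 := by
  classical
  obtain ⟨x, hx1, hx2⟩ := h
  have ha1 : x ∈ (NfaPosAux.posNFA M₁).accepts := NfaPosAux.posClosure_subset_accepts hx1
  have ha2 : x ∈ (NfaPosAux.posNFA M₂).accepts := NfaPosAux.posClosure_subset_accepts hx2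
  obtain ⟨s₁, hs₁, t₁, ht₁, hr1⟩ := NfaPosAux.mem_accepts_iff_run.1 ha1
  obtain ⟨s₂, hs₂, t₂, ht₂, hr2⟩ := NfaPosAux.mem_accepts_iff_run.1 ha2
  have hprod : NfaPosAux.Run (NfaPosAux.prodNFA (NfaPosAux.posNFA M₁) (NfaPosAux.posNFA M₂))
      (s₁, s₂) x (t₁, t₂) := NfaPosAux.run_prod_iff.2 ⟨hr1, hr2⟩
  obtain ⟨y, hy, hylen⟩ := NfaPosAux.run_shorten x.length x le_rfl hprod
  obtain ⟨hy1, hy2⟩ := NfaPosAux.run_prod_iff.1 hy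
  have hacc1 : y ∈ (NfaPosAux.posNFA M₁).accepts :=
    NfaPosAux.mem_accepts_iff_run.2 ⟨s₁, hs₁, t₁, ht₁, hy1⟩
  have hacc2 : y ∈ (NfaPosAux.posNFA M₂).accepts :=
    NfaPosAux.mem_accepts_iff_run.2 ⟨s₂, hs₂, t₂, ht₂, hy2⟩
  refine ⟨y, NfaPosAux.accepts_subset_posClosure hacc1,
    NfaPosAux.accepts_subset_posClosure hacc2, ?_⟩
  have hcard : Fintype.card (σ₁ × σ₂) = Fintype.card σ₁ * Fintype.card σ₂ :=
    Fintype.card_prod _ _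
  omega
end

section
/- For all integers m ≥ n ≥ 1 there exist an NFA M₁ with m states accepting L₁ and an NFA M₂ with n states accepting L₂, over the two-letter alphabet {0,1}, such that L₁⁺ ∩ L₂⁺ is nonempty and every string in L₁⁺ ∩ L₂⁺ has length at least (m−1)·n. -/
/-- NFA accepting exactly the single word `0^(m-2) 1` (for `m ≥ 2`);
for `m = 1` it accepts exactly the empty word. -/
def pathNFA (m : ℕ) : NFA (Fin 2) (Fin m) where
  step := fun i a => {j | (j : ℕ) = (i : ℕ) + 1 ∧
    a = (if (i : ℕ) + 2 = m then (1 : Fin 2) else 0)}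
  start := {i | (i : ℕ) = 0}
  accept := {i | (i : ℕ) = m - 1}

/-- NFA counting the number of `1`s modulo `n`. -/
def countNFA (n : ℕ) : NFA (Fin 2) (Fin n) where
  step := fun i a => {j | (j : ℕ) = (if a = 1 then ((i : ℕ) + 1) % n else (i : ℕ))}
  start := {i | (i : ℕ) = 0}
  accept := {i | (i : ℕ) = 0}

lemma pathNFA_eval (m : ℕ) (x : List (Fin 2)) (j : Fin m) :
    j ∈ (pathNFA m).evalFrom (pathNFA m).start x ↔
      (j : ℕ) = x.length ∧ ∀ t (h : t < x.length),
        x[t]'h = (if t + 2 = m then (1 : Fin 2) else 0) := by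
  induction x using List.reverseRecOn generalizing j with
  | nil => simp [NFA.evalFrom, pathNFA]
  | append_singleton x a ih =>
    rw [NFA.evalFrom_append, NFA.evalFrom_singleton, NFA.mem_stepSet]
    constructor
    · rintro ⟨i, hi, hj, ha⟩
      rw [ih] at hi
      obtain ⟨hil, hix⟩ := hi
      simp only [List.length_append, List.length_singleton]
      refine ⟨by omega, fun t h => ?_⟩
      rcases lt_or_eq_of_le (Nat.lt_succ_iff.mp h) with h' | h'
      · rw [List.getElem_append_left h']
        exact hix t h'
      · subst h'
        rw [List.getElem_append_right (le_refl _)]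
        simpa [hil] using ha
    · rintro ⟨hjl, hx⟩
      simp only [List.length_append, List.length_singleton] at hjl
      have hxm : x.length < m := by have := j.isLt; omega
      refine ⟨⟨x.length, hxm⟩, ?_, ?_, ?_⟩
      · rw [ih]
        refine ⟨rfl, fun t h => ?_⟩
        have := hx t (by simp; omega)
        rwa [List.getElem_append_left h] at this
      · simpa using hjl
      · have := hx x.length (by simp)
        rw [List.getElem_append_right (le_refl _)] at this
        simpa using this

/-- the unique word accepted by `pathNFA m` -/
def pathWord (m : ℕ) : List (Fin 2) :=
  List.ofFn (n := m - 1) fun t => if (t : ℕ) + 2 = m then (1 : Fin 2) else 0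

lemma pathNFA_accepts (m : ℕ) (hm : 1 ≤ m) :
    (pathNFA m).accepts = {pathWord m} := by
  ext x
  rw [NFA.mem_accepts]
  constructor
  · rintro ⟨j, hj, hje⟩
    replace hj : (j : ℕ) = m - 1 := hj
    rw [pathNFA_eval] at hje
    obtain ⟨hjl, hx⟩ := hje
    have hlen : x.length = m - 1 := by omega
    have : x = pathWord m := by
      apply List.ext_getElem
      · simp [pathWord, hlen]
      · intro t h1 h2
        rw [hx t h1]
        simp [pathWord]
    exact this
  · rintro rfl
    have hl : (pathWord m).length = m - 1 := by simp [pathWord]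
    refine ⟨⟨m - 1, by omega⟩, rfl, ?_⟩
    rw [pathNFA_eval]
    refine ⟨by simp [hl], fun t h => ?_⟩
    simp only [pathWord] at h ⊢
    rw [List.getElem_ofFn]

lemma countNFA_eval (n : ℕ) (hn : 1 ≤ n) (x : List (Fin 2)) :
    ∀ (c : ℕ) (j : Fin n),
      (j ∈ (countNFA n).evalFrom {i | (i : ℕ) = c % n} x ↔
        (j : ℕ) = (c + x.count 1) % n) := by
  induction x with
  | nil =>
    intro c j
    simp [NFA.evalFrom, Nat.mod_mod_of_dvd]
  | cons a x ih =>
    intro c j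
    have hstep : (countNFA n).stepSet {i : Fin n | (i : ℕ) = c % n} a =
        {i : Fin n | (i : ℕ) = (c + if a = 1 then 1 else 0) % n} := by
      ext s
      rw [NFA.mem_stepSet]
      constructor
      · rintro ⟨t, ht, hs⟩
        replace ht : (t : ℕ) = c % n := ht
        replace hs : (s : ℕ) = (if a = 1 then ((t : ℕ) + 1) % n else (t : ℕ)) := hs
        show (s : ℕ) = _
        split_ifs with h <;> simp [h, ht, Nat.add_mod] at hs ⊢ <;> omega
      · intro hs
        replace hs : (s : ℕ) = (c + if a = 1 then 1 else 0) % n := hs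
        refine ⟨⟨c % n, Nat.mod_lt _ hn⟩, rfl, ?_⟩
        show (s : ℕ) = _
        split_ifs with h <;> simp [h, Nat.add_mod] at hs ⊢ <;> omega
    have : (countNFA n).evalFrom {i | (i : ℕ) = c % n} (a :: x) =
        (countNFA n).evalFrom ({i : Fin n | (i : ℕ) = (c + if a = 1 then 1 else 0) % n}) x := by
      simp only [NFA.evalFrom, List.foldl_cons, hstep]
    rw [this, ih]
    have : (a :: x).count 1 = (if a = 1 then 1 else 0) + x.count 1 := by
      by_cases h : a = 1 <;> simp [List.count_cons, h, Nat.add_comm]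
    rw [this]
    constructor <;> intro h <;> rw [h] <;> ring_nf

lemma countNFA_accepts (n : ℕ) (hn : 1 ≤ n) (x : List (Fin 2)) :
    x ∈ (countNFA n).accepts ↔ n ∣ x.count 1 := by
  rw [NFA.mem_accepts]
  have hstart : (countNFA n).start = {i : Fin n | (i : ℕ) = 0 % n} := by
    simp [countNFA, Nat.zero_mod]
  constructor
  · rintro ⟨j, hj, hje⟩
    rw [hstart] at hje
    rw [countNFA_eval n hn x 0 j] at hje
    replace hj : (j : ℕ) = 0 := hj
    rw [hj] at hje
    simpa [Nat.dvd_iff_mod_eq_zero] using hje.symm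
  · intro h
    refine ⟨⟨0, hn⟩, rfl, ?_⟩
    rw [hstart, countNFA_eval n hn x 0]
    obtain ⟨c, hc⟩ := h
    show (0 : ℕ) = _
    simp [hc, Nat.mul_mod_right]

lemma pathWord_eq (m : ℕ) (hm : 2 ≤ m) :
    pathWord m = List.replicate (m - 2) 0 ++ [1] := by
  apply List.ext_getElem
  · simp [pathWord]; omega
  · intro t h1 h2
    simp only [pathWord, List.length_ofFn] at h1
    simp only [pathWord]
    rw [List.getElem_ofFn]
    by_cases ht : t < m - 2
    · rw [List.getElem_append_left (by simpa using ht)]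
      simp only [List.getElem_replicate]
      rw [if_neg (by omega)]
    · have ht' : t = m - 2 := by omega
      rw [List.getElem_append_right (by simp; omega)]
      simp only [List.length_replicate]
      rw [if_pos (by omega)]
      simp [ht']

lemma pathWord_count (m : ℕ) (hm : 2 ≤ m) : (pathWord m).count 1 = 1 := by
  rw [pathWord_eq m hm]
  simp [List.count_append, List.count_replicate]

lemma count_dvd_of_posClosure {n : ℕ} (hn : 1 ≤ n) (x : List (Fin 2))
    (hx : x ∈ posClosure (countNFA n).accepts) : n ∣ x.count 1 := by
  obtain ⟨k, hk, hxk⟩ := hx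
  rw [Language.mem_pow] at hxk
  obtain ⟨S, rfl, hSl, hS⟩ := hxk
  rw [List.count_flatten]
  apply List.dvd_sum
  intro c hc
  simp only [List.mem_map] at hc
  obtain ⟨y, hy, rfl⟩ := hc
  exact (countNFA_accepts n hn y).1 (hS y hy)

lemma posClosure_path {m : ℕ} (hm : 1 ≤ m) (x : List (Fin 2))
    (hx : x ∈ posClosure (pathNFA m).accepts) :
    ∃ k, 1 ≤ k ∧ x = (List.replicate k (pathWord m)).flatten := by
  obtain ⟨k, hk, hxk⟩ := hx
  rw [pathNFA_accepts m hm, Language.mem_pow] at hxk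
  obtain ⟨S, rfl, hSl, hS⟩ := hxk
  refine ⟨k, hk, ?_⟩
  rw [← hSl, ← List.eq_replicate_of_mem (a := pathWord m) (l := S) (fun b hb => hS b hb)]

/-- For all `m ≥ n ≥ 1` there exist NFAs over the two-letter alphabet with `m`
and `n` states respectively such that `L₁⁺ ∩ L₂⁺` is nonempty and every string
in `L₁⁺ ∩ L₂⁺` has length at least `(m−1)·n`. -/
theorem nfa_posClosure_intersection_lower_bound (m n : ℕ) (hn : 1 ≤ n) (hmn : n ≤ m) :
    ∃ (M₁ : NFA (Fin 2) (Fin m)) (M₂ : NFA (Fin 2) (Fin n)),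
      (∃ x, x ∈ posClosure M₁.accepts ∧ x ∈ posClosure M₂.accepts) ∧
      (∀ x, x ∈ posClosure M₁.accepts → x ∈ posClosure M₂.accepts →
        (m - 1) * n ≤ x.length) := by
  have hm : 1 ≤ m := le_trans hn hmn
  refine ⟨pathNFA m, countNFA n, ⟨(List.replicate n (pathWord m)).flatten, ?_, ?_⟩, ?_⟩
  · refine ⟨n, hn, ?_⟩
    rw [pathNFA_accepts m hm, Language.mem_pow]
    exact ⟨List.replicate n (pathWord m), rfl, by simp,
      fun y hy => by rw [List.eq_of_mem_replicate hy]; exact rfl⟩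
  · refine ⟨1, le_refl 1, ?_⟩
    rw [pow_one, countNFA_accepts n hn, List.count_flatten, List.map_replicate,
      List.sum_replicate, smul_eq_mul]
    exact Dvd.intro _ rfl
  · intro x h1 h2
    by_cases hm2 : m < 2
    · have h0 : m - 1 = 0 := by omega
      simp [h0]
    push_neg at hm2
    obtain ⟨k, hk, rfl⟩ := posClosure_path hm x h1
    have hcount : (List.replicate k (pathWord m)).flatten.count 1 = k := by
      rw [List.count_flatten, List.map_replicate, List.sum_replicate, smul_eq_mul,
        pathWord_count m hm2, mul_one]
    have hdvd := count_dvd_of_posClosure hn _ h2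
    rw [hcount] at hdvd
    have hnk : n ≤ k := Nat.le_of_dvd hk hdvd
    have hlen : (List.replicate k (pathWord m)).flatten.length = k * (m - 1) := by
      rw [List.length_flatten, List.map_replicate, List.sum_replicate, smul_eq_mul]
      simp [pathWord]
    rw [hlen]
    calc (m - 1) * n ≤ (m - 1) * k := Nat.mul_le_mul_left _ hnk
    _ = k * (m - 1) := Nat.mul_comm _ _
end

section
/- Let M₁ be a DFA with m states and M₂ a DFA with n states over the same alphabet, where m, n ≥ 2. If L(M₁)⁺ ∩ L(M₂)⁺ is nonempty, then the shortest string in L(M₁)⁺ ∩ L(M₂)⁺ has length strictly less than m·n − 1. -/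
namespace PCAux

variable {α σ σ₁ σ₂ : Type*}

/-- One step of the "reset NFA" for `L(M)⁺`: either a normal DFA step, or,
if the current state is accepting, a step from the start state. -/
def rstep (M : DFA α σ) (p : σ) (a : α) (q : σ) : Prop :=
  q = M.step p a ∨ (p ∈ M.accept ∧ q = M.step M.start a)

/-- A run of the reset NFA. -/
inductive RWalk (M : DFA α σ) : σ → List α → σ → Prop
  | nil (p : σ) : RWalk M p [] p
  | cons {p : σ} {a : α} {q : σ} {x : List α} {r : σ} :
      rstep M p a q → RWalk M q x r → RWalk M p (a :: x) r

theorem RWalk.append {M : DFA α σ} {p q r : σ} {x y : List α}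
    (h1 : RWalk M p x q) (h2 : RWalk M q y r) : RWalk M p (x ++ y) r := by
  induction h1 with
  | nil => simpa using h2
  | cons hs _ ih => exact RWalk.cons hs (ih h2)

theorem rwalk_evalFrom (M : DFA α σ) (p : σ) (x : List α) :
    RWalk M p x (M.evalFrom p x) := by
  induction x generalizing p with
  | nil => exact RWalk.nil p
  | cons a t ih => exact RWalk.cons (Or.inl rfl) (ih (M.step p a))

theorem RWalk.decomp {M : DFA α σ} {p v : σ} {x : List α}
    (h : RWalk M p x v) (hv : v ∈ M.accept) :
    ∃ y z : List α, ∃ k : ℕ, x = y ++ z ∧ M.evalFrom p y ∈ M.accept ∧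
      z ∈ M.accepts ^ k := by
  induction h with
  | nil p =>
      exact ⟨[], [], 0, rfl, hv, by simp [Language.mem_one]⟩
  | @cons p a q x r hs _ ih =>
      obtain ⟨y, z, k, hx, hy, hz⟩ := ih hv
      rcases hs with hq | ⟨hp, hq⟩
      · exact ⟨a :: y, z, k, by simp [hx], by simpa [DFA.evalFrom, hq] using hy, hz⟩
      · refine ⟨[], (a :: y) ++ z, k + 1, by simp [hx], by simpa using hp, ?_⟩
        rw [pow_succ']
        refine Language.mem_mul.2 ⟨a :: y, ?_, z, hz, rfl⟩
        show M.eval (a :: y) ∈ M.accept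
        simpa [DFA.eval, DFA.evalFrom, hq] using hy

theorem RWalk.toPos {M : DFA α σ} {v : σ} {x : List α}
    (h : RWalk M M.start x v) (hv : v ∈ M.accept) :
    x ∈ posClosure M.accepts := by
  obtain ⟨y, z, k, hx, hy, hz⟩ := h.decomp hv
  refine ⟨k + 1, by omega, ?_⟩
  rw [pow_succ']
  exact Language.mem_mul.2 ⟨y, hy, z, hz, hx.symm⟩

theorem ofPow {M : DFA α σ} {x : List α} {k : ℕ} (hk : 1 ≤ k)
    (hx : x ∈ M.accepts ^ k) : ∃ v ∈ M.accept, RWalk M M.start x v := by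
  induction k generalizing x with
  | zero => omega
  | succ k ih =>
      rcases Nat.eq_or_lt_of_le hk with hk1 | hk2
      · rw [← hk1, pow_one] at hx
        exact ⟨M.eval x, hx, rwalk_evalFrom M M.start x⟩
      · rw [pow_succ, Language.mem_mul] at hx
        obtain ⟨y, hy, z, hz, hyz⟩ := hx
        obtain ⟨v, hv, hw⟩ := ih (by omega) hy
        cases z with
        | nil => exact ⟨v, hv, by simpa [← hyz] using hw⟩
        | cons a t =>
            refine ⟨M.eval (a :: t), hz, ?_⟩
            rw [← hyz]
            refine hw.append (RWalk.cons (Or.inr ⟨hv, rfl⟩) ?_)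
            have : M.eval (a :: t) = M.evalFrom (M.step M.start a) t := rfl
            rw [this]
            exact rwalk_evalFrom M _ t

theorem ofPos {M : DFA α σ} {x : List α} (h : x ∈ posClosure M.accepts) :
    ∃ v ∈ M.accept, RWalk M M.start x v := by
  obtain ⟨k, hk, hx⟩ := h
  exact ofPow hk hx


/-- One step of the product of the two reset NFAs. -/
def pstep (M₁ : DFA α σ₁) (M₂ : DFA α σ₂) (u : σ₁ × σ₂) (a : α) (w : σ₁ × σ₂) : Prop :=
  rstep M₁ u.1 a w.1 ∧ rstep M₂ u.2 a w.2

theorem pstep_swap {M₁ : DFA α σ₁} {M₂ : DFA α σ₂} {u w : σ₁ × σ₂} {a : α}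
    (h : pstep M₁ M₂ u a w) : pstep M₂ M₁ (u.2, u.1) a (w.2, w.1) :=
  ⟨h.2, h.1⟩

/-- Reachability in `k` steps in the product of the reset NFAs. -/
def Reach (M₁ : DFA α σ₁) (M₂ : DFA α σ₂) (k : ℕ) (u w : σ₁ × σ₂) : Prop :=
  ∃ z : ℕ → σ₁ × σ₂, z 0 = u ∧ z k = w ∧
    ∀ j < k, ∃ a, pstep M₁ M₂ (z j) a (z (j + 1))

variable {M₁ : DFA α σ₁} {M₂ : DFA α σ₂}

theorem Reach.zero (u : σ₁ × σ₂) : Reach M₁ M₂ 0 u u :=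
  ⟨fun _ => u, rfl, rfl, by omega⟩

/-- Extract a sub-run of a run. -/
theorem reach_of_run {z : ℕ → σ₁ × σ₂} {L : ℕ}
    (hsteps : ∀ j < L, ∃ a, pstep M₁ M₂ (z j) a (z (j + 1)))
    (i d : ℕ) (h : i + d ≤ L) : Reach M₁ M₂ d (z i) (z (i + d)) := by
  refine ⟨fun t => z (i + t), by simp, rfl, fun j hj => ?_⟩
  simpa [← Nat.add_assoc] using hsteps (i + j) (by omega)

theorem Reach.trans {k₁ k₂ : ℕ} {u v w : σ₁ × σ₂}
    (h1 : Reach M₁ M₂ k₁ u v) (h2 : Reach M₁ M₂ k₂ v w) :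
    Reach M₁ M₂ (k₁ + k₂) u w := by
  obtain ⟨z₁, hz10, hz1k, hs1⟩ := h1
  obtain ⟨z₂, hz20, hz2k, hs2⟩ := h2
  refine ⟨fun t => if t < k₁ then z₁ t else z₂ (t - k₁), ?_, ?_, ?_⟩
  · rcases Nat.eq_zero_or_pos k₁ with hk | hk
    · subst hk
      simpa using hz20.trans (hz1k.symm.trans hz10)
    · simpa [hk] using hz10
  · have : ¬ (k₁ + k₂ < k₁) := by omega
    simp only [this, if_false]
    have : k₁ + k₂ - k₁ = k₂ := by omega
    rw [this, hz2k]
  · intro j hj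
    by_cases hj1 : j + 1 < k₁
    · have : j < k₁ := by omega
      simp only [this, hj1, if_true]
      exact hs1 j (by omega)
    · by_cases hj2 : j < k₁
      · -- j + 1 = k₁
        have hjk : j + 1 = k₁ := by omega
        simp only [hj2, hj1, if_true, if_false]
        have h0 : j + 1 - k₁ = 0 := by omega
        rw [h0, hz20, ← hz1k, ← hjk]
        exact hs1 j (by omega)
      · simp only [hj2, hj1, if_false]
        have h1 : j + 1 - k₁ = (j - k₁) + 1 := by omega
        rw [h1]
        exact hs2 (j - k₁) (by omega)

theorem Reach.cons {k : ℕ} {u v w : σ₁ × σ₂} {a : α}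
    (h1 : pstep M₁ M₂ u a v) (h2 : Reach M₁ M₂ k v w) :
    Reach M₁ M₂ (1 + k) u w := by
  refine Reach.trans ⟨fun t => if t = 0 then u else v, rfl, rfl, ?_⟩ h2
  intro j hj
  have : j = 0 := by omega
  subst this
  exact ⟨a, by simpa using h1⟩

theorem Reach.succ_iff {k : ℕ} {u w : σ₁ × σ₂} :
    Reach M₁ M₂ (k + 1) u w ↔ ∃ a v, pstep M₁ M₂ u a v ∧ Reach M₁ M₂ k v w := by
  constructor
  · rintro ⟨z, hz0, hzk, hs⟩
    obtain ⟨a, ha⟩ := hs 0 (by omega)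
    refine ⟨a, z 1, by rwa [hz0] at ha, fun t => z (t + 1), rfl, hzk, ?_⟩
    intro j hj
    exact hs (j + 1) (by omega)
  · rintro ⟨a, v, h1, h2⟩
    have := Reach.cons h1 h2
    rwa [Nat.add_comm] at this

theorem combine {p : σ₁} {q : σ₂} {x : List α} {v : σ₁} {w : σ₂}
    (h1 : RWalk M₁ p x v) (h2 : RWalk M₂ q x w) :
    Reach M₁ M₂ x.length (p, q) (v, w) := by
  induction h1 generalizing q with
  | nil p => cases h2; exact Reach.zero _
  | @cons p a r x vv hs _ ih =>
      cases h2 with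
      | @cons _ _ q' _ _ hs2 hw2 =>
        have h := Reach.cons (M₁ := M₁) (M₂ := M₂) (u := (p, q)) (v := (r, q'))
          (show pstep M₁ M₂ (p, q) a (r, q') from ⟨hs, hs2⟩) (ih hw2)
        simpa [Nat.add_comm] using h

theorem split {k : ℕ} {u w : σ₁ × σ₂} (h : Reach M₁ M₂ k u w) :
    ∃ x : List α, x.length = k ∧ RWalk M₁ u.1 x w.1 ∧ RWalk M₂ u.2 x w.2 := by
  induction k generalizing u with
  | zero =>
      obtain ⟨z, hz0, hzk, _⟩ := h
      rw [← hz0, hzk]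
      exact ⟨[], rfl, RWalk.nil _, RWalk.nil _⟩
  | succ k ih =>
      obtain ⟨a, v, h1, h2⟩ := Reach.succ_iff.1 h
      obtain ⟨x, hx, hw1, hw2⟩ := ih h2
      exact ⟨a :: x, by simp [hx], RWalk.cons h1.1 hw1, RWalk.cons h1.2 hw2⟩



section COL
open Fintype
variable {α σ₁ σ₂ : Type*} [Fintype σ₁] [Fintype σ₂]
  {M₁ : DFA α σ₁} {M₂ : DFA α σ₂}

/-- In the extremal (Hamiltonian-geodesic) situation, the second coordinates of
the run are pairwise distinct during the first `card σ₂` steps. -/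
theorem colLemma (z : ℕ → σ₁ × σ₂) (L : ℕ) (lev : σ₁ × σ₂ → ℕ)
    (hsteps : ∀ j < L, ∃ a, pstep M₁ M₂ (z j) a (z (j + 1)))
    (hlev : ∀ u, lev u ≤ L ∧ z (lev u) = u)
    (hlevz : ∀ k ≤ L, lev (z k) = k)
    (hedge : ∀ u a v, pstep M₁ M₂ u a v → lev v ≤ lev u + 1) :
    ∀ k k', k < card σ₂ → k' < card σ₂ → (z k).2 = (z k').2 → k = k' := by
  set n := card σ₂ with hn
  -- first-visit time of a column
  set cv : σ₂ → ℕ := fun v => sInf {k | (z k).2 = v} with hcv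
  have hcvmem : ∀ v : σ₂, (z (cv v)).2 = v := by
    intro v
    have hne : {k | (z k).2 = v}.Nonempty := ⟨lev (M₁.start, v), by simp [(hlev _).2]⟩
    exact Nat.sInf_mem hne
  have hcvle : ∀ (v : σ₂) (j : ℕ), (z j).2 = v → cv v ≤ j := fun v j hj => Nat.sInf_le hj
  have hcvL : ∀ v, cv v ≤ L := by
    intro v
    exact (hcvle v (lev (M₁.start, v)) (by simp [(hlev _).2])).trans (hlev _).1
  -- the down-step property of first-visit times
  have hdownstep : ∀ v : σ₂, 1 ≤ cv v → cv ((z (cv v - 1)).2) = cv v - 1 := by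
    intro v h1
    set k := cv v with hk
    have hkL : k ≤ L := hcvL v
    obtain ⟨a, ha⟩ := hsteps (k - 1) (by omega)
    have hky : k - 1 + 1 = k := by omega
    rw [hky] at ha
    refine le_antisymm (hcvle _ _ rfl) ?_
    set t := cv ((z (k - 1)).2) with ht
    have htz : (z t).2 = (z (k - 1)).2 := hcvmem _
    have htk : t ≤ k - 1 := hcvle _ _ rfl
    have htL : t ≤ L := le_trans htk (by omega)
    -- build a step from z t into column v
    have hstep2 : pstep M₁ M₂ (z t) a (M₁.step (z t).1 a, (z k).2) := by
      constructor
      · exact Or.inl rfl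
      · have := ha.2
        rwa [← htz] at this
    have hle := hedge _ _ _ hstep2
    rw [hlevz t htL] at hle
    set s := lev (M₁.step (z t).1 a, (z k).2) with hs
    have hsz : z s = (M₁.step (z t).1 a, (z k).2) := (hlev _).2
    have hsv : (z s).2 = v := by rw [hsz]; exact hcvmem v
    have : k ≤ s := hcvle v s hsv
    omega
  -- the set of first-visit times
  have hcvinj : Function.Injective cv := by
    intro v v' hvv
    have h1 := hcvmem v
    have h2 := hcvmem v'
    rw [hvv] at h1
    rw [← h1, h2]
  classical
  set S : Finset ℕ := Finset.image cv Finset.univ with hS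
  have hScard : S.card = n := by
    rw [hS, Finset.card_image_of_injective _ hcvinj, Finset.card_univ]
  have hSdown : ∀ k ∈ S, 1 ≤ k → k - 1 ∈ S := by
    intro k hk h1
    obtain ⟨v, _, hv⟩ := Finset.mem_image.1 hk
    subst hv
    exact Finset.mem_image.2 ⟨_, Finset.mem_univ _, hdownstep v h1⟩
  have hSiter : ∀ j : ℕ, ∀ k ∈ S, j ≤ k → k - j ∈ S := by
    intro j
    induction j with
    | zero => intro k hk _; simpa using hk
    | succ j ih =>
        intro k hk hj
        have h1 : k - j ∈ S := ih k hk (by omega)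
        have h2 : 1 ≤ k - j := by omega
        have := hSdown _ h1 h2
        have he : k - j - 1 = k - (j + 1) := by omega
        rwa [he] at this
  have hSbound : ∀ k ∈ S, k < n := by
    intro k hk
    have hsub : Finset.range (k + 1) ⊆ S := by
      intro i hi
      have hi' : i < k + 1 := Finset.mem_range.1 hi
      have : k - (k - i) = i := by omega
      have h := hSiter (k - i) k hk (by omega)
      rwa [this] at h
    have := Finset.card_le_card hsub
    rw [Finset.card_range, hScard] at this
    omega
  have hSrange : S = Finset.range n := by
    apply Finset.eq_of_subset_of_card_le
    · intro k hk
      exact Finset.mem_range.2 (hSbound k hk)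
    · rw [Finset.card_range, hScard]
  have hQfix : ∀ k, k < n → cv ((z k).2) = k := by
    intro k hk
    have : k ∈ S := by rw [hSrange]; exact Finset.mem_range.2 hk
    obtain ⟨v, _, hv⟩ := Finset.mem_image.1 this
    have hz := hcvmem v
    rw [hv] at hz
    rw [hz, hv]
  intro k k' hk hk' hqq
  have h1 := hQfix k hk
  have h2 := hQfix k' hk'
  rw [hqq] at h1
  rw [h1] at h2
  exact h2

set_option maxHeartbeats 1000000 in
/-- The key asymmetric step: in the extremal situation, with `M₂.start` not
accepting, `M₁.start` is not accepting and `card σ₁ ≤ card σ₂ - 1`. -/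
theorem sideStep (z : ℕ → σ₁ × σ₂) (L : ℕ) (lev : σ₁ × σ₂ → ℕ)
    (hz0 : z 0 = (M₁.start, M₂.start))
    (hsteps : ∀ j < L, ∃ a, pstep M₁ M₂ (z j) a (z (j + 1)))
    (hlev : ∀ u, lev u ≤ L ∧ z (lev u) = u)
    (hlevz : ∀ k ≤ L, lev (z k) = k)
    (hedge : ∀ u a v, pstep M₁ M₂ u a v → lev v ≤ lev u + 1)
    (hsing : ∀ p q, p ∈ M₁.accept → q ∈ M₂.accept → (p, q) = z L)
    (haccL : (z L).1 ∈ M₁.accept ∧ (z L).2 ∈ M₂.accept)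
    (hL : L + 1 = card σ₁ * card σ₂)
    (hm : 2 ≤ card σ₁) (hn : 2 ≤ card σ₂)
    (hcol : ∀ k k', k < card σ₂ → k' < card σ₂ → (z k).2 = (z k').2 → k = k')
    (hrow : ∀ k k', k < card σ₁ → k' < card σ₁ → (z k).1 = (z k').1 → k = k')
    (hne : M₂.start ∉ M₂.accept) :
    M₁.start ∉ M₁.accept ∧ card σ₁ ≤ card σ₂ - 1 := by
  classical
  set m := card σ₁ with hmdef
  set n := card σ₂ with hndef
  have hnL : n ≤ L := by
    have : 2 * n ≤ m * n := Nat.mul_le_mul_right n hm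
    omega
  -- the second coordinates in the first n steps cover all of σ₂
  have hcolsurj : ∀ v : σ₂, ∃ c, c < n ∧ (z c).2 = v := by
    have hinj : Function.Injective (fun k : Fin n => (z (k : ℕ)).2) := by
      intro k k' hkk
      have := hcol k k' k.2 k'.2 hkk
      exact Fin.ext this
    have hsurj := (Fintype.bijective_iff_injective_and_card
      (fun k : Fin n => (z (k : ℕ)).2)).2 ⟨hinj, by simp [hndef]⟩
    intro v
    obtain ⟨k, hk⟩ := hsurj.2 v
    exact ⟨k, k.2, hk⟩
  obtain ⟨c, hcn, hcf⟩ := hcolsurj (z L).2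
  -- c ≥ 1
  have hc1 : 1 ≤ c := by
    rcases Nat.eq_zero_or_pos c with h0 | h1
    · exfalso
      rw [h0, hz0] at hcf
      have h2 := haccL.2
      rw [← hcf] at h2
      exact hne h2
    · exact h1
  -- consider the state w = ((z c).1, M₂.start)
  set w : σ₁ × σ₂ := ((z c).1, M₂.start) with hw
  set l := lev w with hl
  have hzl : z l = w := (hlev w).2
  have hlL : l ≤ L := (hlev w).1
  have hlltL : l < L := by
    rcases Nat.lt_or_ge l L with h | h
    · exact h
    · exfalso
      have : l = L := by omega
      rw [this] at hzl
      have h3 : (z L).2 = M₂.start := by rw [hzl]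
      have h2 := haccL.2
      rw [h3] at h2
      exact hne h2
  obtain ⟨a, ha⟩ := hsteps l hlltL
  -- build a step from z c to z (l+1)
  have hstep2 : pstep M₁ M₂ (z c) a (z (l + 1)) := by
    constructor
    · have h1 := ha.1
      rw [hzl] at h1
      exact h1
    · have h2 := ha.2
      rw [hzl] at h2
      have h2' : (z (l + 1)).2 = M₂.step M₂.start a := by
        rcases h2 with h | ⟨_, h⟩ <;> exact h
      exact Or.inr ⟨by rw [hcf]; exact haccL.2, h2'⟩
  have hlec : l + 1 ≤ c + 1 := by
    have := hedge _ _ _ hstep2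
    rw [hlevz (l + 1) (by omega), hlevz c (by omega)] at this
    exact this
  have hl0 : l = 0 := by
    have hln : l < n := by omega
    have : (z l).2 = (z 0).2 := by rw [hzl, hz0]
    exact hcol l 0 hln (by omega) this
  -- hence (z c).1 = M₁.start
  have hzc1 : (z c).1 = M₁.start := by
    rw [hl0] at hzl
    rw [hz0] at hzl
    have := congrArg Prod.fst hzl
    simpa [hw] using this.symm
  constructor
  · -- M₁.start accepting would make z c accepting, contradiction
    intro hs1
    have hzcL : z c = z L := by
      have h := hsing M₁.start (z L).2 hs1 haccL.2
      rw [← hzc1, ← hcf] at h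
      rw [← h]
    have : c = L := by
      have h1 := hlevz c (by omega)
      have h2 := hlevz L (le_refl L)
      rw [hzcL] at h1
      omega
    omega
  · -- row revisit forces c ≥ m
    have hcg : ¬ c < m := by
      intro hcm
      have : (z c).1 = (z 0).1 := by rw [hzc1, hz0]
      have := hrow c 0 hcm (by omega) this
      omega
    omega

set_option maxHeartbeats 1000000 in
/-- Main product-level theorem: if some accepting pair is reachable, one is
reachable in at most `m·n − 2` steps. -/
theorem main
    (hm : 2 ≤ card σ₁) (hn : 2 ≤ card σ₂)
    (hne : ∃ (k : ℕ) (w : σ₁ × σ₂), (w.1 ∈ M₁.accept ∧ w.2 ∈ M₂.accept) ∧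
      Reach M₁ M₂ k (M₁.start, M₂.start) w) :
    ∃ (k : ℕ) (w : σ₁ × σ₂), k + 2 ≤ card σ₁ * card σ₂ ∧
      (w.1 ∈ M₁.accept ∧ w.2 ∈ M₂.accept) ∧
      Reach M₁ M₂ k (M₁.start, M₂.start) w := by
  classical
  set m := card σ₁ with hmdef
  set n := card σ₂ with hndef
  have h4 : 4 ≤ m * n := by
    calc (4 : ℕ) = 2 * 2 := by norm_num
    _ ≤ m * n := Nat.mul_le_mul hm hn
  set α₀ : σ₁ × σ₂ := (M₁.start, M₂.start) with hα₀
  set K : Set ℕ := {k | ∃ w : σ₁ × σ₂, (w.1 ∈ M₁.accept ∧ w.2 ∈ M₂.accept) ∧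
    Reach M₁ M₂ k α₀ w} with hK
  have hKne : K.Nonempty := by
    obtain ⟨k, w, hacc, hr⟩ := hne
    exact ⟨k, w, hacc, hr⟩
  set L := sInf K with hLdef
  have hLK : L ∈ K := Nat.sInf_mem hKne
  have hmin : ∀ k ∈ K, L ≤ k := fun k hk => Nat.sInf_le hk
  by_cases hsmall : L + 2 ≤ m * n
  · obtain ⟨w, hacc, hr⟩ := hLK
    exact ⟨L, w, hsmall, hacc, hr⟩
  exfalso
  obtain ⟨w, hwacc, z, hz0, hzL, hsteps⟩ := hLK
  -- geodesic property
  have hgeo : ∀ (u : σ₁ × σ₂) (k : ℕ), Reach M₁ M₂ k α₀ u →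
      ∀ j ≤ L, z j = u → j ≤ k := by
    intro u k hr j hj hzj
    have h2 := reach_of_run hsteps j (L - j) (by omega)
    rw [hzj, show j + (L - j) = L by omega, hzL] at h2
    have h3 : (k + (L - j)) ∈ K := ⟨w, hwacc, hr.trans h2⟩
    have := hmin _ h3
    omega
  have hpre : ∀ j ≤ L, Reach M₁ M₂ j α₀ (z j) := by
    intro j hj
    have := reach_of_run hsteps 0 j (by omega)
    rw [hz0] at this
    simpa using this
  have hinj : ∀ j ≤ L, ∀ j' ≤ L, z j = z j' → j = j' := by
    intro j hj j' hj' hzz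
    have h1 := hgeo (z j) j (hpre j hj) j' hj' hzz.symm
    have h2 := hgeo (z j') j' (hpre j' hj') j hj hzz
    omega
  have hinjf : Function.Injective (fun i : Fin (L + 1) => z (i : ℕ)) := by
    intro i i' hii
    exact Fin.ext (hinj i (by omega) i' (by omega) hii)
  have hcard : L + 1 ≤ m * n := by
    have := Fintype.card_le_of_injective _ hinjf
    simpa [Fintype.card_prod] using this
  have hL1 : L + 1 = m * n := by omega
  have hsurjf := (Fintype.bijective_iff_injective_and_card
    (fun i : Fin (L + 1) => z (i : ℕ))).2 ⟨hinjf, by simp [Fintype.card_prod, ← hL1]; exact hL1⟩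
  have hsurj : ∀ u : σ₁ × σ₂, ∃ j, j ≤ L ∧ z j = u := by
    intro u
    obtain ⟨i, hi⟩ := hsurjf.2 u
    exact ⟨(i : ℕ), by omega, hi⟩
  choose levf hlevf1 hlevf2 using hsurj
  have hlev : ∀ u, levf u ≤ L ∧ z (levf u) = u := fun u => ⟨hlevf1 u, hlevf2 u⟩
  have hlevz : ∀ k ≤ L, levf (z k) = k := by
    intro k hk
    exact hinj _ (hlevf1 _) _ hk (hlevf2 _)
  have hedge : ∀ (u : σ₁ × σ₂) (a : α) (v : σ₁ × σ₂),
      pstep M₁ M₂ u a v → levf v ≤ levf u + 1 := by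
    intro u a v hpp
    have h1 : Reach M₁ M₂ (levf u) α₀ u := by
      have := hpre (levf u) (hlevf1 u)
      rwa [hlevf2 u] at this
    have hstep1 : Reach M₁ M₂ 1 u v := by
      have := Reach.cons hpp (Reach.zero v)
      simpa using this
    have h2 : Reach M₁ M₂ (levf u + 1) α₀ v := h1.trans hstep1
    exact hgeo v _ h2 (levf v) (hlevf1 v) (hlevf2 v)
  have hsing : ∀ (p : σ₁) (q : σ₂), p ∈ M₁.accept → q ∈ M₂.accept →
      (p, q) = z L := by
    intro p q hp hq
    have h1 : Reach M₁ M₂ (levf (p, q)) α₀ (p, q) := by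
      have := hpre (levf (p, q)) (hlevf1 _)
      rwa [hlevf2 _] at this
    have h2 : L ≤ levf (p, q) := hmin _ ⟨(p, q), ⟨hp, hq⟩, h1⟩
    have h3 : levf (p, q) = L := by have := hlevf1 (p, q); omega
    rw [← h3, hlevf2]
  have haccL : (z L).1 ∈ M₁.accept ∧ (z L).2 ∈ M₂.accept := by
    rw [hzL]; exact hwacc
  -- swapped data
  set z' : ℕ → σ₂ × σ₁ := fun k => ((z k).2, (z k).1) with hz'
  set lev' : σ₂ × σ₁ → ℕ := fun u => levf (u.2, u.1) with hlev'def
  have hz0' : z' 0 = (M₂.start, M₁.start) := by simp [hz', hz0, hα₀]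
  have hsteps' : ∀ j < L, ∃ a, pstep M₂ M₁ (z' j) a (z' (j + 1)) := by
    intro j hj
    obtain ⟨a, ha⟩ := hsteps j hj
    exact ⟨a, pstep_swap ha⟩
  have hlev':  ∀ u, lev' u ≤ L ∧ z' (lev' u) = u := by
    intro u
    refine ⟨hlevf1 _, ?_⟩
    have h := hlevf2 (u.2, u.1)
    rw [hz', hlev'def]
    simp only [h]
  have hlevz' : ∀ k ≤ L, lev' (z' k) = k := by
    intro k hk
    rw [hlev'def, hz']
    simpa using hlevz k hk
  have hedge' : ∀ (u : σ₂ × σ₁) (a : α) (v : σ₂ × σ₁),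
      pstep M₂ M₁ u a v → lev' v ≤ lev' u + 1 := by
    intro u a v hpp
    exact hedge _ a _ (pstep_swap hpp)
  have hsing' : ∀ (p : σ₂) (q : σ₁), p ∈ M₂.accept → q ∈ M₁.accept →
      (p, q) = z' L := by
    intro p q hp hq
    have h2 := hsing q p hq hp
    simp [hz', ← h2]
  have haccL' : (z' L).1 ∈ M₂.accept ∧ (z' L).2 ∈ M₁.accept := ⟨haccL.2, haccL.1⟩
  have hL1' : L + 1 = card σ₂ * card σ₁ := by rw [Nat.mul_comm]; exact hL1
  -- column and row injectivity
  have hcol : ∀ k k', k < card σ₂ → k' < card σ₂ → (z k).2 = (z k').2 → k = k' :=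
    colLemma z L levf hsteps hlev hlevz hedge
  have hrow' : ∀ k k', k < card σ₁ → k' < card σ₁ → (z' k).2 = (z' k').2 → k = k' :=
    colLemma z' L lev' hsteps' hlev' hlevz' hedge'
  have hrow : ∀ k k', k < card σ₁ → k' < card σ₁ → (z k).1 = (z k').1 → k = k' := by
    intro k k' hk hk' hzz
    exact hrow' k k' hk hk' hzz
  have hcol2 : ∀ k k', k < card σ₂ → k' < card σ₂ → (z' k).1 = (z' k').1 → k = k' := by
    intro k k' hk hk' hzz
    exact hcol k k' hk hk' hzz
  -- case analysis
  by_cases h2acc : M₂.start ∈ M₂.accept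
  · by_cases h1acc : M₁.start ∈ M₁.accept
    · have h := hsing _ _ h1acc h2acc
      have h0 : z 0 = z L := hz0.trans (hα₀.trans h)
      have := hinj 0 (by omega) L (le_refl L) h0
      omega
    · obtain ⟨hcontra, _⟩ := sideStep z' L lev' hz0' hsteps' hlev' hlevz' hedge'
        hsing' haccL' hL1' hn hm hrow' hcol2 h1acc
      exact hcontra h2acc
  · obtain ⟨h1acc, hmn⟩ := sideStep z L levf hz0 hsteps hlev hlevz hedge
      hsing haccL hL1 hm hn hcol hrow h2acc
    obtain ⟨_, hnm⟩ := sideStep z' L lev' hz0' hsteps' hlev' hlevz' hedge'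
      hsing' haccL' hL1' hn hm hrow' hcol2 h1acc
    omega

end COL
end PCAux
/-- For DFAs `M₁`, `M₂` with `m, n ≥ 2` states, if `L(M₁)⁺ ∩ L(M₂)⁺` is
nonempty then it contains a string of length strictly less than `m·n − 1`. -/
theorem dfa_posClosure_intersection_shortest_string {α σ₁ σ₂ : Type*}
    [Fintype σ₁] [Fintype σ₂] (M₁ : DFA α σ₁) (M₂ : DFA α σ₂)
    (hm : 2 ≤ Fintype.card σ₁) (hn : 2 ≤ Fintype.card σ₂)
    (h : ∃ x, x ∈ posClosure M₁.accepts ∧ x ∈ posClosure M₂.accepts) :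
    ∃ x, x ∈ posClosure M₁.accepts ∧ x ∈ posClosure M₂.accepts ∧
      x.length < Fintype.card σ₁ * Fintype.card σ₂ - 1 := by
  obtain ⟨x, hx1, hx2⟩ := h
  obtain ⟨v₁, hv₁, hw₁⟩ := PCAux.ofPos hx1
  obtain ⟨v₂, hv₂, hw₂⟩ := PCAux.ofPos hx2
  have hr := PCAux.combine hw₁ hw₂
  have hne : ∃ (k : ℕ) (w : σ₁ × σ₂),
      (w.1 ∈ M₁.accept ∧ w.2 ∈ M₂.accept) ∧
      PCAux.Reach M₁ M₂ k (M₁.start, M₂.start) w :=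
    ⟨x.length, (v₁, v₂), ⟨hv₁, hv₂⟩, hr⟩
  obtain ⟨k, w, hk, hacc, hreach⟩ := PCAux.main hm hn hne
  obtain ⟨y, hylen, hyw1, hyw2⟩ := PCAux.split hreach
  refine ⟨y, PCAux.RWalk.toPos hyw1 hacc.1, PCAux.RWalk.toPos hyw2 hacc.2, ?_⟩
  have h4 : 4 ≤ Fintype.card σ₁ * Fintype.card σ₂ := by
    calc (4 : ℕ) = 2 * 2 := by norm_num
    _ ≤ Fintype.card σ₁ * Fintype.card σ₂ := Nat.mul_le_mul hm hn
  omega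
end

section
/- Define G'(m,n) = max over pairs (i,j) with 1 ≤ i ≤ m, 1 ≤ j ≤ n and (i,j) ≠ (m,n) of lcm(i,j). If M₁ and M₂ are NFAs over a one-letter alphabet with m and n states respectively, accepting L₁ and L₂, and L₁⁺ ∩ L₂⁺ is nonempty, then the shortest string in L₁⁺ ∩ L₂⁺ has length at most G'(m,n). -/
/-- `G'(m,n) = max_{1 ≤ i ≤ m, 1 ≤ j ≤ n, (i,j) ≠ (m,n)} lcm(i,j)`. -/
def Gprime (m n : ℕ) : ℕ :=
  ((Finset.Icc 1 m ×ˢ Finset.Icc 1 n).erase (m, n)).sup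
    fun p => Nat.lcm p.1 p.2

namespace UnaryNFAAux

/-- Path characterization of `evalFrom` on unary strings. -/
lemma mem_evalFrom_replicate {σ : Type*} (M : NFA (Fin 1) σ) (S : Set σ) :
    ∀ (ℓ : ℕ) (q : σ), q ∈ M.evalFrom S (List.replicate ℓ 0) ↔
      ∃ f : ℕ → σ, f 0 ∈ S ∧ (∀ t, t < ℓ → f (t + 1) ∈ M.step (f t) 0) ∧ f ℓ = q := by
  intro ℓ
  induction ℓ with
  | zero =>
    intro q
    rw [List.replicate_zero, NFA.evalFrom_nil]
    constructor
    · intro hq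
      exact ⟨fun _ => q, hq, fun t ht => absurd ht (Nat.not_lt_zero t), rfl⟩
    · rintro ⟨f, h0, -, rfl⟩
      exact h0
  | succ n ih =>
    intro q
    rw [List.replicate_succ', NFA.evalFrom_append, NFA.evalFrom_singleton, NFA.mem_stepSet]
    constructor
    · rintro ⟨p, hp, hq⟩
      obtain ⟨f, h0, htr, hend⟩ := (ih p).1 hp
      refine ⟨fun x => if x ≤ n then f x else q, by simpa using h0, ?_, by simp⟩
      intro t ht
      rcases Nat.lt_or_ge t n with hc | hc
      · simp only [if_pos hc.le, if_pos (Nat.succ_le_of_lt hc)]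
        exact htr t hc
      · have ht' : t = n := Nat.le_antisymm (Nat.lt_succ_iff.mp ht) hc
        subst ht'
        simpa [Nat.not_succ_le_self, hend] using hq
    · rintro ⟨f, h0, htr, hend⟩
      refine ⟨f n, (ih (f n)).2 ⟨f, h0, fun t ht => htr t (Nat.lt_succ_of_lt ht), rfl⟩, ?_⟩
      rw [← hend]
      exact htr n (Nat.lt_succ_self n)

/-- Path characterization of acceptance on unary strings. -/
lemma mem_accepts_replicate {σ : Type*} (M : NFA (Fin 1) σ) (ℓ : ℕ) :
    List.replicate ℓ (0 : Fin 1) ∈ M.accepts ↔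
      ∃ f : ℕ → σ, f 0 ∈ M.start ∧ (∀ t, t < ℓ → f (t + 1) ∈ M.step (f t) 0) ∧
        f ℓ ∈ M.accept := by
  rw [NFA.mem_accepts]
  constructor
  · rintro ⟨q, hq, hmem⟩
    obtain ⟨f, h0, ht, he⟩ := (mem_evalFrom_replicate M M.start ℓ q).1 hmem
    refine ⟨f, h0, ht, ?_⟩
    rw [he]; exact hq
  · rintro ⟨f, h0, ht, he⟩
    exact ⟨f ℓ, he, (mem_evalFrom_replicate M M.start ℓ (f ℓ)).2 ⟨f, h0, ht, rfl⟩⟩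

/-- Pumping lemma for unary NFAs: a long accepted string can be shortened by a
cycle of length at most the number of states. -/
lemma pump {σ : Type*} [Fintype σ] (M : NFA (Fin 1) σ) {ℓ : ℕ}
    (h : List.replicate ℓ (0 : Fin 1) ∈ M.accepts) (hℓ : Fintype.card σ ≤ ℓ) :
    ∃ c, 1 ≤ c ∧ c ≤ Fintype.card σ ∧
      List.replicate (ℓ - c) (0 : Fin 1) ∈ M.accepts := by
  set m := Fintype.card σ with hm
  obtain ⟨f, h0, ht, he⟩ := (mem_accepts_replicate M ℓ).1 h
  have hcard : Fintype.card σ < Fintype.card (Fin (m + 1)) := by simp [hm]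
  obtain ⟨x, y, hxy, hfxy⟩ :=
    Fintype.exists_ne_map_eq_of_card_lt (fun i : Fin (m + 1) => f i) hcard
  have hvne : (x : ℕ) ≠ (y : ℕ) := fun hv => hxy (Fin.val_injective hv)
  -- wlog x < y
  obtain ⟨s, t, hst, hfst⟩ : ∃ s t : ℕ, s < t ∧ t ≤ m ∧ f s = f t := by
    rcases Nat.lt_or_ge (x : ℕ) (y : ℕ) with hc | hc
    · exact ⟨x, y, hc, Nat.lt_succ_iff.mp y.isLt, hfxy⟩
    · exact ⟨y, x, lt_of_le_of_ne hc (Ne.symm hvne), Nat.lt_succ_iff.mp x.isLt, hfxy.symm⟩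
  obtain ⟨htm, hfst⟩ := hfst
  set c := t - s with hc
  have hc1 : 1 ≤ c := by omega
  have hcm : c ≤ m := by omega
  have hcl : c ≤ ℓ := by omega
  set g : ℕ → σ := fun u => if u < s then f u else f (u + c) with hg
  have hle : ∀ v, v ≤ s → g v = f v := by
    intro v hv
    rcases Nat.lt_or_ge v s with h' | h'
    · simp [hg, h']
    · have hvs : v = s := le_antisymm hv h'
      subst hvs
      have : v + c = t := by omega
      simp [hg, this, ← hfst]
  refine ⟨c, hc1, hcm, (mem_accepts_replicate M (ℓ - c)).2 ⟨g, ?_, ?_, ?_⟩⟩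
  · rw [hle 0 (Nat.zero_le s)]; exact h0
  · intro u hu
    rcases Nat.lt_or_ge u s with h' | h'
    · rw [hle u h'.le, hle (u + 1) h']
      exact ht u (by omega)
    · have h1 : ¬ u < s := not_lt.mpr h'
      have h2 : ¬ u + 1 < s := by omega
      simp only [hg, if_neg h1, if_neg h2]
      have : u + 1 + c = u + c + 1 := by omega
      rw [this]
      exact ht (u + c) (by omega)
  · have h1 : ¬ ℓ - c < s := by omega
    simp only [hg, if_neg h1]
    have : ℓ - c + c = ℓ := by omega
    rw [this]
    exact he

/-- There is a short positive accepted length, and if it equals the number of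
states then the empty string is also accepted. -/
lemma exists_small {σ : Type*} [Fintype σ] (M : NFA (Fin 1) σ)
    (hA : ∃ ℓ, 1 ≤ ℓ ∧ List.replicate ℓ (0 : Fin 1) ∈ M.accepts) :
    ∃ a, 1 ≤ a ∧ a ≤ Fintype.card σ ∧ List.replicate a (0 : Fin 1) ∈ M.accepts ∧
      (a ≠ Fintype.card σ ∨ [] ∈ M.accepts) := by
  classical
  obtain ⟨ha1, hamem⟩ := Nat.find_spec hA
  set a := Nat.find hA with ha
  rcases Nat.lt_or_ge a (Fintype.card σ) with hlt | hge
  · exact ⟨a, ha1, hlt.le, hamem, Or.inl hlt.ne⟩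
  · obtain ⟨c, hc1, hcm, hmem⟩ := pump M hamem hge
    have hmin : ¬ (1 ≤ a - c ∧ List.replicate (a - c) (0 : Fin 1) ∈ M.accepts) :=
      Nat.find_min hA (show a - c < a by omega)
    have hac : a - c = 0 := by
      by_contra h'
      exact hmin ⟨by omega, hmem⟩
    have ham : a = Fintype.card σ := by omega
    have hnil : ([] : List (Fin 1)) ∈ M.accepts := by
      rw [hac] at hmem
      simpa using hmem
    exact ⟨a, ha1, ham.le, hamem, Or.inr hnil⟩

lemma flatten_replicate_replicate (a k : ℕ) :
    (List.replicate k (List.replicate a (0 : Fin 1))).flatten =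
      List.replicate (k * a) (0 : Fin 1) := by
  induction k with
  | zero => simp
  | succ j ih =>
    rw [List.replicate_succ, List.flatten_cons, ih]
    rw [show (j + 1) * a = a + j * a by ring, List.replicate_add]

/-- Multiples of accepted lengths are in the positive closure. -/
lemma repl_mul_mem {L : Language (Fin 1)} {a : ℕ}
    (h : List.replicate a (0 : Fin 1) ∈ L) {k : ℕ} (hk : 1 ≤ k) :
    List.replicate (k * a) (0 : Fin 1) ∈ posClosure L := by
  refine ⟨k, hk, Language.mem_pow.2
    ⟨List.replicate k (List.replicate a (0 : Fin 1)), ?_, by simp, ?_⟩⟩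
  · rw [flatten_replicate_replicate]
  · intro y hy
    rw [List.eq_of_mem_replicate hy]
    exact h

/-- The lcm of two positive accepted lengths is in both positive closures. -/
lemma repl_lcm_mem {L : Language (Fin 1)} {a b : ℕ} (ha : 1 ≤ a) (hb : 1 ≤ b)
    (h : List.replicate a (0 : Fin 1) ∈ L) :
    List.replicate (Nat.lcm a b) (0 : Fin 1) ∈ posClosure L := by
  have hpos : 0 < Nat.lcm a b := Nat.lcm_pos ha hb
  have hdvd : a ∣ Nat.lcm a b := Nat.dvd_lcm_left a b
  have hk : 1 ≤ Nat.lcm a b / a := Nat.one_le_div_iff ha |>.2 (Nat.le_of_dvd hpos hdvd)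
  have heq : Nat.lcm a b / a * a = Nat.lcm a b := Nat.div_mul_cancel hdvd
  have := repl_mul_mem h hk
  rwa [heq] at this

/-- From a nonempty element of the positive closure extract a positive length
in the base language. -/
lemma exists_pos_of_posClosure {L : Language (Fin 1)} {x : List (Fin 1)}
    (hx : x ∈ posClosure L) (hne : x ≠ []) :
    ∃ ℓ, 1 ≤ ℓ ∧ List.replicate ℓ (0 : Fin 1) ∈ L := by
  obtain ⟨k, hk, hmem⟩ := hx
  obtain ⟨S, rfl, hlen, hS⟩ := Language.mem_pow.1 hmem
  have hy : ∃ y ∈ S, y ≠ ([] : List (Fin 1)) := by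
    by_contra hcon
    push_neg at hcon
    exact hne (List.flatten_eq_nil_iff.2 hcon)
  obtain ⟨y, hyS, hy⟩ := hy
  have hyr : y = List.replicate y.length (0 : Fin 1) :=
    List.eq_replicate_length.2 fun b _ => Subsingleton.elim b 0
  refine ⟨y.length, ?_, ?_⟩
  · have : y.length ≠ 0 := fun h0 => hy (List.length_eq_zero_iff.1 h0)
    omega
  · rw [← hyr]
    exact hS y hyS

end UnaryNFAAux

/-- For unary NFAs with `m` and `n` states, if `L₁⁺ ∩ L₂⁺` is nonempty then
the shortest string in `L₁⁺ ∩ L₂⁺` has length at most `G'(m,n)`. -/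
theorem unary_nfa_posClosure_intersection_shortest_string {σ₁ σ₂ : Type*}
    [Fintype σ₁] [Fintype σ₂] (M₁ : NFA (Fin 1) σ₁) (M₂ : NFA (Fin 1) σ₂)
    (h : ∃ x, x ∈ posClosure M₁.accepts ∧ x ∈ posClosure M₂.accepts) :
    ∃ x, x ∈ posClosure M₁.accepts ∧ x ∈ posClosure M₂.accepts ∧
      x.length ≤ Gprime (Fintype.card σ₁) (Fintype.card σ₂) := by
  classical
  obtain ⟨x₀, hx1, hx2⟩ := h
  by_cases hx0 : x₀ = []
  · exact ⟨x₀, hx1, hx2, by simp [hx0]⟩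
  · obtain ⟨a, ha1, ham, haL, haOr⟩ :=
      UnaryNFAAux.exists_small M₁ (UnaryNFAAux.exists_pos_of_posClosure hx1 hx0)
    obtain ⟨b, hb1, hbn, hbL, hbOr⟩ :=
      UnaryNFAAux.exists_small M₂ (UnaryNFAAux.exists_pos_of_posClosure hx2 hx0)
    by_cases hab : (a, b) = (Fintype.card σ₁, Fintype.card σ₂)
    · -- both are full cycles; the empty string is in both languages
      have hae : a = Fintype.card σ₁ := (Prod.mk.injEq _ _ _ _ ▸ hab).1
      have hbe : b = Fintype.card σ₂ := (Prod.mk.injEq _ _ _ _ ▸ hab).2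
      have h1 : ([] : List (Fin 1)) ∈ M₁.accepts := by
        rcases haOr with h' | h'
        · exact absurd hae h'
        · exact h'
      have h2 : ([] : List (Fin 1)) ∈ M₂.accepts := by
        rcases hbOr with h' | h'
        · exact absurd hbe h'
        · exact h'
      refine ⟨[], ⟨1, le_refl 1, by rwa [pow_one]⟩, ⟨1, le_refl 1, by rwa [pow_one]⟩, by simp⟩
    · refine ⟨List.replicate (Nat.lcm a b) (0 : Fin 1), ?_, ?_, ?_⟩
      · exact UnaryNFAAux.repl_lcm_mem ha1 hb1 haL
      · rw [Nat.lcm_comm]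
        exact UnaryNFAAux.repl_lcm_mem hb1 ha1 hbL
      · rw [List.length_replicate]
        exact Finset.le_sup (f := fun p : ℕ × ℕ => Nat.lcm p.1 p.2)
          (Finset.mem_erase.2 ⟨hab, Finset.mem_product.2
            ⟨Finset.mem_Icc.2 ⟨ha1, ham⟩, Finset.mem_Icc.2 ⟨hb1, hbn⟩⟩⟩)
end

section
/- Define G'(m,n) = max over pairs (i,j) with 1 ≤ i ≤ m, 1 ≤ j ≤ n and (i,j) ≠ (m,n) of lcm(i,j). For all m, n ≥ 1 there exist DFAs M₁ and M₂ over a one-letter alphabet, with exactly m and n states respectively, such that L(M₁)⁺ ∩ L(M₂)⁺ is nonempty and the shortest string in L(M₁)⁺ ∩ L(M₂)⁺ has length exactly G'(m,n). -/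
/-- A unary DFA on `Fin s` that counts mod `c`, starting at residue `r`. -/
def modDFA (s c r : ℕ) (hc : 1 ≤ c) (hcs : c ≤ s) (hr : r < s) : DFA (Fin 1) (Fin s) where
  step q _ := ⟨(q.val + 1) % c, lt_of_lt_of_le (Nat.mod_lt _ hc) hcs⟩
  start := ⟨r, hr⟩
  accept := {⟨0, lt_of_lt_of_le hc hcs⟩}

lemma unary_evalFrom {σ : Type*} (M : DFA (Fin 1) σ) (q : σ) (x : List (Fin 1)) :
    M.evalFrom q x = (fun p => M.step p 0)^[x.length] q := by
  induction x generalizing q with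
  | nil => rfl
  | cons a x ih =>
    have ha : a = 0 := Subsingleton.elim a 0
    rw [DFA.evalFrom, List.foldl_cons, ← DFA.evalFrom, ih, ha,
      List.length_cons, Function.iterate_succ_apply]

lemma modDFA_iterate (s c r : ℕ) (hc : 1 ≤ c) (hcs : c ≤ s) (hr : r < s) (t : ℕ) (ht : 1 ≤ t) :
    ((fun p => (modDFA s c r hc hcs hr).step p 0)^[t] (modDFA s c r hc hcs hr).start).val
      = (r + t) % c := by
  induction t with
  | zero => omega
  | succ t ih =>
    rcases Nat.eq_or_lt_of_le ht with h1 | h1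
    · simp [← h1, modDFA]
    · rw [Function.iterate_succ_apply']
      have := ih (by omega)
      simp only [modDFA] at this ⊢
      rw [this, Nat.mod_add_mod, ← Nat.add_assoc]

lemma modDFA_accepts (s c r : ℕ) (hc : 1 ≤ c) (hcs : c ≤ s) (hr : r < s) (x : List (Fin 1)) :
    x ∈ (modDFA s c r hc hcs hr).accepts ↔
      (x.length = 0 ∧ r = 0) ∨ (1 ≤ x.length ∧ c ∣ (r + x.length)) := by
  rw [DFA.mem_accepts, DFA.eval, unary_evalFrom]
  have hmem : (((fun p => (modDFA s c r hc hcs hr).step p 0)^[x.length]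
      (modDFA s c r hc hcs hr).start) ∈ (modDFA s c r hc hcs hr).accept) ↔
      ((fun p => (modDFA s c r hc hcs hr).step p 0)^[x.length]
        (modDFA s c r hc hcs hr).start).val = 0 := by
    show _ ∈ ({_} : Set _) ↔ _
    rw [Set.mem_singleton_iff, Fin.ext_iff]
  rw [hmem]
  rcases Nat.eq_zero_or_pos x.length with h | h
  · rw [h]
    simp only [Function.iterate_zero, id]
    show r = 0 ↔ _
    constructor
    · intro h0; exact Or.inl ⟨by simp, h0⟩
    · rintro (⟨-, h0⟩ | ⟨h1, -⟩)
      · exact h0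
      · omega
  · rw [modDFA_iterate s c r hc hcs hr x.length h]
    constructor
    · intro h0
      exact Or.inr ⟨h, Nat.dvd_iff_mod_eq_zero.mpr h0⟩
    · rintro (⟨h0, -⟩ | ⟨-, hd⟩)
      · omega
      · exact Nat.dvd_iff_mod_eq_zero.mp hd

/-- tail DFA: start at residue `c`; accepts exactly positive multiples of `c`. -/
lemma tail_accepts (m c : ℕ) (hc : 1 ≤ c) (hcm : c < m) (x : List (Fin 1)) :
    x ∈ (modDFA m c c hc (le_of_lt hcm) hcm).accepts ↔ 1 ≤ x.length ∧ c ∣ x.length := by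
  rw [modDFA_accepts]
  constructor
  · rintro (⟨-, h0⟩ | ⟨h1, hd⟩)
    · omega
    · exact ⟨h1, (Nat.dvd_add_right dvd_rfl).mp hd⟩
  · rintro ⟨h1, hd⟩
    exact Or.inr ⟨h1, (Nat.dvd_add_right dvd_rfl).mpr hd⟩

/-- cycle DFA: start at residue `0`; accepts exactly multiples of `c` (incl. `ε`). -/
lemma cycle_accepts (n c : ℕ) (hc : 1 ≤ c) (hcn : c ≤ n) (x : List (Fin 1)) :
    x ∈ (modDFA n c 0 hc hcn (by omega)).accepts ↔ c ∣ x.length := by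
  rw [modDFA_accepts]
  constructor
  · rintro (⟨h0, -⟩ | ⟨-, hd⟩)
    · simp [h0]
    · simpa using hd
  · intro hd
    rcases Nat.eq_zero_or_pos x.length with h | h
    · exact Or.inl ⟨h, rfl⟩
    · exact Or.inr ⟨h, by simpa using hd⟩

lemma mem_posClosure_iff {α : Type*} {L : Language α} {x : List α} :
    x ∈ posClosure L ↔ ∃ k : ℕ, 1 ≤ k ∧ x ∈ L ^ k := Iff.rfl

lemma posClosure_tail (m c : ℕ) (hc : 1 ≤ c) (hcm : c < m) (x : List (Fin 1)) :
    x ∈ posClosure (modDFA m c c hc (le_of_lt hcm) hcm).accepts ↔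
      1 ≤ x.length ∧ c ∣ x.length := by
  constructor
  · rintro ⟨k, hk, hx⟩
    obtain ⟨S, rfl, hlen, hS⟩ := Language.mem_pow.mp hx
    simp only [tail_accepts] at hS
    refine ⟨?_, ?_⟩
    · obtain ⟨y, S', rfl⟩ : ∃ y S', S = y :: S' := by
        cases S with
        | nil => simp at hlen; omega
        | cons a b => exact ⟨a, b, rfl⟩
      have h1 := (hS y (by simp)).1
      rw [List.flatten_cons, List.length_append]
      omega
    · rw [List.length_flatten]
      refine List.dvd_sum ?_
      intro l hl
      obtain ⟨y, hy, rfl⟩ := List.mem_map.mp hl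
      exact (hS y hy).2
  · rintro ⟨h1, hd⟩
    exact ⟨1, le_refl 1, by rw [pow_one]; exact (tail_accepts m c hc hcm x).mpr ⟨h1, hd⟩⟩

lemma posClosure_cycle (n c : ℕ) (hc : 1 ≤ c) (hcn : c ≤ n) (x : List (Fin 1)) :
    x ∈ posClosure (modDFA n c 0 hc hcn (by omega)).accepts ↔ c ∣ x.length := by
  constructor
  · rintro ⟨k, hk, hx⟩
    obtain ⟨S, rfl, hlen, hS⟩ := Language.mem_pow.mp hx
    simp only [cycle_accepts] at hS
    rw [List.length_flatten]
    refine List.dvd_sum ?_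
    intro l hl
    obtain ⟨y, hy, rfl⟩ := List.mem_map.mp hl
    exact hS y hy
  · intro hd
    exact ⟨1, le_refl 1, by rw [pow_one]; exact (cycle_accepts n c hc hcn x).mpr hd⟩

lemma key (m n i j : ℕ) (hi1 : 1 ≤ i) (him : i < m) (hj1 : 1 ≤ j) (hjn : j ≤ n) :
    ∃ (M₁ : DFA (Fin 1) (Fin m)) (M₂ : DFA (Fin 1) (Fin n)),
      (∃ x, x ∈ posClosure M₁.accepts ∧ x ∈ posClosure M₂.accepts ∧
        x.length = Nat.lcm i j) ∧
      (∀ x, x ∈ posClosure M₁.accepts → x ∈ posClosure M₂.accepts →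
        Nat.lcm i j ≤ x.length) := by
  refine ⟨modDFA m i i hi1 (le_of_lt him) him, modDFA n j 0 hj1 hjn (by omega), ?_, ?_⟩
  · refine ⟨List.replicate (Nat.lcm i j) 0, ?_, ?_, List.length_replicate⟩
    · rw [posClosure_tail, List.length_replicate]
      exact ⟨Nat.le_of_dvd (Nat.pos_of_ne_zero (Nat.lcm_ne_zero (by omega) (by omega)))
        (Nat.dvd_lcm_left i j) |>.trans' hi1, Nat.dvd_lcm_left i j⟩
    · rw [posClosure_cycle, List.length_replicate]
      exact Nat.dvd_lcm_right i j
  · intro x hx1 hx2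
    rw [posClosure_tail] at hx1
    rw [posClosure_cycle] at hx2
    exact Nat.le_of_dvd (by omega) (Nat.lcm_dvd hx1.2 hx2)

/-- For all `m, n ≥ 1` there exist unary DFAs with `m` and `n` states such
that `L(M₁)⁺ ∩ L(M₂)⁺` is nonempty and its shortest string has length exactly
`G'(m,n)`. -/
theorem unary_dfa_posClosure_intersection_shortest_string_tight (m n : ℕ)
    (hm : 1 ≤ m) (hn : 1 ≤ n) :
    ∃ (M₁ : DFA (Fin 1) (Fin m)) (M₂ : DFA (Fin 1) (Fin n)),
      (∃ x, x ∈ posClosure M₁.accepts ∧ x ∈ posClosure M₂.accepts ∧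
        x.length = Gprime m n) ∧
      (∀ x, x ∈ posClosure M₁.accepts → x ∈ posClosure M₂.accepts →
        Gprime m n ≤ x.length) := by
  by_cases htriv : m = 1 ∧ n = 1
  · obtain ⟨rfl, rfl⟩ := htriv
    have hG : Gprime 1 1 = 0 := by decide
    refine ⟨⟨fun q _ => q, 0, Set.univ⟩, ⟨fun q _ => q, 0, Set.univ⟩, ⟨[], ?_, ?_, by simp [hG]⟩,
      fun x _ _ => by simp [hG]⟩ <;>
    exact ⟨1, le_refl 1, by rw [pow_one]; exact Set.mem_univ _⟩
  · have hne : ((Finset.Icc 1 m ×ˢ Finset.Icc 1 n).erase (m, n)).Nonempty := by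
      rcases Nat.lt_or_ge m 2 with h2 | h2
      · have hn2 : 2 ≤ n := by omega
        refine ⟨(m, 1), Finset.mem_erase.mpr ⟨?_, ?_⟩⟩
        · intro h; simp at h; omega
        · simp [Finset.mem_product]; omega
      · refine ⟨(1, n), Finset.mem_erase.mpr ⟨?_, ?_⟩⟩
        · intro h; simp at h; omega
        · simp [Finset.mem_product]; omega
    obtain ⟨p, hp, hsup⟩ := Finset.exists_mem_eq_sup _ hne (fun p => Nat.lcm p.1 p.2)
    rw [Finset.mem_erase, Finset.mem_product, Finset.mem_Icc, Finset.mem_Icc] at hp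
    obtain ⟨hpne, ⟨hi1, him⟩, hj1, hjn⟩ := hp
    have hG : Gprime m n = Nat.lcm p.1 p.2 := hsup
    have hcase : p.1 < m ∨ p.2 < n := by
      by_contra h
      push_neg at h
      exact hpne (Prod.ext (by omega) (by omega))
    rcases hcase with h | h
    · obtain ⟨M₁, M₂, he, hl⟩ := key m n p.1 p.2 hi1 h hj1 hjn
      exact ⟨M₁, M₂, by rw [hG]; exact he, by rw [hG]; exact hl⟩
    · obtain ⟨M₂, M₁, he, hl⟩ := key n m p.2 p.1 hj1 h hi1 him
      rw [Nat.lcm_comm] at he hl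
      refine ⟨M₁, M₂, ?_, ?_⟩
      · obtain ⟨x, h1, h2, h3⟩ := he
        exact ⟨x, h2, h1, by rw [hG]; exact h3⟩
      · intro x h1 h2
        rw [hG]; exact hl x h2 h1
end

section
/- Let L₁ and L₂ be regular languages over a finite alphabet Σ. Then the language L = ⋃_{k ≥ 1} (L₁^k ∩ L₂^k) is context-free. -/
namespace MPCF
variable {α σ₁ σ₂ : Type}

inductive Trace (M₁ : DFA α σ₁) (M₂ : DFA α σ₂) :
    σ₁ × σ₂ → List α → ℤ → ℕ → σ₁ × σ₂ → Prop
  | nil (c) : Trace M₁ M₂ c [] 0 0 c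
  | letter {c' w d n} (t : α) (p : σ₁) (q : σ₂)
      (h : Trace M₁ M₂ (M₁.step p t, M₂.step q t) w d n c') :
      Trace M₁ M₂ (p, q) (t :: w) d (n + 1) c'
  | acut {c' w d n} (p : σ₁) (q : σ₂) (hp : p ∈ M₁.accept)
      (h : Trace M₁ M₂ (M₁.start, q) w d n c') :
      Trace M₁ M₂ (p, q) w (d + 1) (n + 1) c'
  | bcut {c' w d n} (p : σ₁) (q : σ₂) (hq : q ∈ M₂.accept)
      (h : Trace M₁ M₂ (p, M₂.start) w d n c') :
      Trace M₁ M₂ (p, q) w (d - 1) (n + 1) c'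

variable {M₁ : DFA α σ₁} {M₂ : DFA α σ₂}

lemma Trace.cast {c c' w} {d d' : ℤ} {n n' : ℕ} (h : Trace M₁ M₂ c w d n c')
    (hd : d = d') (hn : n = n') : Trace M₁ M₂ c w d' n' c' := hd ▸ hn ▸ h

lemma Trace.append {c e c' w w' d d' n n'} (h : Trace M₁ M₂ c w d n e)
    (h' : Trace M₁ M₂ e w' d' n' c') :
    Trace M₁ M₂ c (w ++ w') (d + d') (n + n') c' := by
  induction h with
  | nil => simpa using h'
  | letter t p q _ ih => exact (Trace.letter t p q (ih h')).cast rfl (by omega)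
  | acut p q hp _ ih => exact (Trace.acut p q hp (ih h')).cast (by ring) (by omega)
  | bcut p q hq _ ih => exact (Trace.bcut p q hq (ih h')).cast (by ring) (by omega)

lemma split_neg : ∀ (N : ℕ) {c w d n c'}, n ≤ N → Trace M₁ M₂ c w d n c' → d < 0 →
    ∃ w₁ w₂ p₂ q₂ n₁ n₂, w = w₁ ++ w₂ ∧ q₂ ∈ M₂.accept ∧
      Trace M₁ M₂ c w₁ 0 n₁ (p₂, q₂) ∧
      Trace M₁ M₂ (p₂, M₂.start) w₂ (d + 1) n₂ c' ∧ n₁ + n₂ < n := by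
  intro N
  induction N with
  | zero =>
    intro c w d n c' hn h hd
    cases h with
    | nil => omega
    | letter t p q h => omega
    | acut p q hp h => omega
    | bcut p q hq h => omega
  | succ N ih =>
    intro c w d n c' hn h hd
    cases h with
    | nil => omega
    | letter t p q h =>
      obtain ⟨w₁, w₂, p₂, q₂, n₁, n₂, rfl, hq₂, h1, h2, hlt⟩ :=
        ih (by omega) h hd
      exact ⟨t :: w₁, w₂, p₂, q₂, n₁ + 1, n₂, rfl, hq₂,
        Trace.letter t p q h1, h2, by omega⟩
    | @acut _ w d₀ n₀ p q hp h =>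
      obtain ⟨x₁, x₂, p₂, q₂, m₁, m₂, rfl, hq₂, h1, h2, hlt⟩ :=
        ih (by omega) h (by omega)
      obtain ⟨y₁, y₂, p₃, q₃, k₁, k₂, rfl, hq₃, h3, h4, hlt'⟩ :=
        ih (by omega) h2 (by omega)
      refine ⟨x₁ ++ y₁, y₂, p₃, q₃, m₁ + (k₁ + 1) + 1, k₂, by simp, hq₃,
        (Trace.acut p q hp (h1.append (Trace.bcut p₂ q₂ hq₂ h3))).cast (by ring) rfl,
        h4.cast (by ring) rfl, by omega⟩
    | @bcut _ w d₀ n₀ p q hq h =>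
      exact ⟨[], w, p, q, 0, n₀, rfl, hq, Trace.nil _, h.cast (by ring) rfl, by omega⟩

lemma split_pos : ∀ (N : ℕ) {c w d n c'}, n ≤ N → Trace M₁ M₂ c w d n c' → 0 < d →
    ∃ w₁ w₂ p₂ q₂ n₁ n₂, w = w₁ ++ w₂ ∧ p₂ ∈ M₁.accept ∧
      Trace M₁ M₂ c w₁ 0 n₁ (p₂, q₂) ∧
      Trace M₁ M₂ (M₁.start, q₂) w₂ (d - 1) n₂ c' ∧ n₁ + n₂ < n := by
  intro N
  induction N with
  | zero =>
    intro c w d n c' hn h hd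
    cases h with
    | nil => omega
    | letter t p q h => omega
    | acut p q hp h => omega
    | bcut p q hq h => omega
  | succ N ih =>
    intro c w d n c' hn h hd
    cases h with
    | nil => omega
    | letter t p q h =>
      obtain ⟨w₁, w₂, p₂, q₂, n₁, n₂, rfl, hp₂, h1, h2, hlt⟩ :=
        ih (by omega) h hd
      exact ⟨t :: w₁, w₂, p₂, q₂, n₁ + 1, n₂, rfl, hp₂,
        Trace.letter t p q h1, h2, by omega⟩
    | @bcut _ w d₀ n₀ p q hq h =>
      obtain ⟨x₁, x₂, p₂, q₂, m₁, m₂, rfl, hp₂, h1, h2, hlt⟩ :=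
        ih (by omega) h (by omega)
      obtain ⟨y₁, y₂, p₃, q₃, k₁, k₂, rfl, hp₃, h3, h4, hlt'⟩ :=
        ih (by omega) h2 (by omega)
      refine ⟨x₁ ++ y₁, y₂, p₃, q₃, m₁ + (k₁ + 1) + 1, k₂, by simp, hp₃,
        (Trace.bcut p q hq (h1.append (Trace.acut p₂ q₂ hp₂ h3))).cast (by ring) rfl,
        h4.cast (by ring) rfl, by omega⟩
    | @acut _ w d₀ n₀ p q hp h =>
      exact ⟨[], w, p, q, 0, n₀, rfl, hp, Trace.nil _, h.cast (by ring) rfl, by omega⟩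


inductive Bal (M₁ : DFA α σ₁) (M₂ : DFA α σ₂) :
    σ₁ × σ₂ → List α → σ₁ × σ₂ → Prop
  | nil (c) : Bal M₁ M₂ c [] c
  | letter {c' w} (t : α) (p : σ₁) (q : σ₂)
      (h : Bal M₁ M₂ (M₁.step p t, M₂.step q t) w c') :
      Bal M₁ M₂ (p, q) (t :: w) c'
  | ab {w w' c'} (p : σ₁) (q : σ₂) (p₂ : σ₁) (q₂ : σ₂)
      (hp : p ∈ M₁.accept) (hq₂ : q₂ ∈ M₂.accept)
      (h₁ : Bal M₁ M₂ (M₁.start, q) w (p₂, q₂))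
      (h₂ : Bal M₁ M₂ (p₂, M₂.start) w' c') :
      Bal M₁ M₂ (p, q) (w ++ w') c'
  | ba {w w' c'} (p : σ₁) (q : σ₂) (p₂ : σ₁) (q₂ : σ₂)
      (hq : q ∈ M₂.accept) (hp₂ : p₂ ∈ M₁.accept)
      (h₁ : Bal M₁ M₂ (p, M₂.start) w (p₂, q₂))
      (h₂ : Bal M₁ M₂ (M₁.start, q₂) w' c') :
      Bal M₁ M₂ (p, q) (w ++ w') c'

lemma Bal.trace {c c' w} (h : Bal M₁ M₂ c w c') : ∃ n, Trace M₁ M₂ c w 0 n c' := by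
  induction h with
  | nil c => exact ⟨0, Trace.nil c⟩
  | letter t p q _ ih =>
    obtain ⟨n, hn⟩ := ih
    exact ⟨n + 1, Trace.letter t p q hn⟩
  | ab p q p₂ q₂ hp hq₂ _ _ ih₁ ih₂ =>
    obtain ⟨n₁, h₁⟩ := ih₁
    obtain ⟨n₂, h₂⟩ := ih₂
    exact ⟨n₁ + (n₂ + 1) + 1,
      (Trace.acut p q hp (h₁.append (Trace.bcut p₂ q₂ hq₂ h₂))).cast (by ring) rfl⟩
  | ba p q p₂ q₂ hq hp₂ _ _ ih₁ ih₂ =>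
    obtain ⟨n₁, h₁⟩ := ih₁
    obtain ⟨n₂, h₂⟩ := ih₂
    exact ⟨n₁ + (n₂ + 1) + 1,
      (Trace.bcut p q hq (h₁.append (Trace.acut p₂ q₂ hp₂ h₂))).cast (by ring) rfl⟩

lemma Trace.bal' : ∀ (N : ℕ) {c w d n c'}, n ≤ N → Trace M₁ M₂ c w d n c' → d = 0 →
    Bal M₁ M₂ c w c' := by
  intro N
  induction N with
  | zero =>
    intro c w d n c' hn h hd
    cases h with
    | nil => exact Bal.nil _
    | letter t p q h => omega
    | acut p q hp h => omega
    | bcut p q hq h => omega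
  | succ N ih =>
    intro c w d n c' hn h hd
    cases h with
    | nil => exact Bal.nil _
    | letter t p q h => exact Bal.letter t p q (ih (by omega) h hd)
    | @acut _ w d₀ n₀ p q hp h =>
      obtain ⟨w₁, w₂, p₂, q₂, n₁, n₂, rfl, hq₂, h1, h2, hlt⟩ :=
        split_neg n₀ le_rfl h (by omega)
      exact Bal.ab p q p₂ q₂ hp hq₂ (ih (by omega) h1 rfl)
        (ih (by omega) h2 (by omega))
    | @bcut _ w d₀ n₀ p q hq h =>
      obtain ⟨w₁, w₂, p₂, q₂, n₁, n₂, rfl, hp₂, h1, h2, hlt⟩ :=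
        split_pos n₀ le_rfl h (by omega)
      exact Bal.ba p q p₂ q₂ hq hp₂ (ih (by omega) h1 rfl)
        (ih (by omega) h2 (by omega))


lemma Trace.bal {c w n c'} (h : Trace M₁ M₂ c w 0 n c') : Bal M₁ M₂ c w c' :=
  Trace.bal' n le_rfl h rfl


/-- From an accepting trace, extract the two factorizations. -/
lemma Trace.factor {c w d n c'} (h : Trace M₁ M₂ c w d n c')
    (hp' : c'.1 ∈ M₁.accept) (hq' : c'.2 ∈ M₂.accept) :
    ∃ (u : List α) (a : List (List α)) (v : List α) (b : List (List α)),
      w = u ++ a.flatten ∧ w = v ++ b.flatten ∧ (a.length : ℤ) - b.length = d ∧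
      M₁.evalFrom c.1 u ∈ M₁.accept ∧ (∀ x ∈ a, x ∈ M₁.accepts) ∧
      M₂.evalFrom c.2 v ∈ M₂.accept ∧ (∀ x ∈ b, x ∈ M₂.accepts) := by
  induction h with
  | nil c =>
    exact ⟨[], [], [], [], by simp, by simp, by simp, by simpa using hp',
      by simp, by simpa using hq', by simp⟩
  | letter t p q h ih =>
    obtain ⟨u, a, v, b, h1, h2, h3, h4, h5, h6, h7⟩ := ih hp' hq'
    exact ⟨t :: u, a, t :: v, b, by simp [h1], by simp [h2], h3,
      by simpa using h4, h5, by simpa using h6, h7⟩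
  | acut p q hp h ih =>
    obtain ⟨u, a, v, b, h1, h2, h3, h4, h5, h6, h7⟩ := ih hp' hq'
    refine ⟨[], u :: a, v, b, by simp [h1], h2, by simp only [List.length_cons]; push_cast; omega,
      by simpa using hp, ?_, h6, h7⟩
    intro x hx
    rcases List.mem_cons.mp hx with rfl | hx
    · exact (DFA.mem_accepts _).mpr h4
    · exact h5 x hx
  | bcut p q hq h ih =>
    obtain ⟨u, a, v, b, h1, h2, h3, h4, h5, h6, h7⟩ := ih hp' hq'
    refine ⟨u, a, [], v :: b, h1, by simp [h2], by simp only [List.length_cons]; push_cast; omega,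
      h4, h5, by simpa using hq, ?_⟩
    intro x hx
    rcases List.mem_cons.mp hx with rfl | hx
    · exact (DFA.mem_accepts _).mpr h6
    · exact h7 x hx


lemma Trace.letters : ∀ (u : List α) (p : σ₁) (q : σ₂),
    Trace M₁ M₂ (p, q) u 0 u.length (M₁.evalFrom p u, M₂.evalFrom q u) := by
  intro u
  induction u with
  | nil => intro p q; exact Trace.nil _
  | cons t u ih =>
    intro p q
    simpa [DFA.evalFrom] using Trace.letter t p q (ih (M₁.step p t) (M₂.step q t))

lemma Trace.bcuts : ∀ (b : List (List α)), b.flatten = [] →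
    (∀ x ∈ b, x ∈ M₂.accepts) → ∀ (p : σ₁) (q : σ₂), q ∈ M₂.accept →
    ∃ n q', q' ∈ M₂.accept ∧ Trace M₁ M₂ (p, q) [] (0 - b.length) n (p, q') := by
  intro b
  induction b with
  | nil => intro _ _ p q hq; exact ⟨0, q, hq, (Trace.nil _).cast (by simp) rfl⟩
  | cons x b ih =>
    intro hflat hmem p q hq
    rw [List.flatten_cons, List.append_eq_nil_iff] at hflat
    have hs : M₂.start ∈ M₂.accept := by
      have := hmem x (by simp)
      rw [hflat.1] at this
      simpa [DFA.mem_accepts] using this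
    obtain ⟨n, q', hq', ht⟩ := ih hflat.2 (fun y hy => hmem y (by simp [hy])) p M₂.start hs
    exact ⟨n + 1, q', hq', (Trace.bcut p q hq ht).cast (by push_cast [List.length_cons]; ring) rfl⟩

lemma Trace.acuts : ∀ (a : List (List α)), a.flatten = [] →
    (∀ x ∈ a, x ∈ M₁.accepts) → ∀ (p : σ₁) (q : σ₂), p ∈ M₁.accept →
    ∃ n p', p' ∈ M₁.accept ∧ Trace M₁ M₂ (p, q) [] ((a.length : ℤ)) n (p', q) := by
  intro a
  induction a with
  | nil => intro _ _ p q hp; exact ⟨0, p, hp, (Trace.nil _).cast (by simp) rfl⟩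
  | cons x a ih =>
    intro hflat hmem p q hp
    rw [List.flatten_cons, List.append_eq_nil_iff] at hflat
    have hs : M₁.start ∈ M₁.accept := by
      have := hmem x (by simp)
      rw [hflat.1] at this
      simpa [DFA.mem_accepts] using this
    obtain ⟨n, p', hp', ht⟩ := ih hflat.2 (fun y hy => hmem y (by simp [hy])) M₁.start q hs
    exact ⟨n + 1, p', hp', (Trace.acut p q hp ht).cast (by push_cast [List.length_cons]; ring) rfl⟩

/-- Build a trace from a pair of factorizations. -/
lemma build : ∀ (m : ℕ) (a b : List (List α)) (u v : List α) (p : σ₁) (q : σ₂),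
    a.length + b.length ≤ m →
    u ++ a.flatten = v ++ b.flatten →
    M₁.evalFrom p u ∈ M₁.accept → (∀ x ∈ a, x ∈ M₁.accepts) →
    M₂.evalFrom q v ∈ M₂.accept → (∀ x ∈ b, x ∈ M₂.accepts) →
    ∃ n p' q', p' ∈ M₁.accept ∧ q' ∈ M₂.accept ∧
      Trace M₁ M₂ (p, q) (u ++ a.flatten) ((a.length : ℤ) - b.length) n (p', q') := by
  intro m
  induction m with
  | zero =>
    intro a b u v p q hm heq hu ha hv hb
    obtain rfl : a = [] := by simpa using (by omega : a.length = 0)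
    obtain rfl : b = [] := by simpa using (by omega : b.length = 0)
    simp only [List.flatten_nil, List.append_nil] at heq
    subst heq
    rw [List.flatten_nil, List.append_nil]
    exact ⟨u.length, _, _, hu, hv, (Trace.letters u p q).cast (by norm_num) rfl⟩
  | succ m ih =>
    intro a b u v p q hm heq hu ha hv hb
    rcases List.append_eq_append_iff.mp heq with ⟨t, rfl, hta⟩ | ⟨t, rfl, htb⟩
    · -- v = u ++ t, a.flatten = t ++ b.flatten
      cases a with
      | nil =>
        simp only [List.flatten_nil] at hta
        obtain ⟨rfl, hbf⟩ := List.append_eq_nil_iff.mp hta.symm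
        rw [List.append_nil] at hv
        obtain ⟨n, q', hq', ht⟩ := Trace.bcuts b hbf hb (M₁.evalFrom p u) (M₂.evalFrom q u) hv
        refine ⟨u.length + n, _, q', hu, hq', ?_⟩
        have h2 := (Trace.letters u p q).append ht
        rw [List.append_nil] at h2
        rw [List.flatten_nil, List.append_nil]
        exact h2.cast (by norm_num) rfl
      | cons x a =>
        have hx : M₁.evalFrom M₁.start x ∈ M₁.accept := by
          have := ha x (by simp); exact (DFA.mem_accepts _).mp this
        have hv' : M₂.evalFrom (M₂.evalFrom q u) t ∈ M₂.accept := by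
          rwa [← DFA.evalFrom_of_append]
        rw [List.flatten_cons] at hta
        obtain ⟨n, p', q', hp', hq', ht⟩ :=
          ih a b x t M₁.start (M₂.evalFrom q u)
            (by simp only [List.length_cons] at hm; omega)
            hta hx (fun y hy => ha y (by simp [hy])) hv' hb
        refine ⟨u.length + (n + 1), p', q', hp', hq', ?_⟩
        have h2 := (Trace.letters u p q).append (Trace.acut _ _ hu ht)
        rw [List.flatten_cons]
        exact h2.cast (by push_cast [List.length_cons]; ring) rfl
    · -- u = v ++ t, b.flatten = t ++ a.flatten
      cases b with
      | nil =>
        simp only [List.flatten_nil] at htb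
        obtain ⟨rfl, haf⟩ := List.append_eq_nil_iff.mp htb.symm
        rw [List.append_nil] at hu
        obtain ⟨n, p', hp', ht⟩ := Trace.acuts a haf ha (M₁.evalFrom p v) (M₂.evalFrom q v) hu
        refine ⟨v.length + n, p', _, hp', hv, ?_⟩
        have h2 := (Trace.letters v p q).append ht
        rw [List.append_nil] at h2
        rw [List.append_nil, haf, List.append_nil]
        exact h2.cast (by norm_num) rfl
      | cons y b =>
        have hy : M₂.evalFrom M₂.start y ∈ M₂.accept := by
          have := hb y (by simp); exact (DFA.mem_accepts _).mp this
        have hu' : M₁.evalFrom (M₁.evalFrom p v) t ∈ M₁.accept := by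
          rwa [← DFA.evalFrom_of_append]
        rw [List.flatten_cons] at htb
        obtain ⟨n, p', q', hp', hq', ht⟩ :=
          ih a b t y (M₁.evalFrom p v) M₂.start
            (by simp only [List.length_cons] at hm; omega)
            htb.symm hu' ha hy (fun z hz => hb z (by simp [hz]))
        refine ⟨v.length + (n + 1), p', q', hp', hq', ?_⟩
        have h2 := (Trace.letters v p q).append (Trace.bcut _ _ hv ht)
        rw [List.append_assoc]
        exact h2.cast (by push_cast [List.length_cons]; ring) rfl


lemma bal_iff_mem {w : List α} :
    (∃ p' q', p' ∈ M₁.accept ∧ q' ∈ M₂.accept ∧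
      Bal M₁ M₂ (M₁.start, M₂.start) w (p', q')) ↔
    ∃ k : ℕ, 1 ≤ k ∧ w ∈ M₁.accepts ^ k ∧ w ∈ M₂.accepts ^ k := by
  constructor
  · rintro ⟨p', q', hp', hq', hbal⟩
    obtain ⟨n, ht⟩ := hbal.trace
    obtain ⟨u, a, v, b, h1, h2, h3, h4, h5, h6, h7⟩ := ht.factor hp' hq'
    have hab : a.length = b.length := by omega
    refine ⟨a.length + 1, by omega, ?_, ?_⟩
    · refine Language.mem_pow.mpr ⟨u :: a, by simpa using h1, by simp, ?_⟩
      intro y hy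
      rcases List.mem_cons.mp hy with rfl | hy
      · exact (DFA.mem_accepts _).mpr h4
      · exact h5 y hy
    · refine Language.mem_pow.mpr ⟨v :: b, by simpa using h2, by simp [hab], ?_⟩
      intro y hy
      rcases List.mem_cons.mp hy with rfl | hy
      · exact (DFA.mem_accepts _).mpr h6
      · exact h7 y hy
  · rintro ⟨k, hk, hw₁, hw₂⟩
    obtain ⟨S, hS, hSl, hSm⟩ := Language.mem_pow.mp hw₁
    obtain ⟨T, hT, hTl, hTm⟩ := Language.mem_pow.mp hw₂
    cases S with
    | nil => simp at hSl; omega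
    | cons u a =>
      cases T with
      | nil => simp at hTl; omega
      | cons v b =>
        rw [List.flatten_cons] at hS hT
        obtain ⟨n, p', q', hp', hq', ht⟩ :=
          build (a.length + b.length) a b u v M₁.start M₂.start le_rfl
            (hS ▸ hT) ((DFA.mem_accepts _).mp (hSm u (by simp)))
            (fun y hy => hSm y (by simp [hy]))
            ((DFA.mem_accepts _).mp (hTm v (by simp)))
            (fun y hy => hTm y (by simp [hy]))
        have hab : a.length = b.length := by
          simp only [List.length_cons] at hSl hTl; omega
        rw [hS]
        exact ⟨p', q', hp', hq',
          Trace.bal (ht.cast (by omega : (a.length:ℤ) - b.length = 0) rfl)⟩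


section Grammar

variable (M₁ : DFA α σ₁) (M₂ : DFA α σ₂)

/-- Nonterminals: a start symbol, plus pairs of configurations. -/
abbrev NTt (σ₁ σ₂ : Type) : Type := Option ((σ₁ × σ₂) × (σ₁ × σ₂))

/-- Index type for the rules. -/
abbrev Idx (α σ₁ σ₂ : Type) : Type :=
  (((σ₁ × σ₂) × (σ₁ × σ₂)) × α) ⊕ ((σ₁ × σ₂) × (σ₁ × σ₂) × (σ₁ × σ₂)) ⊕
  ((σ₁ × σ₂) × (σ₁ × σ₂) × (σ₁ × σ₂)) ⊕ (σ₁ × σ₂) ⊕ (σ₁ × σ₂)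

/-- A harmless dummy rule `X → X`. -/
def dummy (X : NTt σ₁ σ₂) : ContextFreeRule α (NTt σ₁ σ₂) :=
  ⟨X, [Symbol.nonterminal X]⟩

open Classical in
noncomputable def ruleOf : Idx α σ₁ σ₂ → ContextFreeRule α (NTt σ₁ σ₂)
  | .inl ⟨(c, c'), t⟩ =>
      ⟨some (c, c'), [Symbol.terminal t,
        Symbol.nonterminal (some ((M₁.step c.1 t, M₂.step c.2 t), c'))]⟩
  | .inr (.inl ⟨(p, q), c', (p₂, q₂)⟩) =>
      if p ∈ M₁.accept ∧ q₂ ∈ M₂.accept then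
        ⟨some ((p, q), c'), [Symbol.nonterminal (some ((M₁.start, q), (p₂, q₂))),
          Symbol.nonterminal (some ((p₂, M₂.start), c'))]⟩
      else dummy (some ((p, q), c'))
  | .inr (.inr (.inl ⟨(p, q), c', (p₂, q₂)⟩)) =>
      if q ∈ M₂.accept ∧ p₂ ∈ M₁.accept then
        ⟨some ((p, q), c'), [Symbol.nonterminal (some ((p, M₂.start), (p₂, q₂))),
          Symbol.nonterminal (some ((M₁.start, q₂), c'))]⟩
      else dummy (some ((p, q), c'))
  | .inr (.inr (.inr (.inl c))) => ⟨some (c, c), []⟩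
  | .inr (.inr (.inr (.inr (p, q)))) =>
      if p ∈ M₁.accept ∧ q ∈ M₂.accept then
        ⟨none, [Symbol.nonterminal (some ((M₁.start, M₂.start), (p, q)))]⟩
      else dummy none

variable [Fintype α] [Fintype σ₁] [Fintype σ₂]

open Classical in
noncomputable def gram : ContextFreeGrammar α :=
  ⟨NTt σ₁ σ₂, none, Finset.univ.image (ruleOf M₁ M₂)⟩

lemma mem_rules (i : Idx α σ₁ σ₂) : ruleOf M₁ M₂ i ∈ (gram M₁ M₂).rules := by
  classical
  exact Finset.mem_image_of_mem _ (Finset.mem_univ i)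

def SemNT : NTt σ₁ σ₂ → List α → Prop
  | some (c, c'), w => Bal M₁ M₂ c w c'
  | none, w => ∃ p' q', p' ∈ M₁.accept ∧ q' ∈ M₂.accept ∧
      Bal M₁ M₂ (M₁.start, M₂.start) w (p', q')

def SemSym : Symbol α (NTt σ₁ σ₂) → List α → Prop
  | .terminal t, w => w = [t]
  | .nonterminal X, w => SemNT M₁ M₂ X w

def SemForm (s : List (Symbol α (NTt σ₁ σ₂))) (w : List α) : Prop :=
  ∃ ws : List (List α), List.Forall₂ (SemSym M₁ M₂) s ws ∧ ws.flatten = w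

end Grammar

lemma forall2_append_split {β γ : Type*} {R : β → γ → Prop} :
    ∀ {l₁ l₂ : List β} {m : List γ}, List.Forall₂ R (l₁ ++ l₂) m →
      ∃ m₁ m₂, m = m₁ ++ m₂ ∧ List.Forall₂ R l₁ m₁ ∧ List.Forall₂ R l₂ m₂ := by
  intro l₁
  induction l₁ with
  | nil => intro l₂ m h; exact ⟨[], m, rfl, List.Forall₂.nil, h⟩
  | cons x l₁ ih =>
    intro l₂ m h
    rcases h with _ | ⟨hx, h⟩
    obtain ⟨m₁, m₂, rfl, h₁, h₂⟩ := ih h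
    exact ⟨_ :: m₁, m₂, rfl, List.Forall₂.cons hx h₁, h₂⟩

lemma sem_rule (M₁ : DFA α σ₁) (M₂ : DFA α σ₂) (i : Idx α σ₁ σ₂) {u : List α}
    (h : SemForm M₁ M₂ (ruleOf M₁ M₂ i).output u) :
    SemNT M₁ M₂ (ruleOf M₁ M₂ i).input u := by
  obtain ⟨ws, hf, rfl⟩ := h
  rcases i with ⟨⟨⟨p, q⟩, c'⟩, t⟩ | ⟨⟨p, q⟩, c', p₂, q₂⟩ | ⟨⟨p, q⟩, c', p₂, q₂⟩ | c | ⟨p, q⟩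
  · simp only [ruleOf] at hf ⊢
    rcases hf with _ | ⟨h1, hf⟩
    rcases hf with _ | ⟨h2, hf⟩
    cases hf
    simp only [SemSym] at h1 h2
    subst h1
    simpa [SemNT] using Bal.letter t p q (by simpa [SemNT] using h2)
  · simp only [ruleOf] at hf ⊢
    split_ifs at hf ⊢ with hcond
    · rcases hf with _ | ⟨h1, hf⟩
      rcases hf with _ | ⟨h2, hf⟩
      cases hf
      simpa [SemNT] using Bal.ab p q p₂ q₂ hcond.1 hcond.2
        (by simpa [SemSym, SemNT] using h1) (by simpa [SemSym, SemNT] using h2)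
    · rcases hf with _ | ⟨h1, hf⟩
      cases hf
      simpa [SemSym, dummy] using h1
  · simp only [ruleOf] at hf ⊢
    split_ifs at hf ⊢ with hcond
    · rcases hf with _ | ⟨h1, hf⟩
      rcases hf with _ | ⟨h2, hf⟩
      cases hf
      simpa [SemNT] using Bal.ba p q p₂ q₂ hcond.1 hcond.2
        (by simpa [SemSym, SemNT] using h1) (by simpa [SemSym, SemNT] using h2)
    · rcases hf with _ | ⟨h1, hf⟩
      cases hf
      simpa [SemSym, dummy] using h1
  · simp only [ruleOf] at hf ⊢
    cases hf
    simpa [SemNT] using Bal.nil c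
  · simp only [ruleOf] at hf ⊢
    split_ifs at hf ⊢ with hcond
    · rcases hf with _ | ⟨h1, hf⟩
      cases hf
      exact ⟨p, q, hcond.1, hcond.2, by simpa [SemSym, SemNT] using h1⟩
    · rcases hf with _ | ⟨h1, hf⟩
      cases hf
      simpa [SemSym, dummy] using h1

variable (M₁ : DFA α σ₁) (M₂ : DFA α σ₂) [Fintype α] [Fintype σ₁] [Fintype σ₂]

lemma sem_produces {s s' : List (Symbol α (NTt σ₁ σ₂))} {w : List α}
    (h : (gram M₁ M₂).Produces s s') (h' : SemForm M₁ M₂ s' w) : SemForm M₁ M₂ s w := by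
  classical
  obtain ⟨r, hr, hrw⟩ := h
  obtain ⟨i, -, rfl⟩ := (Finset.mem_image (f := ruleOf M₁ M₂) (b := r)).mp (show r ∈ Finset.univ.image (ruleOf M₁ M₂) from hr)
  obtain ⟨pre, suf, rfl, rfl⟩ := hrw.exists_parts
  obtain ⟨ws, hf, rfl⟩ := h'
  rw [List.append_assoc] at hf
  obtain ⟨m₁, m', rfl, hf₁, hf'⟩ := forall2_append_split hf
  obtain ⟨m₂, m₃, rfl, hf₂, hf₃⟩ := forall2_append_split hf'
  have hmid : SemNT M₁ M₂ (ruleOf M₁ M₂ i).input m₂.flatten :=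
    sem_rule M₁ M₂ i ⟨m₂, hf₂, rfl⟩
  refine ⟨m₁ ++ ([m₂.flatten] ++ m₃), ?_, by simp⟩
  rw [List.append_assoc]
  exact List.rel_append hf₁ (List.rel_append (List.Forall₂.cons
    (show SemSym M₁ M₂ (Symbol.nonterminal (ruleOf M₁ M₂ i).input) m₂.flatten from hmid)
    List.Forall₂.nil) hf₃)

omit [Fintype α] [Fintype σ₁] [Fintype σ₂] in
lemma sem_terminal_word (w : List α) :
    SemForm M₁ M₂ (w.map Symbol.terminal) w := by
  induction w with
  | nil => exact ⟨[], List.Forall₂.nil, rfl⟩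
  | cons t w ih =>
    obtain ⟨ws, hf, rfl⟩ := ih
    exact ⟨[t] :: ws, List.Forall₂.cons rfl hf, rfl⟩

lemma sem_derives {s : List (Symbol α (NTt σ₁ σ₂))} {w : List α}
    (h : (gram M₁ M₂).Derives s (w.map Symbol.terminal)) : SemForm M₁ M₂ s w := by
  induction h using Relation.ReflTransGen.head_induction_on with
  | refl => exact sem_terminal_word M₁ M₂ w
  | head hstep _ ih => exact sem_produces M₁ M₂ hstep ih

lemma derives_of_bal {c c' w} (h : Bal M₁ M₂ c w c') :
    (gram M₁ M₂).Derives [Symbol.nonterminal (some (c, c'))] (w.map Symbol.terminal) := by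
  induction h with
  | nil c =>
    refine ContextFreeGrammar.Produces.single (g := gram M₁ M₂)
      (v := [Symbol.nonterminal (some (c, c))]) (w := [])
      ⟨ruleOf M₁ M₂ (.inr (.inr (.inr (.inl c)))), mem_rules M₁ M₂ _, ?_⟩
    have := (ContextFreeRule.Rewrites.input_output
        (r := ruleOf M₁ M₂ (.inr (.inr (.inr (.inl c))))))
    simp [ruleOf] at this; exact this
  | letter t p q _ ih =>
    rename_i c'' w' hh
    have hstep : (gram M₁ M₂).Produces [Symbol.nonterminal (some ((p, q), c''))]
        ([Symbol.terminal t] ++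
          [Symbol.nonterminal (some ((M₁.step p t, M₂.step q t), c''))]) := by
      refine ⟨ruleOf M₁ M₂ (.inl (((p, q), c''), t)), mem_rules M₁ M₂ _, ?_⟩
      have := (ContextFreeRule.Rewrites.input_output
          (r := ruleOf M₁ M₂ (.inl (((p, q), c''), t))))
      simp [ruleOf] at this; exact this
    refine hstep.trans_derives ?_
    rw [List.map_cons, ← List.singleton_append]
    exact ih.append_left _
  | ab p q p₂ q₂ hp hq₂ _ _ ih₁ ih₂ =>
    rename_i w₁ w₂ c'' h₁ h₂
    have hstep : (gram M₁ M₂).Produces [Symbol.nonterminal (some ((p, q), c''))]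
        ([Symbol.nonterminal (some ((M₁.start, q), (p₂, q₂)))] ++
          [Symbol.nonterminal (some ((p₂, M₂.start), c''))]) := by
      refine ⟨ruleOf M₁ M₂ (.inr (.inl ((p, q), c'', (p₂, q₂)))), mem_rules M₁ M₂ _, ?_⟩
      have := (ContextFreeRule.Rewrites.input_output
          (r := ruleOf M₁ M₂ (.inr (.inl ((p, q), c'', (p₂, q₂))))))
      simp [ruleOf, if_pos (And.intro hp hq₂)] at this ⊢; exact this
    refine hstep.trans_derives ?_
    rw [List.map_append]
    exact (ih₁.append_right _).trans (ih₂.append_left _)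
  | ba p q p₂ q₂ hq hp₂ _ _ ih₁ ih₂ =>
    rename_i w₁ w₂ c'' h₁ h₂
    have hstep : (gram M₁ M₂).Produces [Symbol.nonterminal (some ((p, q), c''))]
        ([Symbol.nonterminal (some ((p, M₂.start), (p₂, q₂)))] ++
          [Symbol.nonterminal (some ((M₁.start, q₂), c''))]) := by
      refine ⟨ruleOf M₁ M₂ (.inr (.inr (.inl ((p, q), c'', (p₂, q₂))))), mem_rules M₁ M₂ _, ?_⟩
      have := (ContextFreeRule.Rewrites.input_output
          (r := ruleOf M₁ M₂ (.inr (.inr (.inl ((p, q), c'', (p₂, q₂)))))))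
      simp [ruleOf, if_pos (And.intro hq hp₂)] at this ⊢; exact this
    refine hstep.trans_derives ?_
    rw [List.map_append]
    exact (ih₁.append_right _).trans (ih₂.append_left _)

lemma gram_lang (w : List α) : w ∈ (gram M₁ M₂).language ↔
    ∃ k : ℕ, 1 ≤ k ∧ w ∈ M₁.accepts ^ k ∧ w ∈ M₂.accepts ^ k := by
  rw [ContextFreeGrammar.mem_language_iff]
  constructor
  · intro h
    obtain ⟨ws, hf, hfl⟩ := sem_derives M₁ M₂ h
    rcases hf with _ | ⟨h1, hf⟩
    cases hf
    obtain ⟨p', q', hp', hq', hbal⟩ := h1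
    rw [← hfl]
    exact bal_iff_mem.mp ⟨p', q', hp', hq', by simpa using hbal⟩
  · intro h
    obtain ⟨p', q', hp', hq', hbal⟩ := bal_iff_mem.mpr h
    have hstep : (gram M₁ M₂).Produces [Symbol.nonterminal none]
        [Symbol.nonterminal (some ((M₁.start, M₂.start), (p', q')))] := by
      refine ⟨ruleOf M₁ M₂ (.inr (.inr (.inr (.inr (p', q'))))), mem_rules M₁ M₂ _, ?_⟩
      have := (ContextFreeRule.Rewrites.input_output
          (r := ruleOf M₁ M₂ (.inr (.inr (.inr (.inr (p', q')))))))
      simp [ruleOf, if_pos (And.intro hp' hq')] at this ⊢; exact this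
    exact hstep.trans_derives (derives_of_bal M₁ M₂ hbal)

end MPCF

/-- If `L₁` and `L₂` are regular languages, then `⋃_{k ≥ 1} (L₁^k ∩ L₂^k)` is
context-free. -/
theorem matched_powers_contextFree {α : Type} [Fintype α]
    (L₁ L₂ : Language α) (h₁ : L₁.IsRegular) (h₂ : L₂.IsRegular) :
    Language.IsContextFree {x | ∃ k : ℕ, 1 ≤ k ∧ x ∈ L₁ ^ k ∧ x ∈ L₂ ^ k} := by
  obtain ⟨σ₁, _, M₁, rfl⟩ := h₁
  obtain ⟨σ₂, _, M₂, rfl⟩ := h₂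
  refine ⟨MPCF.gram M₁ M₂, ?_⟩
  ext w
  exact MPCF.gram_lang M₁ M₂ w
end
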